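/- arXiv:2008.04153 — 8 statements merged into one kernel-verified Lean document; each statement's English description precedes it below -/
import Mathlib

section
/- Let A_0 = {a_s(n_s)}_{s=0}^k be an m-cover of ℤ with a_0(n_0) essential. Let m_1,...,m_k be integers with gcd(m_s,n_s) = 1 for each s ∈ {1,...,k}. Let F be a field of characteristic p with p not dividing lcm(n_1,...,n_k), and for each s ∈ {1,...,k} let X_s = {b_s, c_s} be a subset of F of cardinality 2. Then there exists α ∈ [0,1) such that for every r ∈ {0,1,...,n_0−1}, the set { x_1+⋯+x_k : x_s ∈ X_s for all s, and the fractional part {∑_{1≤s≤k, x_s = c_s} m_s/n_s} equals (α+r)/n_0 } has cardinality at least min{p', m}, where p' = p if p is a prime and p' = +∞ if p = 0. -/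
set_option linter.unusedSectionVars false

open scoped Classical
open Finset

namespace SunCor

variable {K : Type*} [Field K] {κ : Type*} [Fintype κ] [DecidableEq κ]

lemma zpow_sum' (ζ : K) (hζ : ζ ≠ 0) (I : Finset κ) (f : κ → ℤ) :
    ζ ^ (∑ s ∈ I, f s) = ∏ s ∈ I, ζ ^ (f s) := by
  classical
  induction I using Finset.induction with
  | empty => simp
  | insert _ _ h ih =>
      rw [Finset.sum_insert h, Finset.prod_insert h, zpow_add₀ hζ, ih]

lemma prod_one_sub_expand (U : Finset κ) (p : κ → K) :
    ∏ s ∈ U, (1 - p s) = ∑ T ∈ U.powerset, (-1) ^ T.card * ∏ s ∈ T, p s := by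
  classical
  have h : ∀ s ∈ U, (1 : K) - p s = (-p s) + 1 := by intro s _; ring
  rw [Finset.prod_congr rfl h, Finset.prod_add]
  refine Finset.sum_congr rfl fun T hT => ?_
  rw [Finset.prod_const_one, mul_one]
  have : ∀ s ∈ T, -p s = (-1 : K) * p s := by intro s _; ring
  rw [Finset.prod_congr rfl this, Finset.prod_mul_distrib, Finset.prod_const]

lemma sum_supersets (J : Finset κ) (p : κ → K) :
    ∑ I ∈ Finset.univ.filter (fun I : Finset κ => J ⊆ I),
        (-1 : K) ^ I.card * ∏ s ∈ I, p s
      = (-1) ^ J.card * (∏ s ∈ J, p s) * ∏ s ∈ Finset.univ \ J, (1 - p s) := by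
  classical
  rw [prod_one_sub_expand, Finset.mul_sum]
  refine Finset.sum_nbij' (fun I => I \ J) (fun T => J ∪ T) ?_ ?_ ?_ ?_ ?_
  · intro I hI
    simp only [Finset.mem_filter, Finset.mem_univ, true_and] at hI
    simp only [Finset.mem_powerset]
    exact Finset.sdiff_subset_sdiff (Finset.subset_univ I) le_rfl
  · intro T hT
    simp only [Finset.mem_filter, Finset.mem_univ, true_and]
    exact Finset.subset_union_left
  · intro I hI
    simp only [Finset.mem_filter, Finset.mem_univ, true_and] at hI
    exact Finset.union_sdiff_of_subset hI
  · intro T hT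
    simp only [Finset.mem_powerset] at hT
    have hd : Disjoint J T := (Finset.subset_sdiff.mp hT).2.symm
    rw [Finset.union_sdiff_cancel_left hd]
  · intro I hI
    simp only [Finset.mem_filter, Finset.mem_univ, true_and] at hI
    have hd : Disjoint J (I \ J) := Finset.disjoint_sdiff
    have hcard : I.card = J.card + (I \ J).card := by
      rw [← Finset.card_union_of_disjoint hd, Finset.union_sdiff_of_subset hI]
    have hprod : ∏ s ∈ I, p s = (∏ s ∈ J, p s) * ∏ s ∈ I \ J, p s := by
      rw [← Finset.prod_union hd, Finset.union_sdiff_of_subset hI]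
    rw [hcard, hprod, pow_add]
    ring


noncomputable def nupow (d : κ → K) (e : ℕ) (J : Finset κ) : K :=
  ∑ f ∈ (Finset.univ : Finset (Fin e → κ)).filter (fun f => Finset.univ.image f = J),
    ∏ i : Fin e, d (f i)

lemma sum_pow_expand (d : κ → K) (e : ℕ) (I : Finset κ) :
    (∑ s ∈ I, d s) ^ e = ∑ J ∈ I.powerset, nupow d e J := by
  classical
  have h1 : (∑ s ∈ I, d s) ^ e
      = ∑ f ∈ Fintype.piFinset (fun _ : Fin e => I), ∏ i : Fin e, d (f i) := by
    rw [← Finset.prod_univ_sum (fun _ : Fin e => I) (fun _ s => d s)]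
    simp
  rw [h1, ← Finset.sum_fiberwise_of_maps_to
    (g := fun f : Fin e → κ => Finset.univ.image f) (t := I.powerset) ?_]
  · refine Finset.sum_congr rfl fun J hJ => ?_
    refine Finset.sum_congr ?_ (fun _ _ => rfl)
    ext f
    simp only [Finset.mem_filter, Fintype.mem_piFinset, Finset.mem_univ, true_and]
    constructor
    · rintro ⟨h, rfl⟩; exact rfl
    · rintro rfl
      exact ⟨fun i => Finset.mem_of_subset (Finset.mem_powerset.mp hJ)
        (Finset.mem_image_of_mem f (Finset.mem_univ i)), rfl⟩
  · intro f hf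
    simp only [Fintype.mem_piFinset] at hf
    simp only [Finset.mem_powerset]
    intro s hs
    simp only [Finset.mem_image] at hs
    obtain ⟨i, _, rfl⟩ := hs
    exact hf i

lemma nupow_eq_zero (d : κ → K) (e : ℕ) (J : Finset κ) (h : e < J.card) :
    nupow d e J = 0 := by
  classical
  apply Finset.sum_eq_zero
  intro f hf
  exfalso
  simp only [Finset.mem_filter, Finset.mem_univ, true_and] at hf
  have : J.card ≤ (Finset.univ : Finset (Fin e)).card := by
    rw [← hf]; exact Finset.card_image_le
  simp only [Finset.card_univ, Fintype.card_fin] at this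
  omega

lemma nupow_top (d : κ → K) (e : ℕ) (J : Finset κ) (h : J.card = e) :
    nupow d e J = (Nat.factorial e : K) * ∏ s ∈ J, d s := by
  classical
  rw [nupow]
  have hterm : ∀ f ∈ (Finset.univ : Finset (Fin e → κ)).filter
      (fun f => Finset.univ.image f = J), ∏ i : Fin e, d (f i) = ∏ s ∈ J, d s := by
    intro f hf
    simp only [Finset.mem_filter, Finset.mem_univ, true_and] at hf
    have hinj : Set.InjOn f (Finset.univ : Finset (Fin e)) := by
      apply Finset.injOn_of_card_image_eq
      rw [hf, h, Finset.card_univ, Fintype.card_fin]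
    rw [← hf, Finset.prod_image]
    intro x hx y hy hxy
    exact hinj hx hy hxy
  rw [Finset.sum_congr rfl hterm, Finset.sum_const, nsmul_eq_mul]
  congr 1
  have hJcard : Fintype.card {x // x ∈ J} = e := by
    rw [Fintype.card_coe, h]
  have hsub : ((Finset.univ : Finset (Fin e → κ)).filter
      (fun f => Finset.univ.image f = J)).card
      = Fintype.card {f : Fin e → κ // Finset.univ.image f = J} := by
    rw [Fintype.card_subtype]
  have hmem : ∀ (f : Fin e → κ), Finset.univ.image f = J → ∀ i, f i ∈ J := by
    intro f hf i
    rw [← hf]; exact Finset.mem_image_of_mem _ (Finset.mem_univ i)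
  have hbij : ∀ (fh : {f : Fin e → κ // Finset.univ.image f = J}),
      Function.Bijective (fun i => (⟨fh.1 i, hmem fh.1 fh.2 i⟩ : {x // x ∈ J})) := by
    intro fh
    rw [Fintype.bijective_iff_injective_and_card]
    constructor
    · intro x y hxy
      have hinj : Set.InjOn fh.1 (Finset.univ : Finset (Fin e)) := by
        apply Finset.injOn_of_card_image_eq
        rw [fh.2, h, Finset.card_univ, Fintype.card_fin]
      exact hinj (Finset.mem_univ x) (Finset.mem_univ y) (congrArg Subtype.val hxy)
    · rw [hJcard, Fintype.card_fin]
  have hequiv : {f : Fin e → κ // Finset.univ.image f = J} ≃ (Fin e ≃ {x // x ∈ J}) := by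
    refine
      { toFun := fun fh => Equiv.ofBijective _ (hbij fh)
        invFun := fun g => ⟨fun i => (g i : κ), ?_⟩
        left_inv := fun fh => ?_
        right_inv := fun g => ?_ }
    · ext s
      simp only [Finset.mem_image, Finset.mem_univ, true_and]
      constructor
      · rintro ⟨i, rfl⟩; exact (g i).2
      · intro hs
        exact ⟨g.symm ⟨s, hs⟩, by rw [Equiv.apply_symm_apply]⟩
    · apply Subtype.ext
      rfl
    · apply Equiv.ext
      intro i
      apply Subtype.ext
      rfl
  rw [hsub, Fintype.card_congr hequiv, Fintype.card_equiv ?_, Fintype.card_fin]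
  exact (Fintype.equivFinOfCardEq hJcard).symm


noncomputable def eew (n : κ → ℕ) (mm : κ → ℤ) (N : ℕ) (s : κ) : ℤ :=
  ((N / n s : ℕ) : ℤ) * mm s

noncomputable def sg (n : κ → ℕ) (mm : κ → ℤ) (N : ℕ) (I : Finset κ) : ℤ :=
  ∑ s ∈ I, eew n mm N s

noncomputable def tu (a : κ → ℤ) (n : κ → ℕ) (mm : κ → ℤ) (N : ℕ) (I : Finset κ) : ℤ :=
  ∑ s ∈ I, eew n mm N s * a s

noncomputable def psi (ζ : K) (a : κ → ℤ) (n : κ → ℕ) (mm : κ → ℤ) (N : ℕ)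
    (s : κ) (x : ℤ) : K := ζ ^ (eew n mm N s * (x - a s))

noncomputable def cc (ζ : K) (a : κ → ℤ) (n : κ → ℕ) (mm : κ → ℤ) (N : ℕ)
    (W : Finset κ → K) (j : ℤ) : K :=
  ∑ I ∈ Finset.univ.filter (fun I : Finset κ => sg n mm N I % (N : ℤ) = j),
    (-1) ^ I.card * W I * ζ ^ (-(tu a n mm N I))

noncomputable def GG (ζ : K) (a : κ → ℤ) (n : κ → ℕ) (mm : κ → ℤ) (N : ℕ)
    (lam : Finset κ → K) (x : ℤ) : K :=
  ∑ J : Finset κ, lam J * ((-1) ^ J.card * (∏ s ∈ J, psi ζ a n mm N s x)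
      * ∏ s ∈ Finset.univ \ J, (1 - psi ζ a n mm N s x))

noncomputable def Wof (lam : Finset κ → K) (I : Finset κ) : K := ∑ J ∈ I.powerset, lam J

variable (ζ : K) (a : κ → ℤ) (n : κ → ℕ) (mm : κ → ℤ) (N : ℕ)

lemma psi_eq_one_iff (hζ : IsPrimitiveRoot ζ N) (s : κ) (x : ℤ)
    (hns : 0 < n s) (hnN : n s ∣ N) (hN0 : 0 < N) (hco : IsCoprime (mm s) (n s : ℤ)) :
    psi ζ a n mm N s x = 1 ↔ (n s : ℤ) ∣ x - a s := by
  rw [psi, hζ.zpow_eq_one_iff_dvd]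
  have hq : ((N / n s : ℕ) : ℤ) * (n s : ℤ) = (N : ℤ) := by
    rw [← Nat.cast_mul, Nat.div_mul_cancel hnN]
  have hq0 : ((N / n s : ℕ) : ℤ) ≠ 0 := by
    have : 0 < N / n s := Nat.div_pos (Nat.le_of_dvd hN0 hnN) hns
    exact_mod_cast this.ne'
  constructor
  · intro h
    rw [eew] at h
    rcases h with ⟨u, hu⟩
    have h2 : (n s : ℤ) ∣ mm s * (x - a s) := by
      refine ⟨u, ?_⟩
      have h3 : ((N / n s : ℕ) : ℤ) * (mm s * (x - a s))
          = ((N / n s : ℕ) : ℤ) * ((n s : ℤ) * u) := by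
        rw [← mul_assoc, ← mul_assoc, hq]
        linarith [hu]
      exact mul_left_cancel₀ hq0 h3
    exact (hco.symm).dvd_of_dvd_mul_left h2
  · intro h
    rcases h with ⟨u, hu⟩
    rw [eew, hu, ← hq]
    exact ⟨mm s * u, by ring⟩

lemma psi_ne_zero (hζ0 : ζ ≠ 0) (s : κ) (x : ℤ) : psi ζ a n mm N s x ≠ 0 :=
  zpow_ne_zero _ hζ0

/-- The fundamental expansion: the "Fourier series" of the weighted sum. -/
lemma E1 (hζ0 : ζ ≠ 0) (hN0 : 0 < N) (hζN : ζ ^ (N : ℤ) = 1) (W : Finset κ → K) (x : ℤ) :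
    ∑ j ∈ Finset.Ico (0 : ℤ) (N : ℤ), cc ζ a n mm N W j * ζ ^ (j * x)
      = ∑ I : Finset κ, (-1) ^ I.card * W I * ζ ^ (sg n mm N I * x - tu a n mm N I) := by
  classical
  have hmaps : ∀ I ∈ (Finset.univ : Finset (Finset κ)),
      sg n mm N I % (N : ℤ) ∈ Finset.Ico (0 : ℤ) (N : ℤ) := by
    intro I _
    rw [Finset.mem_Ico]
    constructor
    · exact Int.emod_nonneg _ (by exact_mod_cast hN0.ne')
    · exact Int.emod_lt_of_pos _ (by exact_mod_cast hN0)
  rw [← Finset.sum_fiberwise_of_maps_to hmaps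
      (fun I => (-1 : K) ^ I.card * W I * ζ ^ (sg n mm N I * x - tu a n mm N I))]
  refine Finset.sum_congr rfl fun j hj => ?_
  rw [cc, Finset.sum_mul]
  refine Finset.sum_congr rfl fun I hI => ?_
  simp only [Finset.mem_filter] at hI
  have h0 := Int.mul_ediv_add_emod (sg n mm N I) (N : ℤ)
  have hsg : sg n mm N I * x - tu a n mm N I
      = (N : ℤ) * ((sg n mm N I / (N : ℤ)) * x) + (j * x + -(tu a n mm N I)) := by
    rw [← hI.2]
    linear_combination (-x) * h0
  have hz : ζ ^ (sg n mm N I * x - tu a n mm N I) = ζ ^ (j * x) * ζ ^ (-(tu a n mm N I)) := by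
    rw [hsg, zpow_add₀ hζ0, zpow_add₀ hζ0, zpow_mul, hζN, one_zpow, one_mul]
  rw [hz]
  ring

/-- Rewrite of the I-sum as the J-sum with products. -/
lemma GW_eq_GG (hζ0 : ζ ≠ 0) (lam : Finset κ → K) (x : ℤ) :
    ∑ I : Finset κ, (-1) ^ I.card * Wof lam I * ζ ^ (sg n mm N I * x - tu a n mm N I)
      = GG ζ a n mm N lam x := by
  classical
  have hψ : ∀ I : Finset κ, ζ ^ (sg n mm N I * x - tu a n mm N I)
      = ∏ s ∈ I, psi ζ a n mm N s x := by
    intro I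
    simp only [psi]
    rw [← zpow_sum' ζ hζ0 I (fun s => eew n mm N s * (x - a s))]
    congr 1
    rw [sg, tu, Finset.sum_mul, ← Finset.sum_sub_distrib]
    exact Finset.sum_congr rfl fun s _ => by ring
  calc ∑ I : Finset κ, (-1) ^ I.card * Wof lam I * ζ ^ (sg n mm N I * x - tu a n mm N I)
      = ∑ I : Finset κ, ∑ J ∈ I.powerset,
          lam J * ((-1) ^ I.card * ∏ s ∈ I, psi ζ a n mm N s x) := by
        refine Finset.sum_congr rfl fun I _ => ?_
        rw [hψ, Wof, mul_comm ((-1 : K) ^ I.card), Finset.sum_mul, Finset.sum_mul]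
        exact Finset.sum_congr rfl fun J _ => by ring
    _ = ∑ J : Finset κ, ∑ I ∈ Finset.univ.filter (fun I : Finset κ => J ⊆ I),
          lam J * ((-1) ^ I.card * ∏ s ∈ I, psi ζ a n mm N s x) := by
        refine Finset.sum_comm' ?_
        intro I J
        simp only [Finset.mem_univ, true_and, Finset.mem_powerset, Finset.mem_filter, and_true]
    _ = GG ζ a n mm N lam x := by
        rw [GG]
        refine Finset.sum_congr rfl fun J _ => ?_
        rw [← Finset.mul_sum, sum_supersets J (fun s => psi ζ a n mm N s x)]


lemma GG_eq_zero (lam : Finset κ → K) (x : ℤ)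
    (hψone : ∀ s : κ, (n s : ℤ) ∣ x - a s → psi ζ a n mm N s x = 1)
    (hlt : ∀ J : Finset κ, lam J ≠ 0 →
      J.card < (Finset.univ.filter (fun s : κ => (n s : ℤ) ∣ x - a s)).card) :
    GG ζ a n mm N lam x = 0 := by
  classical
  rw [GG]
  apply Finset.sum_eq_zero
  intro J _
  by_cases hJ : lam J = 0
  · rw [hJ, zero_mul]
  · have hlt' := hlt J hJ
    have hnot : ¬ (Finset.univ.filter (fun s : κ => (n s : ℤ) ∣ x - a s)) ⊆ J := by
      intro hsub
      exact absurd (Finset.card_le_card hsub) (by omega)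
    obtain ⟨s, hs1, hs2⟩ := Finset.not_subset.mp hnot
    simp only [Finset.mem_filter, Finset.mem_univ, true_and] at hs1
    have : (1 : K) - psi ζ a n mm N s x = 0 := by rw [hψone s hs1, sub_self]
    rw [Finset.prod_eq_zero (Finset.mem_sdiff.mpr ⟨Finset.mem_univ s, hs2⟩) this]
    ring

lemma GG_seed (d : κ → K) (hd : ∀ s, d s ≠ 0) (mp : ℕ) (x0 : ℤ) (hζ0 : ζ ≠ 0)
    (hone : ∀ s : κ, psi ζ a n mm N s x0 = 1 ↔ (n s : ℤ) ∣ x0 - a s)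
    (hx0c : (Finset.univ.filter (fun s : κ => (n s : ℤ) ∣ x0 - a s)).card = mp) :
    GG ζ a n mm N (fun J => if J.card = mp then ∏ s ∈ J, d s else 0) x0 ≠ 0 := by
  classical
  set C0 := Finset.univ.filter (fun s : κ => (n s : ℤ) ∣ x0 - a s) with hC0
  rw [GG, Finset.sum_eq_single C0]
  · rw [if_pos hx0c]
    apply mul_ne_zero
    · exact Finset.prod_ne_zero_iff.mpr fun s _ => hd s
    apply mul_ne_zero
    · apply mul_ne_zero
      · exact pow_ne_zero _ (by norm_num)
      · exact Finset.prod_ne_zero_iff.mpr fun s _ => psi_ne_zero ζ a n mm N hζ0 s x0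
    · apply Finset.prod_ne_zero_iff.mpr
      intro s hs
      simp only [Finset.mem_sdiff, hC0, Finset.mem_filter, Finset.mem_univ, true_and] at hs
      intro hzero
      have : psi ζ a n mm N s x0 = 1 := by
        have := sub_eq_zero.mp hzero
        exact this.symm
      exact hs ((hone s).mp this)
  · intro J _ hJne
    by_cases hJ : J.card = mp
    · rw [if_pos hJ]
      have hnot : ¬ C0 ⊆ J := by
        intro hsub
        exact hJne (Finset.eq_of_subset_of_card_le hsub (by omega)).symm
      obtain ⟨s, hs1, hs2⟩ := Finset.not_subset.mp hnot
      simp only [hC0, Finset.mem_filter, Finset.mem_univ, true_and] at hs1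
      have : (1 : K) - psi ζ a n mm N s x0 = 0 := by rw [(hone s).mpr hs1, sub_self]
      rw [Finset.prod_eq_zero (Finset.mem_sdiff.mpr ⟨Finset.mem_univ s, hs2⟩) this]
      ring
    · rw [if_neg hJ, zero_mul]
  · intro h
    exact absurd (Finset.mem_univ C0) h

lemma orth_sum (hζ : IsPrimitiveRoot ζ N) (hN0 : 0 < N) (j j0 : ℤ)
    (hj : j ∈ Finset.Ico (0 : ℤ) (N : ℤ)) (hj0 : j0 ∈ Finset.Ico (0 : ℤ) (N : ℤ)) :
    ∑ x ∈ Finset.range N, ζ ^ (j * (x : ℤ)) * ζ ^ (-(j0 * (x : ℤ)))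
      = if j = j0 then (N : K) else 0 := by
  classical
  have hζ0 : ζ ≠ 0 := hζ.ne_zero hN0.ne'
  have hterm : ∀ x : ℕ, ζ ^ (j * (x : ℤ)) * ζ ^ (-(j0 * (x : ℤ)))
      = (ζ ^ (j - j0)) ^ x := by
    intro x
    rw [← zpow_add₀ hζ0, ← zpow_natCast (ζ ^ (j - j0)), ← zpow_mul]
    congr 1
    ring
  rw [Finset.sum_congr rfl (fun x _ => hterm x)]
  by_cases hjj : j = j0
  · rw [if_pos hjj, hjj, sub_self, zpow_zero]
    simp
  · rw [if_neg hjj]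
    have hne1 : ζ ^ (j - j0) ≠ 1 := by
      intro h1
      rw [hζ.zpow_eq_one_iff_dvd] at h1
      simp only [Finset.mem_Ico] at hj hj0
      have habs : (j - j0).natAbs < ((N : ℤ)).natAbs := by omega
      exact hjj (by have := Int.eq_zero_of_dvd_of_natAbs_lt_natAbs h1 habs; omega)
    rw [geom_sum_eq hne1]
    have hNpow : (ζ ^ (j - j0)) ^ N = 1 := by
      rw [← zpow_natCast (ζ ^ (j - j0)), ← zpow_mul, mul_comm, zpow_mul,
        zpow_natCast, hζ.pow_eq_one, one_zpow]
    rw [hNpow, sub_self, zero_div]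

lemma GG_inv (hζ : IsPrimitiveRoot ζ N) (hN0 : 0 < N) (lam : Finset κ → K) (j0 : ℤ)
    (hj0 : j0 ∈ Finset.Ico (0 : ℤ) (N : ℤ)) :
    ∑ x ∈ Finset.range N, GG ζ a n mm N lam x * ζ ^ (-(j0 * (x : ℤ)))
      = (N : K) * cc ζ a n mm N (Wof lam) j0 := by
  classical
  have hζ0 : ζ ≠ 0 := hζ.ne_zero hN0.ne'
  have hζN : ζ ^ (N : ℤ) = 1 := by rw [zpow_natCast, hζ.pow_eq_one]
  have hE : ∀ x : ℤ, GG ζ a n mm N lam x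
      = ∑ j ∈ Finset.Ico (0 : ℤ) (N : ℤ), cc ζ a n mm N (Wof lam) j * ζ ^ (j * x) := by
    intro x
    rw [E1 ζ a n mm N hζ0 hN0 hζN (Wof lam) x, GW_eq_GG ζ a n mm N hζ0 lam x]
  calc ∑ x ∈ Finset.range N, GG ζ a n mm N lam x * ζ ^ (-(j0 * (x : ℤ)))
      = ∑ x ∈ Finset.range N, ∑ j ∈ Finset.Ico (0 : ℤ) (N : ℤ),
          cc ζ a n mm N (Wof lam) j * (ζ ^ (j * (x : ℤ)) * ζ ^ (-(j0 * (x : ℤ)))) := by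
        refine Finset.sum_congr rfl fun x _ => ?_
        rw [hE (x : ℤ), Finset.sum_mul]
        exact Finset.sum_congr rfl fun j _ => by ring
    _ = ∑ j ∈ Finset.Ico (0 : ℤ) (N : ℤ), cc ζ a n mm N (Wof lam) j *
          ∑ x ∈ Finset.range N, ζ ^ (j * (x : ℤ)) * ζ ^ (-(j0 * (x : ℤ))) := by
        rw [Finset.sum_comm]
        exact Finset.sum_congr rfl fun j _ => by rw [Finset.mul_sum]
    _ = (N : K) * cc ζ a n mm N (Wof lam) j0 := by
        rw [Finset.sum_congr rfl (fun j hj => by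
          rw [orth_sum ζ N hζ hN0 j j0 hj hj0])]
        rw [Finset.sum_eq_single j0 (fun j _ hne => by rw [if_neg hne, mul_zero])
          (fun h => absurd hj0 h), if_pos rfl, mul_comm]


theorem core (mp : ℕ) (a0 : ℤ) (n0 : ℕ) (hn0 : 0 < n0)
    (a : κ → ℤ) (n : κ → ℕ) (hn : ∀ s, 0 < n s)
    (mm : κ → ℤ) (hmm : ∀ s, IsCoprime (mm s) ((n s : ℤ)))
    (d : κ → K) (hd : ∀ s, d s ≠ 0)
    (ζ : K) (hζ : IsPrimitiveRoot ζ (Finset.univ.lcm n))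
    (hNK : ((Finset.univ.lcm n : ℕ) : K) ≠ 0)
    (hfac : ((Nat.factorial mp : K) ≠ 0))
    (hcov1 : ∀ x : ℤ, mp ≤ (Finset.univ.filter (fun s : κ => (n s : ℤ) ∣ x - a s)).card)
    (hcov2 : ∀ x : ℤ, ¬ ((n0 : ℤ) ∣ x - a0) →
      mp < (Finset.univ.filter (fun s : κ => (n s : ℤ) ∣ x - a s)).card)
    (x0 : ℤ) (hx0c : (Finset.univ.filter (fun s : κ => (n s : ℤ) ∣ x0 - a s)).card = mp)
    (hx0d : (n0 : ℤ) ∣ x0 - a0) :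
    ∃ α : ℝ, 0 ≤ α ∧ α < 1 ∧ ∀ r : ℕ, r < n0 →
      mp + 1 ≤ ((Finset.univ.filter (fun I : Finset κ =>
          Int.fract (∑ s ∈ I, (mm s : ℝ) / (n s : ℝ)) = (α + r) / (n0 : ℝ))).image
          (fun I => ∑ s ∈ I, d s)).card := by
  classical
  set N := Finset.univ.lcm n with hNdef
  have hN0 : 0 < N := by
    rcases Nat.eq_zero_or_pos N with h | h
    · exfalso; apply hNK; rw [h]; simp
    · exact h
  have hnN : ∀ s, n s ∣ N := fun s => Finset.dvd_lcm (Finset.mem_univ s)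
  have hζ0 : ζ ≠ 0 := hζ.ne_zero hN0.ne'
  have hζN : ζ ^ (N : ℤ) = 1 := by rw [zpow_natCast, hζ.pow_eq_one]
  have hone : ∀ (x : ℤ) (s : κ), psi ζ a n mm N s x = 1 ↔ (n s : ℤ) ∣ x - a s :=
    fun x s => psi_eq_one_iff ζ a n mm N hζ s x (hn s) (hnN s) hN0 (hmm s)
  -- n0 divides N
  have hCCper : (Finset.univ.filter (fun s : κ => (n s : ℤ) ∣ (x0 + N) - a s))
      = (Finset.univ.filter (fun s : κ => (n s : ℤ) ∣ x0 - a s)) := by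
    apply Finset.filter_congr
    intro s _
    have hsN : (n s : ℤ) ∣ (N : ℤ) := Int.natCast_dvd_natCast.mpr (hnN s)
    constructor
    · intro h
      have := dvd_sub h hsN
      simpa [add_sub_right_comm] using this
    · intro h
      have := dvd_add h hsN
      have heq : x0 - a s + (N : ℤ) = x0 + N - a s := by ring
      rwa [heq] at this
  have hn0N : n0 ∣ N := by
    have hcard : (Finset.univ.filter (fun s : κ => (n s : ℤ) ∣ (x0 + N) - a s)).card = mp := by
      rw [hCCper, hx0c]
    by_contra hcon
    have hcos : (n0 : ℤ) ∣ (x0 + N) - a0 := by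
      by_contra hno
      have := hcov2 (x0 + N) hno
      omega
    have : (n0 : ℤ) ∣ (N : ℤ) := by
      have heq : (N : ℤ) = ((x0 + N) - a0) - (x0 - a0) := by ring
      rw [heq]
      exact dvd_sub hcos hx0d
    exact hcon (Int.natCast_dvd_natCast.mp this)
  set M := N / n0 with hMdef
  have hMn0 : n0 * M = N := Nat.mul_div_cancel' hn0N
  have hM0 : 0 < M := by
    rcases Nat.eq_zero_or_pos M with h | h
    · exfalso; rw [h, Nat.mul_zero] at hMn0; omega
    · exact h
  -- the seed weight
  set lamd : Finset κ → K := fun J => if J.card = mp then ∏ s ∈ J, d s else 0 with hlamd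
  have hseed : GG ζ a n mm N lamd x0 ≠ 0 :=
    GG_seed ζ a n mm N d hd mp x0 hζ0 (hone x0) hx0c
  -- a nonvanishing Fourier coefficient
  have hjex : ∃ j ∈ Finset.Ico (0 : ℤ) (N : ℤ), cc ζ a n mm N (Wof lamd) j ≠ 0 := by
    by_contra hall
    push_neg at hall
    apply hseed
    rw [← GW_eq_GG ζ a n mm N hζ0 lamd x0, ← E1 ζ a n mm N hζ0 hN0 hζN (Wof lamd) x0]
    exact Finset.sum_eq_zero fun j hj => by rw [hall j hj, zero_mul]
  obtain ⟨js, hjsmem, hjs⟩ := hjex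
  simp only [Finset.mem_Ico] at hjsmem
  set ρ : ℤ := js % (M : ℤ) with hρdef
  set qs : ℤ := js / (M : ℤ) with hqsdef
  have hMZ : (0 : ℤ) < (M : ℤ) := by exact_mod_cast hM0
  have hρ0 : 0 ≤ ρ := Int.emod_nonneg js hMZ.ne'
  have hρM : ρ < (M : ℤ) := Int.emod_lt_of_pos js hMZ
  have hjseq : (M : ℤ) * qs + ρ = js := Int.mul_ediv_add_emod js (M : ℤ)
  refine ⟨(ρ : ℝ) / (M : ℝ), by positivity, ?_, ?_⟩
  · rw [div_lt_one (by exact_mod_cast hM0)]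
    exact_mod_cast hρM
  intro r hr
  -- the target frequency
  set tr : ℤ := ρ + r * M with htrdef
  have htrmem : tr ∈ Finset.Ico (0 : ℤ) (N : ℤ) := by
    rw [Finset.mem_Ico]
    constructor
    · positivity
    · have h1 : (r : ℤ) * M + M ≤ (n0 : ℤ) * M := by
        have : (r : ℤ) + 1 ≤ (n0 : ℤ) := by exact_mod_cast hr
        nlinarith
      have h2 : ((n0 : ℕ) : ℤ) * (M : ℤ) = (N : ℤ) := by exact_mod_cast hMn0
      omega
  -- the fractional-part condition is a congruence condition
  have hfr : ∀ I : Finset κ,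
      Int.fract (∑ s ∈ I, (mm s : ℝ) / (n s : ℝ)) = ((ρ : ℝ) / (M : ℝ) + r) / (n0 : ℝ)
        ↔ sg n mm N I % (N : ℤ) = tr := by
    intro I
    have hNR : ((N : ℕ) : ℝ) ≠ 0 := by exact_mod_cast hN0.ne'
    have hsum : (∑ s ∈ I, (mm s : ℝ) / (n s : ℝ)) = ((sg n mm N I : ℤ) : ℝ) / (N : ℝ) := by
      rw [sg]
      push_cast
      rw [Finset.sum_div]
      refine Finset.sum_congr rfl fun s _ => ?_
      rw [eew]
      have hns : ((n s : ℕ) : ℝ) ≠ 0 := by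
        have := hn s; positivity
      have hcast : ((N / n s : ℕ) : ℝ) = (N : ℝ) / (n s : ℝ) := by
        rw [Nat.cast_div (hnN s) hns]
      rw [Int.cast_mul, Int.cast_natCast, hcast]
      field_simp
    have hfrac : Int.fract (((sg n mm N I : ℤ) : ℝ) / (N : ℝ))
        = ((sg n mm N I % (N : ℤ) : ℤ) : ℝ) / (N : ℝ) := by
      have hdm := Int.mul_ediv_add_emod (sg n mm N I) (N : ℤ)
      have hcc : ((sg n mm N I : ℤ) : ℝ)
          = (N : ℝ) * ((sg n mm N I / (N : ℤ) : ℤ) : ℝ) + ((sg n mm N I % (N : ℤ) : ℤ) : ℝ) := by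
        exact_mod_cast congrArg (fun z : ℤ => (z : ℝ)) hdm.symm
      have hsplit : ((sg n mm N I : ℤ) : ℝ) / (N : ℝ)
          = ((sg n mm N I / (N : ℤ) : ℤ) : ℝ) + ((sg n mm N I % (N : ℤ) : ℤ) : ℝ) / (N : ℝ) := by
        rw [hcc, add_div]
        congr 1
        rw [mul_comm, mul_div_assoc, div_self hNR, mul_one]
      rw [hsplit, Int.fract_intCast_add, Int.fract_eq_self.mpr ⟨?_, ?_⟩]
      · have h1 : (0 : ℤ) ≤ sg n mm N I % (N : ℤ) :=
          Int.emod_nonneg _ (by exact_mod_cast hN0.ne')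
        have h2 : (0 : ℝ) < (N : ℝ) := by exact_mod_cast hN0
        apply div_nonneg _ h2.le
        exact_mod_cast h1
      · have h1 : sg n mm N I % (N : ℤ) < (N : ℤ) :=
          Int.emod_lt_of_pos _ (by exact_mod_cast hN0)
        rw [div_lt_one (by exact_mod_cast hN0)]
        exact_mod_cast h1
    have hrhs : ((ρ : ℝ) / (M : ℝ) + r) / (n0 : ℝ) = ((tr : ℤ) : ℝ) / (N : ℝ) := by
      have hMR : ((M : ℕ) : ℝ) ≠ 0 := by exact_mod_cast hM0.ne'
      have hn0R : ((n0 : ℕ) : ℝ) ≠ 0 := by exact_mod_cast hn0.ne'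
      have hNR2 : ((n0 : ℕ) : ℝ) * ((M : ℕ) : ℝ) = ((N : ℕ) : ℝ) := by exact_mod_cast hMn0
      have hcast2 : ((tr : ℤ) : ℝ) = (ρ : ℝ) + (r : ℝ) * (M : ℝ) := by
        rw [htrdef]; push_cast; ring
      have h3 : (ρ : ℝ) / (M : ℝ) + (r : ℝ) = ((ρ : ℝ) + (r : ℝ) * (M : ℝ)) / (M : ℝ) := by
        field_simp
      rw [hcast2, h3, div_div]
      congr 1
      rw [mul_comm]
      exact hNR2
    rw [hsum, hfrac, hrhs]
    constructor
    · intro h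
      have h' : ((sg n mm N I % (N : ℤ) : ℤ) : ℝ) = ((tr : ℤ) : ℝ) := by
        have h2 := congrArg (fun y : ℝ => y * (N : ℝ)) h
        simp only [div_mul_cancel₀ _ hNR] at h2
        exact h2
      exact_mod_cast h'
    · intro h
      rw [h]
  -- rewrite the filter using the congruence condition
  have hFr : (Finset.univ.filter (fun I : Finset κ =>
      Int.fract (∑ s ∈ I, (mm s : ℝ) / (n s : ℝ)) = ((ρ : ℝ) / (M : ℝ) + r) / (n0 : ℝ)))
      = Finset.univ.filter (fun I : Finset κ => sg n mm N I % (N : ℤ) = tr) := by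
    apply Finset.filter_congr
    intro I _
    exact hfr I
  rw [hFr]
  by_contra hcon
  push_neg at hcon
  set Fr := Finset.univ.filter (fun I : Finset κ => sg n mm N I % (N : ℤ) = tr) with hFrdef
  set Vr := Fr.image (fun I => ∑ s ∈ I, d s) with hVrdef
  have hVrcard : Vr.card ≤ mp := by omega
  set Q : Polynomial K := (∏ v ∈ Vr, (Polynomial.X - Polynomial.C v))
      * Polynomial.X ^ (mp - Vr.card) with hQ
  have hPm : (∏ v ∈ Vr, (Polynomial.X - Polynomial.C v)).Monic :=
    Polynomial.monic_prod_of_monic _ _ fun v _ => Polynomial.monic_X_sub_C v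
  have hQmonic : Q.Monic := hPm.mul (Polynomial.monic_X_pow _)
  have hQdeg : Q.natDegree = mp := by
    rw [hQ, hPm.natDegree_mul (Polynomial.monic_X_pow _),
      Polynomial.natDegree_prod_of_monic _ _ (fun v _ => Polynomial.monic_X_sub_C v),
      Polynomial.natDegree_X_pow]
    simp only [Polynomial.natDegree_X_sub_C, Finset.sum_const, smul_eq_mul, mul_one]
    omega
  have hQeval : ∀ I ∈ Fr, Q.eval (∑ s ∈ I, d s) = 0 := by
    intro I hI
    rw [hQ, Polynomial.eval_mul, Polynomial.eval_prod]
    have hmem : (∑ s ∈ I, d s) ∈ Vr := Finset.mem_image_of_mem _ hI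
    rw [Finset.prod_eq_zero hmem
      (by rw [Polynomial.eval_sub, Polynomial.eval_X, Polynomial.eval_C, sub_self]), zero_mul]
  have hQtop : Q.coeff mp = 1 := by
    have := hQmonic.coeff_natDegree
    rwa [hQdeg] at this
  set lamR : Finset κ → K := fun J => ∑ i ∈ Finset.range (mp + 1), Q.coeff i * nupow d i J
    with hlamR
  have hWr : ∀ I : Finset κ, Wof lamR I = Q.eval (∑ s ∈ I, d s) := by
    intro I
    rw [Wof, Polynomial.eval_eq_sum_range, hQdeg]
    simp only [hlamR]
    rw [Finset.sum_comm]
    refine Finset.sum_congr rfl fun i _ => ?_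
    rw [← Finset.mul_sum, ← sum_pow_expand d i I]
  have hlamRsupp : ∀ J : Finset κ, lamR J ≠ 0 → J.card ≤ mp := by
    intro J hJ
    by_contra hc
    push_neg at hc
    apply hJ
    simp only [hlamR]
    apply Finset.sum_eq_zero
    intro i hi
    simp only [Finset.mem_range] at hi
    rw [nupow_eq_zero d i J (by omega), mul_zero]
  have hlamRtop : ∀ J : Finset κ, J.card = mp →
      lamR J = (Nat.factorial mp : K) * ∏ s ∈ J, d s := by
    intro J hJ
    simp only [hlamR]
    rw [Finset.sum_eq_single mp]
    · rw [hQtop, one_mul, nupow_top d mp J hJ]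
    · intro i hi hine
      simp only [Finset.mem_range] at hi
      rw [nupow_eq_zero d i J (by omega), mul_zero]
    · intro h
      exact absurd (Finset.mem_range.mpr (by omega)) h
  set nulow : Finset κ → K := fun J => lamR J - (Nat.factorial mp : K) * lamd J with hnulow
  have hnulowsupp : ∀ J : Finset κ, nulow J ≠ 0 → J.card < mp := by
    intro J hJ
    rcases lt_trichotomy J.card mp with h | h | h
    · exact h
    · exfalso
      apply hJ
      simp only [hnulow, hlamd]
      rw [hlamRtop J h, if_pos h]
      ring
    · exfalso
      apply hJ
      simp only [hnulow, hlamd]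
      rw [if_neg (by omega)]
      have hz : lamR J = 0 := by
        simp only [hlamR]
        apply Finset.sum_eq_zero
        intro i hi
        simp only [Finset.mem_range] at hi
        rw [nupow_eq_zero d i J (by omega), mul_zero]
      rw [hz]
      ring
  -- the Fourier coefficient of lamR at the target frequency vanishes
  have hcctr : cc ζ a n mm N (Wof lamR) tr = 0 := by
    rw [cc]
    apply Finset.sum_eq_zero
    intro I hI
    rw [← hFrdef] at hI
    rw [hWr I, hQeval I hI]
    ring
  -- coset relation transfers the vanishing to js
  have hGGoff : ∀ x : ℤ, ¬ ((n0 : ℤ) ∣ x - a0) → GG ζ a n mm N lamR x = 0 := by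
    intro x hx
    exact GG_eq_zero ζ a n mm N lamR x (fun s hs => (hone x s).mpr hs)
      (fun J hJ => lt_of_le_of_lt (hlamRsupp J hJ) (hcov2 x hx))
  have hccjs : cc ζ a n mm N (Wof lamR) js = 0 := by
    have h1 := GG_inv ζ a n mm N hζ hN0 lamR js (Finset.mem_Ico.mpr hjsmem)
    have h2 := GG_inv ζ a n mm N hζ hN0 lamR tr htrmem
    have hrel1 : js = tr + (M : ℤ) * (qs - r) := by
      rw [htrdef]
      linear_combination (-1 : ℤ) * hjseq
    have hNZ : ((n0 : ℕ) : ℤ) * ((M : ℕ) : ℤ) = ((N : ℕ) : ℤ) := by exact_mod_cast hMn0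
    have hsplitx : ∀ x ∈ Finset.range N,
        GG ζ a n mm N lamR (x : ℤ) * ζ ^ (-(js * (x : ℤ)))
        = ζ ^ (-((M : ℤ) * (qs - r) * a0)) *
          (GG ζ a n mm N lamR (x : ℤ) * ζ ^ (-(tr * (x : ℤ)))) := by
      intro x _
      by_cases hcos : (n0 : ℤ) ∣ (x : ℤ) - a0
      · obtain ⟨u, hu⟩ := hcos
        have hexp : -(js * (x : ℤ)) = -((M : ℤ) * (qs - r) * a0) + (-(tr * (x : ℤ)))
            + (N : ℤ) * (-((qs - r) * u)) := by
          linear_combination (-(x : ℤ)) * hrel1 + (-((M : ℤ) * (qs - r))) * hu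
            + (-((qs - r) * u)) * hNZ
        rw [hexp, zpow_add₀ hζ0, zpow_add₀ hζ0, zpow_mul ζ ((N : ℕ) : ℤ), hζN, one_zpow,
          mul_one]
        ring
      · rw [hGGoff (x : ℤ) hcos]
        ring
    rw [Finset.sum_congr rfl hsplitx, ← Finset.mul_sum, h2, hcctr, mul_zero, mul_zero] at h1
    exact ((mul_eq_zero.mp h1.symm).resolve_left hNK)
  -- the low-order part contributes nothing
  have hlow : cc ζ a n mm N (Wof nulow) js = 0 := by
    have h1 := GG_inv ζ a n mm N hζ hN0 nulow js (Finset.mem_Ico.mpr hjsmem)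
    have hzz : ∀ x ∈ Finset.range N,
        GG ζ a n mm N nulow (x : ℤ) * ζ ^ (-(js * (x : ℤ))) = 0 := by
      intro x _
      rw [GG_eq_zero ζ a n mm N nulow (x : ℤ) (fun s hs => (hone _ s).mpr hs)
        (fun J hJ => lt_of_lt_of_le (hnulowsupp J hJ) (hcov1 (x : ℤ))), zero_mul]
    rw [Finset.sum_congr rfl hzz, Finset.sum_const, smul_zero] at h1
    exact ((mul_eq_zero.mp h1.symm).resolve_left hNK)
  -- split the coefficient
  have hccsplit : cc ζ a n mm N (Wof lamR) js
      = (Nat.factorial mp : K) * cc ζ a n mm N (Wof lamd) js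
        + cc ζ a n mm N (Wof nulow) js := by
    rw [cc, cc, cc, Finset.mul_sum, ← Finset.sum_add_distrib]
    refine Finset.sum_congr rfl fun I _ => ?_
    have hWsplit : Wof lamR I = (Nat.factorial mp : K) * Wof lamd I + Wof nulow I := by
      rw [Wof, Wof, Wof, Finset.mul_sum, ← Finset.sum_add_distrib]
      refine Finset.sum_congr rfl fun J _ => ?_
      simp only [hnulow]
      ring
    rw [hWsplit]
    ring
  rw [hccjs, hlow, add_zero] at hccsplit
  exact hjs ((mul_eq_zero.mp hccsplit.symm).resolve_left hfac)

lemma card_filter_subtype {β : Type*} [DecidableEq β] (Sf : Finset β) (P : β → Prop)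
    [DecidablePred P] :
    ((Finset.univ : Finset {x // x ∈ Sf}).filter (fun s => P s.val)).card
      = (Sf.filter P).card := by
  classical
  apply Finset.card_bij (fun s _ => s.val)
  · intro s hs
    simp only [Finset.mem_filter, Finset.mem_univ, true_and] at hs
    simp only [Finset.mem_filter]
    exact ⟨s.2, hs⟩
  · intro s _ t _ h
    exact Subtype.ext h
  · intro t ht
    simp only [Finset.mem_filter] at ht
    exact ⟨⟨t, ht.1⟩, by simp [ht.2], rfl⟩

end SunCor

open Finset SunCor in
/-- **Corollary 2.1** (Sun): Let `A₀ = {a_s(n_s)}_{s=0}^k` be an `m`-cover of `ℤ` with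
`a₀(n₀)` essential, let `m_s` be coprime to `n_s`, let `F` be a field of characteristic `p`
with `p ∤ lcm(n₁,…,n_k)`, and let `X_s = {b_s, c_s}` be two-element subsets of `F`.  Then
there is `α ∈ [0,1)` such that for each `0 ≤ r < n₀` the set
`{x₁+⋯+x_k : x_s ∈ X_s, {∑_{x_s = c_s} m_s/n_s} = (α+r)/n₀}` has at least `min{p', m}`
elements, where `p' = p` if `p` is prime and `p' = +∞` if `p = 0`. -/
theorem sun_corollary2_1 (k m : ℕ) (a0 : ℤ) (n0 : ℕ) (hn0 : 0 < n0)
    (a : Fin k → ℤ) (n : Fin k → ℕ) (hn : ∀ s, 0 < n s)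
    -- `{a_s(n_s)}_{s=0}^k` is an `m`-cover of `ℤ`:
    (hcover : ∀ x : ℤ, m ≤
      (Finset.univ.filter (fun s : Fin k => (n s : ℤ) ∣ x - a s)).card
        + (if (n0 : ℤ) ∣ x - a0 then 1 else 0))
    -- with `a₀(n₀)` essential (removing it destroys the `m`-cover property):
    (hess : ¬ ∀ x : ℤ, m ≤
      (Finset.univ.filter (fun s : Fin k => (n s : ℤ) ∣ x - a s)).card)
    (mm : Fin k → ℤ) (hmm : ∀ s, IsCoprime (mm s) (n s : ℤ))
    (F : Type*) [Field F]
    (hchar : ¬ (ringChar F ∣ Finset.univ.lcm n))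
    (b c : Fin k → F) (hbc : ∀ s, b s ≠ c s) :
    ∃ α : ℝ, 0 ≤ α ∧ α < 1 ∧ ∀ r : ℕ, r < n0 →
      (if ringChar F = 0 then m else min (ringChar F) m) ≤
        Set.ncard { y : F | ∃ x : Fin k → F,
          (∀ s, x s = b s ∨ x s = c s) ∧
          Int.fract (∑ s ∈ Finset.univ.filter (fun s => x s = c s),
            (mm s : ℝ) / (n s : ℝ)) = (α + r) / (n0 : ℝ) ∧
          y = ∑ s, x s } := by
  classical
  -- basic facts about m and the essential witness
  have hm : 1 ≤ m := by
    by_contra h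
    push_neg at h
    interval_cases m
    exact hess fun x => Nat.zero_le _
  push_neg at hess
  obtain ⟨x0, hx0⟩ := hess
  have hx0d : (n0 : ℤ) ∣ x0 - a0 := by
    by_contra hno
    have := hcover x0
    rw [if_neg hno] at this
    omega
  have hx0c : (Finset.univ.filter (fun s : Fin k => (n s : ℤ) ∣ x0 - a s)).card = m - 1 := by
    have := hcover x0
    rw [if_pos hx0d] at this
    omega
  -- the truncated multiplicity
  set m' := if ringChar F = 0 then m else min (ringChar F) m with hm'def
  haveI hcharF : CharP F (ringChar F) := ringChar.charP F
  have hm'le : m' ≤ m := by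
    rw [hm'def]
    split
    · exact le_rfl
    · exact min_le_right _ _
  have hm'pos : 1 ≤ m' := by
    rw [hm'def]
    split
    · exact hm
    · rename_i hne
      have hpp : (ringChar F).Prime := (CharP.char_is_prime_or_zero F _).resolve_right hne
      have := hpp.two_le
      omega
  -- choose the classes to discard
  obtain ⟨T, hTsub, hTcard⟩ := Finset.exists_subset_card_eq
    (show m' - 1 ≤ (Finset.univ.filter (fun s : Fin k => (n s : ℤ) ∣ x0 - a s)).card by omega)
  set R := (Finset.univ.filter (fun s : Fin k => (n s : ℤ) ∣ x0 - a s)) \ T with hR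
  have hRcard : R.card = (m - 1) - (m' - 1) := by
    rw [hR, Finset.card_sdiff_of_subset hTsub, hx0c, hTcard]
  set Sf := (Finset.univ : Finset (Fin k)) \ R with hSf
  -- the algebraically closed extension
  set K := AlgebraicClosure F with hK
  have hφinj : Function.Injective (algebraMap F K) := (algebraMap F K).injective
  haveI hcharK : CharP K (ringChar F) := charP_of_injective_ringHom hφinj _
  -- the sub-system data
  set nι : {x // x ∈ Sf} → ℕ := fun s => n s.val with hnι
  set N' := (Finset.univ : Finset {x // x ∈ Sf}).lcm nι with hN'
  have hN'dvd : N' ∣ Finset.univ.lcm n := by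
    apply Finset.lcm_dvd
    intro s _
    exact Finset.dvd_lcm (Finset.mem_univ s.val)
  have hN'0 : N' ≠ 0 := by
    rw [hN', Ne, Finset.lcm_eq_zero_iff]
    intro hmem
    obtain ⟨s, _, hs⟩ := hmem
    simp only [hnι] at hs
    exact absurd hs (by simpa using (hn s.val).ne')
  have hNK : ((N' : ℕ) : K) ≠ 0 := by
    by_cases hp0 : ringChar F = 0
    · haveI : CharP K 0 := by rwa [hp0] at hcharK
      haveI : CharZero K := CharP.charP_to_charZero K
      exact_mod_cast hN'0
    · intro h0
      rw [CharP.cast_eq_zero_iff K (ringChar F)] at h0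
      exact hchar (h0.trans hN'dvd)
  haveI : NeZero ((N' : ℕ) : K) := ⟨hNK⟩
  obtain ⟨ζ, hζ⟩ := HasEnoughRootsOfUnity.exists_primitiveRoot K N'
  -- the factorial is invertible
  have hfacK : ((Nat.factorial (m' - 1) : ℕ) : K) ≠ 0 := by
    by_cases hp0 : ringChar F = 0
    · haveI : CharP K 0 := by rwa [hp0] at hcharK
      haveI : CharZero K := CharP.charP_to_charZero K
      exact_mod_cast (Nat.factorial_ne_zero (m' - 1))
    · have hpp : (ringChar F).Prime := (CharP.char_is_prime_or_zero F _).resolve_right hp0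
      intro h0
      rw [CharP.cast_eq_zero_iff K (ringChar F)] at h0
      have hle := (Nat.Prime.dvd_factorial hpp).mp h0
      have hm'p : m' ≤ ringChar F := by
        rw [hm'def, if_neg hp0]
        exact min_le_left _ _
      omega
  -- cardinality of filters over the sub-system
  have hcards : ∀ x : ℤ,
      ((Finset.univ : Finset {x // x ∈ Sf}).filter
        (fun s => (n s.val : ℤ) ∣ x - a s.val)).card
      = ((Finset.univ.filter (fun s : Fin k => (n s : ℤ) ∣ x - a s)) \ R).card := by
    intro x
    rw [card_filter_subtype Sf (fun s => (n s : ℤ) ∣ x - a s)]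
    congr 1
    rw [hSf]
    ext t
    simp only [Finset.mem_filter, Finset.mem_sdiff, Finset.mem_univ, true_and]
    tauto
  have hcov1' : ∀ x : ℤ, m' - 1 ≤
      ((Finset.univ : Finset {x // x ∈ Sf}).filter
        (fun s => (n s.val : ℤ) ∣ x - a s.val)).card := by
    intro x
    rw [hcards x]
    have h1 : m - 1 ≤ (Finset.univ.filter (fun s : Fin k => (n s : ℤ) ∣ x - a s)).card := by
      have := hcover x
      split at this <;> omega
    have h2 := Finset.card_le_card_sdiff_add_card
      (s := Finset.univ.filter (fun s : Fin k => (n s : ℤ) ∣ x - a s)) (t := R)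
    omega
  have hcov2' : ∀ x : ℤ, ¬ ((n0 : ℤ) ∣ x - a0) → m' - 1 <
      ((Finset.univ : Finset {x // x ∈ Sf}).filter
        (fun s => (n s.val : ℤ) ∣ x - a s.val)).card := by
    intro x hx
    rw [hcards x]
    have h1 : m ≤ (Finset.univ.filter (fun s : Fin k => (n s : ℤ) ∣ x - a s)).card := by
      have := hcover x
      rw [if_neg hx] at this
      omega
    have h2 := Finset.card_le_card_sdiff_add_card
      (s := Finset.univ.filter (fun s : Fin k => (n s : ℤ) ∣ x - a s)) (t := R)
    omega
  have hx0c' : ((Finset.univ : Finset {x // x ∈ Sf}).filter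
      (fun s => (n s.val : ℤ) ∣ x0 - a s.val)).card = m' - 1 := by
    rw [hcards x0, hR, Finset.sdiff_sdiff_eq_self hTsub, hTcard]
  -- apply the core theorem
  obtain ⟨α, hα0, hα1, hcore⟩ := core (m' - 1) a0 n0 hn0
    (fun s : {x // x ∈ Sf} => a s.val) nι (fun s => hn s.val)
    (fun s => mm s.val) (fun s => hmm s.val)
    (fun s => algebraMap F K (c s.val - b s.val))
    (fun s => by
      simp only [Ne, map_eq_zero_iff _ hφinj, sub_eq_zero]
      exact fun h => (hbc s.val) h.symm)
    ζ hζ hNK hfacK hcov1' hcov2' x0 hx0c' hx0d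
  refine ⟨α, hα0, hα1, ?_⟩
  intro r hr
  have hcard := hcore r hr
  rw [Nat.sub_add_cancel hm'pos] at hcard
  set Fι := (Finset.univ.filter (fun I : Finset {x // x ∈ Sf} =>
      Int.fract (∑ s ∈ I, (mm s.val : ℝ) / (n s.val : ℝ)) = (α + r) / (n0 : ℝ))) with hFι
  set VF := Fι.image (fun I => ∑ s ∈ I, (c s.val - b s.val)) with hVF
  have himg : (Fι.image (fun I => ∑ s ∈ I, algebraMap F K (c s.val - b s.val)))
      = VF.image (algebraMap F K) := by
    rw [hVF, Finset.image_image]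
    refine Finset.image_congr ?_
    intro I _
    simp only [Function.comp_apply, map_sum]
  have hVFcard : m' ≤ VF.card := by
    rw [himg, Finset.card_image_of_injective _ hφinj] at hcard
    exact hcard
  set B := ∑ t : Fin k, b t with hB
  have hfin : {y : F | ∃ x : Fin k → F,
      (∀ s, x s = b s ∨ x s = c s) ∧
      Int.fract (∑ s ∈ Finset.univ.filter (fun s => x s = c s),
        (mm s : ℝ) / (n s : ℝ)) = (α + r) / (n0 : ℝ) ∧
      y = ∑ s, x s}.Finite := by
    apply Set.Finite.subset (Set.finite_range
      (fun J : Finset (Fin k) => ∑ t : Fin k, (if t ∈ J then c t else b t)))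
    rintro y ⟨x, hx1, _, rfl⟩
    refine ⟨Finset.univ.filter (fun t => x t = c t), ?_⟩
    apply Finset.sum_congr rfl
    intro t _
    by_cases h : x t = c t
    · rw [if_pos (by simp [h]), h]
    · rcases hx1 t with hb | hc
      · rw [if_neg (by simp [h]), hb]
      · exact absurd hc h
  have hsub : ((VF.image (fun v => B + v) : Finset F) : Set F) ⊆ {y : F | ∃ x : Fin k → F,
      (∀ s, x s = b s ∨ x s = c s) ∧
      Int.fract (∑ s ∈ Finset.univ.filter (fun s => x s = c s),
        (mm s : ℝ) / (n s : ℝ)) = (α + r) / (n0 : ℝ) ∧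
      y = ∑ s, x s} := by
    intro y hy
    simp only [Finset.coe_image, Set.mem_image, Finset.mem_coe] at hy
    obtain ⟨v, hv, rfl⟩ := hy
    rw [hVF, Finset.mem_image] at hv
    obtain ⟨I, hI, rfl⟩ := hv
    rw [hFι, Finset.mem_filter] at hI
    set Ib := I.image (Subtype.val) with hIb
    have hvalinj : ∀ x ∈ I, ∀ y ∈ I, (Subtype.val x : Fin k) = Subtype.val y → x = y :=
      fun x _ y _ h => Subtype.ext h
    refine ⟨fun t => if t ∈ Ib then c t else b t, ?_, ?_, ?_⟩
    · intro s
      by_cases h : s ∈ Ib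
      · exact Or.inr (by simp [h])
      · exact Or.inl (by simp [h])
    · have hfil : Finset.univ.filter
          (fun t : Fin k => (if t ∈ Ib then c t else b t) = c t) = Ib := by
        ext t
        simp only [Finset.mem_filter, Finset.mem_univ, true_and]
        by_cases h : t ∈ Ib
        · simp [h]
        · simp [h, hbc t]
      rw [hfil, hIb, Finset.sum_image hvalinj]
      exact hI.2
    · have hsum1 : ∑ t : Fin k, (if t ∈ Ib then c t else b t)
          = B + ∑ t ∈ Ib, (c t - b t) := by
        have : ∀ t : Fin k, (if t ∈ Ib then c t else b t)
            = b t + (if t ∈ Ib then c t - b t else 0) := by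
          intro t
          by_cases h : t ∈ Ib
          · rw [if_pos h, if_pos h]; ring
          · rw [if_neg h, if_neg h]; ring
        rw [Finset.sum_congr rfl fun t _ => this t, Finset.sum_add_distrib, hB,
          Finset.sum_ite_mem, Finset.univ_inter]
      rw [hsum1, hIb, Finset.sum_image hvalinj]
  calc m' ≤ VF.card := hVFcard
    _ = (VF.image (fun v => B + v)).card :=
        (Finset.card_image_of_injective _ (add_right_injective B)).symm
    _ = ((VF.image (fun v => B + v) : Finset F) : Set F).ncard :=
        (Set.ncard_coe_finset _).symm
    _ ≤ _ := Set.ncard_le_ncard hsub hfin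
end

section
/- Let m ∈ ℕ and let A_0 = {a_s(n_s)}_{s=0}^k be an (m+1)-cover of ℤ with w_{A_0}(a_0) = m+1, and set J = {1 ≤ s ≤ k : a_0 ≡ a_s (mod n_s)} (so |J| = m). Let F be a field whose characteristic does not divide any of n_1,...,n_k, and for each s ∈ {1,...,k} let X_s ⊆ F with |X_s| = 2 and let c_s ∈ X_s. Let a_{ij}, b_i ∈ F for i ∈ {1,...,m}, j ∈ {1,...,k}, and let m_1,...,m_k be integers with gcd(m_s,n_s) = 1 for each s. If the permanent per(a_{ij})_{i∈{1,...,m}, j∈J} = ∑_{bijections i ↦ j_i from {1,...,m} onto J} a_{1 j_1}⋯a_{m j_m} is nonzero, then there exists α ∈ [0,1) such that for every r ∈ {0,1,...,n_0−1} there are x_1 ∈ X_1,...,x_k ∈ X_k with ∑_{j=1}^k a_{ij} x_j ≠ b_i for all i ∈ {1,...,m} and fractional part {∑_{1≤s≤k, x_s = c_s} m_s/n_s} = (α+r)/n_0. -/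
open scoped Classical
open Finset

section SunHelpers
variable {L : Type*} [CommRing L] {σ : Type*} [DecidableEq σ]

lemma sun_sum_powerset_inner (S : Finset σ) (g : Finset σ → σ → L) :
    ∑ E ∈ S.powerset, ∑ j ∈ E, g E j
      = ∑ j ∈ S, ∑ E ∈ (S.erase j).powerset, g (insert j E) j := by
  have h1 : ∀ E ∈ S.powerset, ∑ j ∈ E, g E j = ∑ j ∈ S, if j ∈ E then g E j else 0 := by
    intro E hE
    rw [Finset.sum_ite_mem]
    congr 1
    rw [Finset.inter_eq_right.2 (Finset.mem_powerset.1 hE)]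
  rw [Finset.sum_congr rfl h1, Finset.sum_comm]
  refine Finset.sum_congr rfl fun j hj => ?_
  rw [← Finset.sum_filter]
  refine Finset.sum_bij' (fun E _ => E.erase j) (fun E _ => insert j E) ?_ ?_ ?_ ?_ ?_
  · intro E hE
    simp only [Finset.mem_filter, Finset.mem_powerset] at hE
    simp only [Finset.mem_powerset]
    exact Finset.erase_subset_erase _ hE.1
  · intro E hE
    simp only [Finset.mem_powerset] at hE
    simp only [Finset.mem_filter, Finset.mem_powerset, Finset.mem_insert, true_or,
      and_true]
    exact Finset.insert_subset hj (hE.trans (Finset.erase_subset _ _))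
  · intro E hE
    simp only [Finset.mem_filter] at hE
    exact Finset.insert_erase hE.2
  · intro E hE
    simp only [Finset.mem_powerset] at hE
    exact Finset.erase_insert (fun hjE => (Finset.notMem_erase j S) (hE hjE))
  · intro E hE
    simp only [Finset.mem_filter] at hE
    rw [Finset.insert_erase hE.2]


lemma sun_fd (μ : σ → L) (B : ι → σ → L) (t : Finset ι) :
    ∀ (S : Finset σ) (u : ι → L),
      t.card < (S.filter (fun s => μ s = -1)).card →
      ∑ I ∈ S.powerset, (∏ s ∈ I, μ s) * ∏ i ∈ t, (u i + ∑ j ∈ I, B i j) = 0 := by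
  induction t using Finset.induction_on with
  | empty =>
    intro S u hcard
    simp only [Finset.prod_empty, mul_one]
    have he : ∑ I ∈ S.powerset, ∏ s ∈ I, μ s = ∏ s ∈ S, (μ s + 1) := by
      simpa using (Finset.prod_add μ (fun _ => (1:L)) S).symm
    rw [he]
    obtain ⟨s0, hs0⟩ := Finset.card_pos.1 (lt_of_le_of_lt (Nat.zero_le _) hcard)
    rw [Finset.mem_filter] at hs0
    exact Finset.prod_eq_zero hs0.1 (by rw [hs0.2, neg_add_cancel])
  | @insert i0 t' hi0 ih =>
    intro S u hcard
    have hcard' : t'.card < (S.filter (fun s => μ s = -1)).card := by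
      rw [Finset.card_insert_of_notMem hi0] at hcard; omega
    have hsplit : ∀ I : Finset σ,
        (∏ s ∈ I, μ s) * ∏ i ∈ insert i0 t', (u i + ∑ j ∈ I, B i j)
        = (∏ s ∈ I, μ s) * (u i0 * ∏ i ∈ t', (u i + ∑ j ∈ I, B i j))
          + ∑ j ∈ I, ((∏ s ∈ I, μ s) * B i0 j * ∏ i ∈ t', (u i + ∑ j' ∈ I, B i j')) := by
      intro I
      rw [Finset.prod_insert hi0, add_mul, mul_add]
      congr 1
      rw [Finset.sum_mul, Finset.mul_sum]
      exact Finset.sum_congr rfl fun j _ => by ring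
    rw [Finset.sum_congr rfl (fun I _ => hsplit I), Finset.sum_add_distrib]
    have h1 : ∑ I ∈ S.powerset, (∏ s ∈ I, μ s) * (u i0 * ∏ i ∈ t', (u i + ∑ j ∈ I, B i j)) = 0 := by
      have := ih S u hcard'
      calc ∑ I ∈ S.powerset, (∏ s ∈ I, μ s) * (u i0 * ∏ i ∈ t', (u i + ∑ j ∈ I, B i j))
          = u i0 * ∑ I ∈ S.powerset, (∏ s ∈ I, μ s) * ∏ i ∈ t', (u i + ∑ j ∈ I, B i j) := by
            rw [Finset.mul_sum]; exact Finset.sum_congr rfl fun I _ => by ring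
        _ = 0 := by rw [this, mul_zero]
    rw [h1, zero_add]
    rw [sun_sum_powerset_inner S
      (fun E j => (∏ s ∈ E, μ s) * B i0 j * ∏ i ∈ t', (u i + ∑ j' ∈ E, B i j'))]
    refine Finset.sum_eq_zero fun j hj => ?_
    have hterm : ∀ E ∈ (S.erase j).powerset,
        (∏ s ∈ insert j E, μ s) * B i0 j * ∏ i ∈ t', (u i + ∑ j' ∈ insert j E, B i j')
        = (μ j * B i0 j) * ((∏ s ∈ E, μ s) * ∏ i ∈ t', ((fun i => u i + B i j) i + ∑ j' ∈ E, B i j')) := by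
      intro E hE
      have hjE : j ∉ E := fun h =>
        (Finset.notMem_erase j S) (Finset.mem_powerset.1 hE h)
      rw [Finset.prod_insert hjE]
      have hsum : ∀ i, ∑ j' ∈ insert j E, B i j' = B i j + ∑ j' ∈ E, B i j' :=
        fun i => Finset.sum_insert hjE
      simp only [hsum, ← add_assoc]
      ring
    rw [Finset.sum_congr rfl hterm, ← Finset.mul_sum]
    have hA : t'.card < ((S.erase j).filter (fun s => μ s = -1)).card := by
      have h2 : ((S.filter (fun s => μ s = -1)).erase j).card
          ≤ ((S.erase j).filter (fun s => μ s = -1)).card := by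
        apply Finset.card_le_card
        intro x hx
        simp only [Finset.mem_erase, Finset.mem_filter] at hx ⊢
        exact ⟨⟨hx.1, hx.2.1⟩, hx.2.2⟩
      have h3 : (S.filter (fun s => μ s = -1)).card - 1
          ≤ ((S.filter (fun s => μ s = -1)).erase j).card :=
        Finset.pred_card_le_card_erase
      have hic : (insert i0 t').card = t'.card + 1 := Finset.card_insert_of_notMem hi0
      have hf : (S.filter (fun s => μ s = -1)).card ≠ 0 := by omega
      omega
    rw [ih (S.erase j) (fun i => u i + B i j) hA, mul_zero]


lemma sun_perm : ∀ (m : ℕ) (y : Fin m → σ) (_ : Function.Injective y)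
    (u : Fin m → L) (B : Fin m → σ → L),
    ∑ E ∈ (Finset.image y Finset.univ).powerset,
        (-1:L)^E.card * ∏ i, (u i + ∑ j ∈ E, B i j)
      = (-1)^m * ∑ π : Equiv.Perm (Fin m), ∏ i, B i (y (π i)) := by
  intro m
  induction m with
  | zero =>
    intro y hy u B
    simp
  | succ m ih =>
    intro y hy u B
    have hprodsucc : ∀ E : Finset σ,
        ∏ i, (u i + ∑ j ∈ E, B i j)
          = (u 0 + ∑ j ∈ E, B 0 j) * ∏ i : Fin m, (u i.succ + ∑ j ∈ E, B i.succ j) :=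
      fun E => Fin.prod_univ_succ _
    have hsplit : ∀ E : Finset σ,
        (-1:L)^E.card * ∏ i, (u i + ∑ j ∈ E, B i j)
        = (-1:L)^E.card * (u 0 * ∏ i : Fin m, (u i.succ + ∑ j ∈ E, B i.succ j))
          + ∑ j ∈ E, ((-1:L)^E.card * B 0 j
              * ∏ i : Fin m, (u i.succ + ∑ j' ∈ E, B i.succ j')) := by
      intro E
      rw [hprodsucc E]
      calc (-1:L)^E.card * ((u 0 + ∑ j ∈ E, B 0 j)
              * ∏ i : Fin m, (u i.succ + ∑ j ∈ E, B i.succ j))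
          = (-1:L)^E.card * (u 0 * ∏ i : Fin m, (u i.succ + ∑ j ∈ E, B i.succ j))
            + (∑ j ∈ E, B 0 j) * ((-1:L)^E.card
                * ∏ i : Fin m, (u i.succ + ∑ j ∈ E, B i.succ j)) := by ring
        _ = _ := by
            congr 1
            rw [Finset.sum_mul]
            exact Finset.sum_congr rfl fun j _ => by ring
    rw [Finset.sum_congr rfl (fun E _ => hsplit E), Finset.sum_add_distrib]
    have hcard : (Finset.univ : Finset (Fin m)).card
        < ((Finset.image y Finset.univ).filter (fun s => (fun _ : σ => (-1:L)) s = -1)).card := by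
      have h1 : (Finset.image y Finset.univ).filter (fun s => (fun _ : σ => (-1:L)) s = -1)
          = Finset.image y Finset.univ := Finset.filter_true_of_mem (fun _ _ => rfl)
      rw [h1, Finset.card_image_of_injective _ hy]
      simp
    have hfd := sun_fd (fun _ : σ => (-1:L)) (fun (i : Fin m) j => B i.succ j)
      (Finset.univ : Finset (Fin m)) (Finset.image y Finset.univ)
      (fun i => u i.succ) hcard
    simp only [Finset.prod_const] at hfd
    have hz : ∑ E ∈ (Finset.image y Finset.univ).powerset,
        ((-1:L)^E.card * (u 0 * ∏ i : Fin m, (u i.succ + ∑ j ∈ E, B i.succ j))) = 0 := by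
      calc ∑ E ∈ (Finset.image y Finset.univ).powerset,
            ((-1:L)^E.card * (u 0 * ∏ i : Fin m, (u i.succ + ∑ j ∈ E, B i.succ j)))
          = u 0 * ∑ E ∈ (Finset.image y Finset.univ).powerset,
              ((-1:L)^E.card * ∏ i : Fin m, (u i.succ + ∑ j ∈ E, B i.succ j)) := by
            rw [Finset.mul_sum]; exact Finset.sum_congr rfl fun E _ => by ring
        _ = 0 := by rw [hfd, mul_zero]
    rw [hz, zero_add]
    rw [sun_sum_powerset_inner (Finset.image y Finset.univ)
      (fun E j => (-1:L)^E.card * B 0 j * ∏ i : Fin m, (u i.succ + ∑ j' ∈ E, B i.succ j'))]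
    rw [Finset.sum_image (fun x _ x' _ h => hy h)]
    have hmain : ∀ p : Fin (m+1),
        ∑ E ∈ ((Finset.image y Finset.univ).erase (y p)).powerset,
          ((-1:L)^(insert (y p) E).card * B 0 (y p)
            * ∏ i : Fin m, (u i.succ + ∑ j' ∈ insert (y p) E, B i.succ j'))
        = (-1)^(m+1) * (B 0 (y p) *
            ∑ π' : Equiv.Perm (Fin m), ∏ i : Fin m, B i.succ (y ((Equiv.swap 0 p) (π' i).succ))) := by
      intro p
      have hy' : Function.Injective (fun x : Fin m => y ((Equiv.swap 0 p) x.succ)) := by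
        intro x x' h
        exact Fin.succ_injective _ ((Equiv.swap 0 p).injective (hy h))
      have him : Finset.image (fun x : Fin m => y ((Equiv.swap 0 p) x.succ)) Finset.univ
          = (Finset.image y Finset.univ).erase (y p) := by
        ext t
        simp only [Finset.mem_image, Finset.mem_erase, Finset.mem_univ, true_and]
        constructor
        · rintro ⟨x, rfl⟩
          refine ⟨fun h => ?_, ⟨_, rfl⟩⟩
          have h3 : x.succ = 0 :=
            (Equiv.swap 0 p).injective ((hy h).trans (Equiv.swap_apply_left 0 p).symm)
          exact Fin.succ_ne_zero x h3
        · rintro ⟨hne, q, rfl⟩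
          have hqp : q ≠ p := fun h => hne (by rw [h])
          have hq0 : (Equiv.swap 0 p) q ≠ 0 := fun h =>
            hqp ((Equiv.swap 0 p).injective (h.trans (Equiv.swap_apply_right 0 p).symm))
          refine ⟨((Equiv.swap 0 p) q).pred hq0, ?_⟩
          simp only [Fin.succ_pred]
          rw [Equiv.swap_apply_self]
      have hterm : ∀ E ∈ ((Finset.image y Finset.univ).erase (y p)).powerset,
          ((-1:L)^(insert (y p) E).card * B 0 (y p)
            * ∏ i : Fin m, (u i.succ + ∑ j' ∈ insert (y p) E, B i.succ j'))
          = (-1) * B 0 (y p) * ((-1:L)^E.card *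
              ∏ i : Fin m, ((u i.succ + B i.succ (y p)) + ∑ j' ∈ E, B i.succ j')) := by
        intro E hE
        have hpE : y p ∉ E := fun h =>
          (Finset.notMem_erase (y p) _) (Finset.mem_powerset.1 hE h)
        rw [Finset.card_insert_of_notMem hpE, pow_succ]
        have hs : ∀ i : Fin m, ∑ j' ∈ insert (y p) E, B i.succ j'
            = B i.succ (y p) + ∑ j' ∈ E, B i.succ j' := fun i => Finset.sum_insert hpE
        simp only [hs, ← add_assoc]
        ring
      rw [Finset.sum_congr rfl hterm, ← Finset.mul_sum]
      have hih := ih (fun x : Fin m => y ((Equiv.swap 0 p) x.succ)) hy'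
        (fun i => u i.succ + B i.succ (y p)) (fun i j => B i.succ j)
      simp only [him] at hih
      rw [hih, pow_succ]
      ring
    rw [Finset.sum_congr rfl (fun p _ => hmain p)]
    have hrhs : ∑ π : Equiv.Perm (Fin (m+1)), ∏ i, B i (y (π i))
        = ∑ p : Fin (m+1), B 0 (y p) *
            ∑ π' : Equiv.Perm (Fin m), ∏ i : Fin m, B i.succ (y ((Equiv.swap 0 p) (π' i).succ)) := by
      rw [← Equiv.sum_comp (Equiv.Perm.decomposeFin.symm) (fun π => ∏ i, B i (y (π i)))]
      rw [Fintype.sum_prod_type]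
      refine Finset.sum_congr rfl fun p _ => ?_
      rw [Finset.mul_sum]
      refine Finset.sum_congr rfl fun π' _ => ?_
      rw [Fin.prod_univ_succ]
      simp only [Equiv.Perm.decomposeFin_symm_apply_zero, Equiv.Perm.decomposeFin_symm_apply_succ]
    rw [hrhs, Finset.mul_sum]


lemma sun_sum_powerset_union {L : Type*} [AddCommMonoid L] : ∀ (S T : Finset σ), Disjoint S T → ∀ (f : Finset σ → L),
    ∑ I ∈ (S ∪ T).powerset, f I = ∑ D ∈ S.powerset, ∑ E ∈ T.powerset, f (D ∪ E) := by

  intro S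
  induction S using Finset.induction_on with
  | empty =>
    intro T _ f
    simp
  | @insert a S ha ih =>
    intro T hd f
    have haT : a ∉ T := fun h => by
      have := Finset.disjoint_left.1 hd (Finset.mem_insert_self a S) h
      exact this
    have haST : a ∉ S ∪ T := by simp [ha, haT]
    have hd' : Disjoint S T := hd.mono_left (Finset.subset_insert a S)
    rw [show insert a S ∪ T = insert a (S ∪ T) from Finset.insert_union a S T]
    rw [Finset.sum_powerset_insert haST, ih T hd' f, ih T hd' (fun I => f (insert a I))]
    rw [Finset.sum_powerset_insert ha]
    congr 1
    refine Finset.sum_congr rfl fun D _ => Finset.sum_congr rfl fun E _ => ?_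
    rw [Finset.insert_union]

end SunHelpers

/-- **Corollary 2.3** (Sun): Let `A₀ = {a_s(n_s)}_{s=0}^k` be an `(m+1)`-cover of `ℤ` with
`w_{A₀}(a₀) = m+1`, and let `J = {1 ≤ s ≤ k : a₀ ≡ a_s (mod n_s)}`.  Let `F` be a field
whose characteristic divides none of `n₁,…,n_k`, let `X_s = {b_s, c_s}` be two-element
subsets of `F`, let `a_{ij}, b_i ∈ F`, and let `m_s` be coprime to `n_s`.  If the permanent
`per(a_{ij})_{i∈[1,m], j∈J} ≠ 0`, then the set
`{{∑_{x_s = c_s} m_s/n_s} : x_s ∈ X_s, ∑_j a_{ij} x_j ≠ b_i for all i}` contains an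
arithmetic progression of length `n₀` with common difference `1/n₀`. -/
theorem sun_corollary2_3 (k m : ℕ) (a0 : ℤ) (n0 : ℕ) (hn0 : 0 < n0)
    (a : Fin k → ℤ) (n : Fin k → ℕ) (hn : ∀ s, 0 < n s)
    -- `{a_s(n_s)}_{s=0}^k` is an `(m+1)`-cover of `ℤ`:
    (hcover : ∀ x : ℤ, m + 1 ≤
      (Finset.univ.filter (fun s : Fin k => (n s : ℤ) ∣ x - a s)).card
        + (if (n0 : ℤ) ∣ x - a0 then 1 else 0))
    -- with `w_{A₀}(a₀) = m + 1`:
    (hw0 : (Finset.univ.filter (fun s : Fin k => (n s : ℤ) ∣ a0 - a s)).card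
        + (if (n0 : ℤ) ∣ a0 - a0 then 1 else 0) = m + 1)
    (F : Type*) [Field F]
    (hchar : ∀ s, ¬ (ringChar F ∣ n s))
    (b c : Fin k → F) (hbc : ∀ s, b s ≠ c s)
    (A : Fin m → Fin k → F) (bv : Fin m → F)
    (mm : Fin k → ℤ) (hmm : ∀ s, IsCoprime (mm s) (n s : ℤ))
    -- the permanent over all bijections from `[1,m]` onto `J` is nonzero:
    (hper : ∑ e : Fin m ≃ {s : Fin k // (n s : ℤ) ∣ a0 - a s},
      ∏ i, A i (e i : Fin k) ≠ 0) :
    ∃ α : ℝ, 0 ≤ α ∧ α < 1 ∧ ∀ r : ℕ, r < n0 → ∃ x : Fin k → F,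
      (∀ s, x s = b s ∨ x s = c s) ∧
      (∀ i, ∑ j, A i j * x j ≠ bv i) ∧
      Int.fract (∑ s ∈ Finset.univ.filter (fun s => x s = c s),
        (mm s : ℝ) / (n s : ℝ)) = (α + r) / (n0 : ℝ) := by
  classical
  -- the index set J as a finset, with cardinality m
  set C0 : Finset (Fin k) := Finset.univ.filter (fun s : Fin k => (n s : ℤ) ∣ a0 - a s)
    with hC0def
  have hC0 : C0.card = m := by
    rw [if_pos (by simp : (n0:ℤ) ∣ a0 - a0)] at hw0
    omega
  -- the common modulus N
  set N : ℕ := Finset.univ.lcm n with hNdef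
  have hNdvd : ∀ s, n s ∣ N := fun s => Finset.dvd_lcm (Finset.mem_univ s)
  have hNpos : 0 < N := by
    refine Nat.pos_of_dvd_of_pos
      (Finset.lcm_dvd (fun s _ => Finset.dvd_prod_of_mem n (Finset.mem_univ s)))
      (Finset.prod_pos (fun s _ => hn s))
  haveI : NeZero N := ⟨hNpos.ne'⟩
  have hcharN : ¬ (ringChar F ∣ N) := by
    intro hdvd
    rcases CharP.char_is_prime_or_zero F (ringChar F) with hp | h0
    · obtain ⟨s, _, hs⟩ := hp.prime.exists_mem_finset_dvd
        (hdvd.trans (Finset.lcm_dvd (fun s _ => Finset.dvd_prod_of_mem n (Finset.mem_univ s))))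
      exact hchar s hs
    · rw [h0] at hdvd
      exact absurd (Nat.eq_zero_of_zero_dvd hdvd) hNpos.ne'
  -- the splitting field
  set L := AlgebraicClosure F with hLdef
  set φ : F →+* L := algebraMap F L with hφdef
  have hφinj : Function.Injective φ := φ.injective
  haveI : CharP L (ringChar F) := charP_of_injective_algebraMap hφinj (ringChar F)
  have hNL : ((N:ℕ) : L) ≠ 0 := by
    rw [Ne, CharP.cast_eq_zero_iff L (ringChar F) N]
    exact hcharN
  obtain ⟨ζ, hζ⟩ : ∃ ζ : L, IsPrimitiveRoot ζ N := by
    haveI : NeZero ((N:ℕ) : L) := ⟨hNL⟩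
    haveI := IsSepClosed.hasEnoughRootsOfUnity L N
    exact HasEnoughRootsOfUnity.exists_primitiveRoot L N
  have hζ0 : ζ ≠ 0 := hζ.ne_zero hNpos.ne'
  have hζN : ζ ^ ((N:ℕ):ℤ) = 1 := by rw [zpow_natCast]; exact hζ.pow_eq_one
  have hcong : ∀ x y : ℤ, x ≡ y [ZMOD (N:ℕ)] → ζ ^ x = ζ ^ y := by
    intro x y hxy
    obtain ⟨t, ht⟩ := hxy.dvd
    have hy : y = x + (N:ℤ) * t := by linarith
    rw [hy, zpow_add₀ hζ0, zpow_mul, hζN, one_zpow, mul_one]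
  -- weights
  set w : Fin k → ℤ := fun s => mm s * ((N / n s : ℕ) : ℤ) with hwdef
  have hNns : ∀ s, ((n s : ℤ)) * ((N / n s : ℕ) : ℤ) = ((N:ℕ):ℤ) := by
    intro s
    rw [← Nat.cast_mul, Nat.mul_div_cancel' (hNdvd s)]
  have hq0 : ∀ s, ((N / n s : ℕ) : ℤ) ≠ 0 := by
    intro s
    have : 0 < N / n s := Nat.div_pos (Nat.le_of_dvd hNpos (hNdvd s)) (hn s)
    positivity
  set W : Finset (Fin k) → ℤ := fun I => ∑ s ∈ I, w s with hWdef
  set vv : Finset (Fin k) → ZMod N := fun I => ((W I : ℤ) : ZMod N) with hvdef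
  set μ : Fin k → ℤ → L := fun s x => -ζ ^ ((x - a s) * w s) with hμdef
  set u : Fin m → L := fun i => φ (∑ j, A i j * b j - bv i) with hudef
  set Bm : Fin m → Fin k → L := fun i j => φ (A i j * (c j - b j)) with hBdef
  set PF : Finset (Fin k) → F :=
    fun I => ∏ i, (∑ j, A i j * (if j ∈ I then c j else b j) - bv i) with hPFdef
  set SS : ZMod N → L := fun θ => ∑ I ∈ (Finset.univ : Finset (Fin k)).powerset,
    if vv I = θ then (∏ s ∈ I, μ s 0) * φ (PF I) else 0 with hSSdef
  set G : ℤ → L := fun x => ∑ I ∈ (Finset.univ : Finset (Fin k)).powerset,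
    (∏ s ∈ I, μ s x) * ∏ i, (u i + ∑ j ∈ I, Bm i j) with hGdef
  -- μ is multiplicative in x
  have hzsum : ∀ (I : Finset (Fin k)) (g : Fin k → ℤ),
      ζ ^ (∑ s ∈ I, g s) = ∏ s ∈ I, ζ ^ g s := by
    intro I g
    induction I using Finset.induction_on with
    | empty => simp
    | @insert s I hs ih => rw [Finset.sum_insert hs, Finset.prod_insert hs, zpow_add₀ hζ0, ih]
  have hμprod : ∀ (I : Finset (Fin k)) (x : ℤ),
      ∏ s ∈ I, μ s x = (∏ s ∈ I, μ s 0) * ζ ^ (x * W I) := by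
    intro I x
    have h1 : ∀ s, μ s x = μ s 0 * ζ ^ (x * w s) := by
      intro s
      rw [hμdef]
      simp only
      rw [show (x - a s) * w s = (0 - a s) * w s + x * w s by ring, zpow_add₀ hζ0]
      ring
    calc ∏ s ∈ I, μ s x = ∏ s ∈ I, (μ s 0 * ζ ^ (x * w s)) :=
          Finset.prod_congr rfl fun s _ => h1 s
      _ = (∏ s ∈ I, μ s 0) * ∏ s ∈ I, ζ ^ (x * w s) := Finset.prod_mul_distrib
      _ = (∏ s ∈ I, μ s 0) * ζ ^ (x * W I) := by
          rw [hWdef]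
          simp only
          rw [Finset.mul_sum, hzsum]
  -- `φ (PF I)` expands into the affine form
  have hPFexp : ∀ I : Finset (Fin k), φ (PF I) = ∏ i, (u i + ∑ j ∈ I, Bm i j) := by
    intro I
    have hFi : ∀ i, ∑ j, A i j * (if j ∈ I then c j else b j) - bv i
        = (∑ j, A i j * b j - bv i) + ∑ j ∈ I, A i j * (c j - b j) := by
      intro i
      have h1 : ∀ j, A i j * (if j ∈ I then c j else b j)
          = A i j * b j + (if j ∈ I then A i j * (c j - b j) else 0) := by
        intro j
        by_cases hj : j ∈ I <;> simp [hj] <;> ring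
      rw [Finset.sum_congr rfl (fun j _ => h1 j), Finset.sum_add_distrib,
        Finset.sum_ite_mem, Finset.univ_inter]
      ring
    rw [hPFdef]
    simp only
    rw [map_prod]
    refine Finset.prod_congr rfl fun i _ => ?_
    rw [hFi i, map_add, map_sum]
  -- if x is in a covering class then μ s x = -1
  have hμ1 : ∀ (s : Fin k) (x : ℤ), (n s : ℤ) ∣ x - a s → μ s x = -1 := by
    intro s x hs
    obtain ⟨t, ht⟩ := hs
    have he : (x - a s) * w s = ((N:ℕ):ℤ) * (t * mm s) := by
      rw [ht, hwdef]
      simp only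
      rw [← hNns s]
      ring
    rw [hμdef]
    simp only
    rw [he, zpow_mul, hζN, one_zpow]
  -- (F1): vanishing away from the class a0 (mod n0)
  have hvanish : ∀ x : ℤ, ¬ ((n0:ℤ) ∣ x - a0) → G x = 0 := by
    intro x hx
    have hcx := hcover x
    rw [if_neg hx, add_zero] at hcx
    have hsub : Finset.univ.filter (fun s : Fin k => (n s : ℤ) ∣ x - a s)
        ⊆ Finset.univ.filter (fun s : Fin k => μ s x = -1) := by
      intro s hs
      rw [Finset.mem_filter] at hs ⊢
      exact ⟨hs.1, hμ1 s x hs.2⟩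
    have hcard : (Finset.univ : Finset (Fin m)).card
        < (Finset.univ.filter (fun s : Fin k => μ s x = -1)).card := by
      have := Finset.card_le_card hsub
      rw [Finset.card_univ, Fintype.card_fin]
      omega
    exact sun_fd (fun s => μ s x) Bm (Finset.univ : Finset (Fin m)) Finset.univ u hcard
  -- Fourier expansion of G in terms of SS
  have hvalcong : ∀ θ : ZMod N, (((θ.val : ℕ) : ℤ)) ≡ ((θ.val : ℕ) : ℤ) [ZMOD (N:ℕ)] :=
    fun θ => Int.ModEq.refl _
  have hvalW : ∀ I : Finset (Fin k), (((vv I).val : ℕ) : ℤ) ≡ W I [ZMOD (N:ℕ)] := by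
    intro I
    rw [← ZMod.intCast_eq_intCast_iff]
    rw [Int.cast_natCast, ZMod.natCast_rightInverse (vv I)]
  have hGS : ∀ x : ℤ, G x = ∑ θ : ZMod N, SS θ * ζ ^ (x * ((θ.val : ℕ) : ℤ)) := by
    intro x
    rw [hSSdef]
    rw [Finset.sum_congr rfl fun θ _ => Finset.sum_mul _ _ _]
    simp only [ite_mul, zero_mul]
    rw [Finset.sum_comm]
    rw [hGdef]
    simp only
    refine Finset.sum_congr rfl fun I _ => ?_
    rw [Finset.sum_ite_eq (Finset.univ : Finset (ZMod N)) (vv I)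
      (fun θ => (∏ s ∈ I, μ s 0) * φ (PF I) * ζ ^ (x * ((θ.val : ℕ) : ℤ))),
      if_pos (Finset.mem_univ _)]
    rw [hμprod I x, hPFexp I]
    rw [hcong _ _ (Int.ModEq.mul_left x (hvalW I))]
    ring
  -- (F2): G a0 ≠ 0
  have hG0 : G a0 ≠ 0 := by
    have e1 : {x // x ∈ C0} ≃ Fin m := (C0.equivFin).trans (finCongr hC0)
    set y : Fin m → Fin k := fun i => ((e1.symm i : {x // x ∈ C0}) : Fin k) with hydef
    have hyinj : Function.Injective y := by
      intro i j h
      exact e1.symm.injective (Subtype.ext h)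
    have hyim : Finset.image y Finset.univ = C0 := by
      ext t
      simp only [Finset.mem_image, Finset.mem_univ, true_and]
      constructor
      · rintro ⟨i, rfl⟩
        exact (e1.symm i).2
      · intro ht
        exact ⟨e1 ⟨t, ht⟩, by rw [hydef]; simp⟩
    have hperm : ∑ π : Equiv.Perm (Fin m), ∏ i, A i (y (π i)) ≠ 0 := by
      intro h0
      apply hper
      have hEq := Fintype.sum_equiv
        (Equiv.equivCongr (Equiv.refl (Fin m))
          (e1.symm.trans (Equiv.subtypeEquivRight (q := fun s : Fin k => (n s:ℤ) ∣ a0 - a s)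
            (fun s => by simp [hC0def]))))
        (fun π : Equiv.Perm (Fin m) => ∏ i, A i (y (π i)))
        (fun e : Fin m ≃ {s : Fin k // (n s:ℤ) ∣ a0 - a s} => ∏ i, A i (e i))
        (fun π => Finset.prod_congr rfl fun i _ => rfl)
      rw [← hEq, h0]
    have hμ1' : ∀ E : Finset (Fin k), E ⊆ C0 → ∏ s ∈ E, μ s a0 = (-1:L)^E.card := by
      intro E hE
      rw [← Finset.prod_const]
      refine Finset.prod_congr rfl fun s hs => ?_
      have h1 := hE hs
      rw [hC0def, Finset.mem_filter] at h1
      exact hμ1 s a0 h1.2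
    have hGval : G a0 = (-1:L)^m * (∑ π : Equiv.Perm (Fin m), ∏ i, Bm i (y (π i)))
        * ∏ s ∈ Finset.univ \ C0, (μ s a0 + 1) := by
      rw [hGdef]
      simp only
      conv_lhs =>
        rw [show (Finset.univ : Finset (Fin k)) = (Finset.univ \ C0) ∪ C0 from
          (Finset.sdiff_union_of_subset (Finset.subset_univ C0)).symm]
        rw [sun_sum_powerset_union _ _ Finset.sdiff_disjoint _]
      have hinner : ∀ D ∈ (Finset.univ \ C0).powerset,
          (∑ E ∈ C0.powerset, (∏ s ∈ D ∪ E, μ s a0) * ∏ i, (u i + ∑ j ∈ D ∪ E, Bm i j))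
          = (∏ s ∈ D, μ s a0) *
              ((-1:L)^m * ∑ π : Equiv.Perm (Fin m), ∏ i, Bm i (y (π i))) := by
        intro D hD
        rw [Finset.mem_powerset] at hD
        have hdisj : ∀ E : Finset (Fin k), E ⊆ C0 → Disjoint D E := by
          intro E hE
          exact Finset.disjoint_of_subset_left hD
            (Finset.disjoint_of_subset_right hE Finset.sdiff_disjoint)
        have hterm : ∀ E ∈ C0.powerset,
            (∏ s ∈ D ∪ E, μ s a0) * ∏ i, (u i + ∑ j ∈ D ∪ E, Bm i j)
            = (∏ s ∈ D, μ s a0) * ((-1:L)^E.card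
                * ∏ i, ((u i + ∑ j ∈ D, Bm i j) + ∑ j ∈ E, Bm i j)) := by
          intro E hE
          rw [Finset.mem_powerset] at hE
          rw [Finset.prod_union (hdisj E hE), hμ1' E hE]
          have hsu : ∀ i, ∑ j ∈ D ∪ E, Bm i j = (∑ j ∈ D, Bm i j) + ∑ j ∈ E, Bm i j :=
            fun i => Finset.sum_union (hdisj E hE)
          simp only [hsu, ← add_assoc]
          ring
        rw [Finset.sum_congr rfl hterm, ← Finset.mul_sum]
        congr 1
        rw [← hyim]
        exact sun_perm m y hyinj (fun i => u i + ∑ j ∈ D, Bm i j) Bm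
      rw [Finset.sum_congr rfl hinner, ← Finset.sum_mul]
      have hpa : ∑ D ∈ (Finset.univ \ C0).powerset, ∏ s ∈ D, μ s a0
          = ∏ s ∈ Finset.univ \ C0, (μ s a0 + 1) := by
        simpa using (Finset.prod_add (fun s => μ s a0) (fun _ => (1:L)) (Finset.univ \ C0)).symm
      rw [hpa]
      ring
    rw [hGval]
    have hPer : (∑ π : Equiv.Perm (Fin m), ∏ i, Bm i (y (π i)))
        = φ ((∏ i, (c (y i) - b (y i))) * ∑ π : Equiv.Perm (Fin m), ∏ i, A i (y (π i))) := by
      rw [map_mul, map_sum, Finset.mul_sum]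
      refine Finset.sum_congr rfl fun π _ => ?_
      have h1 : ∏ i, Bm i (y (π i))
          = φ (∏ i, (A i (y (π i)) * (c (y (π i)) - b (y (π i))))) := by
        rw [map_prod]
      rw [h1]
      congr 1
      rw [Finset.prod_mul_distrib]
      rw [show (∏ i, (c (y (π i)) - b (y (π i)))) = ∏ i, (c (y i) - b (y i)) from
        Equiv.prod_comp π (fun i => c (y i) - b (y i))]
      rw [map_mul]
      ring
    have hκ : (∏ i, (c (y i) - b (y i))) ≠ 0 :=
      Finset.prod_ne_zero_iff.2 fun i _ => sub_ne_zero_of_ne (Ne.symm (hbc (y i)))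
    have hPerne : (∑ π : Equiv.Perm (Fin m), ∏ i, Bm i (y (π i))) ≠ 0 := by
      rw [hPer]
      intro h
      exact (mul_ne_zero hκ hperm) (hφinj (by rw [h, map_zero]))
    have hfac : ∀ s ∈ Finset.univ \ C0, μ s a0 + 1 ≠ 0 := by
      intro s hs h
      rw [Finset.mem_sdiff, hC0def, Finset.mem_filter] at hs
      have hnd : ¬ ((n s:ℤ) ∣ a0 - a s) := fun hd => hs.2 ⟨Finset.mem_univ s, hd⟩
      apply hnd
      have h2 : ζ ^ ((a0 - a s) * w s) = 1 := by
        rw [hμdef] at h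
        simp only at h
        linear_combination -h
      rw [hζ.zpow_eq_one_iff_dvd] at h2
      have h3 : ((n s:ℤ)) * ((N / n s : ℕ):ℤ) ∣ ((a0 - a s) * mm s) * ((N / n s : ℕ):ℤ) := by
        rw [hNns s]
        rw [show ((a0 - a s) * mm s) * ((N / n s : ℕ):ℤ) = (a0 - a s) * w s from by
          rw [show w s = mm s * ((N / n s : ℕ):ℤ) from rfl]; ring]
        exact h2
      have h4 : (n s:ℤ) ∣ (a0 - a s) * mm s :=
        (mul_dvd_mul_iff_right (hq0 s)).1 h3
      exact (hmm s).symm.dvd_of_dvd_mul_right h4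
    exact mul_ne_zero (mul_ne_zero (pow_ne_zero m (neg_ne_zero.2 one_ne_zero)) hPerne)
      (Finset.prod_ne_zero_iff.2 hfac)
  -- n0 divides N
  have hdvdN : n0 ∣ N := by
    by_contra hnd
    have h1 : ¬ ((n0:ℤ) ∣ (a0 + ((N:ℕ):ℤ)) - a0) := by
      rw [add_sub_cancel_left]
      exact fun h => hnd (Int.natCast_dvd_natCast.1 h)
    have h2 := hvanish _ h1
    have h3 : G (a0 + ((N:ℕ):ℤ)) = G a0 := by
      rw [hGdef]
      refine Finset.sum_congr rfl fun I _ => ?_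
      congr 1
      refine Finset.prod_congr rfl fun s _ => ?_
      rw [hμdef]
      simp only
      congr 1
      apply hcong
      rw [Int.modEq_iff_dvd]
      exact ⟨-(w s), by ring⟩
    exact hG0 (h3.symm.trans h2)
  set M : ℕ := N / n0 with hMdef
  have hNM : N = n0 * M := (Nat.mul_div_cancel' hdvdN).symm
  have hMpos : 0 < M := by
    rcases Nat.eq_zero_or_pos M with h | h
    · rw [h, Nat.mul_zero] at hNM; omega
    · exact h
  -- Fourier inversion
  have hPhi : ∀ θ : ZMod N, ∑ x ∈ Finset.range N,
      ζ ^ (-((x:ℤ) * ((θ.val : ℕ) : ℤ))) * G x = ((N:ℕ) : L) * SS θ := by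
    intro θ
    have horth : ∀ θ' : ZMod N,
        ∑ x ∈ Finset.range N, (ζ ^ (((θ'.val : ℕ):ℤ) - ((θ.val : ℕ):ℤ)))^x
          = if θ' = θ then ((N:ℕ) : L) else 0 := by
      intro θ'
      by_cases h : θ' = θ
      · subst h
        simp
      · rw [if_neg h]
        have hξ1 : ζ ^ ((((θ'.val : ℕ)):ℤ) - ((θ.val : ℕ):ℤ)) ≠ 1 := by
          intro h1
          apply h
          have h2 := (hζ.zpow_eq_one_iff_dvd _).1 h1
          have h3 := (ZMod.intCast_zmod_eq_zero_iff_dvd _ N).2 h2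
          push_cast [ZMod.natCast_val, ZMod.cast_id] at h3
          exact sub_eq_zero.1 h3
        rw [geom_sum_eq hξ1 N]
        have hξN : (ζ ^ ((((θ'.val : ℕ)):ℤ) - ((θ.val : ℕ):ℤ))) ^ (N:ℕ) = 1 := by
          rw [← zpow_natCast (ζ ^ _) N, ← zpow_mul, mul_comm, zpow_mul, hζN, one_zpow]
        rw [hξN, sub_self, zero_div]
    calc ∑ x ∈ Finset.range N, ζ ^ (-((x:ℤ) * ((θ.val : ℕ) : ℤ))) * G x
        = ∑ x ∈ Finset.range N, ∑ θ' : ZMod N,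
            SS θ' * (ζ ^ (((θ'.val : ℕ):ℤ) - ((θ.val : ℕ):ℤ)))^x := by
          refine Finset.sum_congr rfl fun x _ => ?_
          rw [hGS x, Finset.mul_sum]
          refine Finset.sum_congr rfl fun θ' _ => ?_
          have hz : ζ ^ (-((x:ℤ) * ((θ.val : ℕ) : ℤ))) * ζ ^ ((x:ℤ) * ((θ'.val : ℕ) : ℤ))
              = (ζ ^ (((θ'.val : ℕ):ℤ) - ((θ.val : ℕ):ℤ)))^x := by
            rw [← zpow_natCast (ζ ^ ((((θ'.val : ℕ)):ℤ) - ((θ.val : ℕ):ℤ))) x, ← zpow_mul,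
              ← zpow_add₀ hζ0]
            congr 1
            ring
          calc ζ ^ (-((x:ℤ) * ((θ.val:ℕ):ℤ))) * (SS θ' * ζ ^ ((x:ℤ) * ((θ'.val:ℕ):ℤ)))
              = SS θ' * (ζ ^ (-((x:ℤ) * ((θ.val:ℕ):ℤ))) * ζ ^ ((x:ℤ) * ((θ'.val:ℕ):ℤ))) := by
                ring
            _ = _ := by rw [hz]
      _ = ∑ θ' : ZMod N, SS θ' * ∑ x ∈ Finset.range N,
            (ζ ^ (((θ'.val : ℕ):ℤ) - ((θ.val : ℕ):ℤ)))^x := by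
          rw [Finset.sum_comm]
          exact Finset.sum_congr rfl fun θ' _ => (Finset.mul_sum _ _ _).symm
      _ = ((N:ℕ) : L) * SS θ := by
          rw [Finset.sum_congr rfl (fun θ' _ => by rw [horth θ'])]
          simp only [mul_ite, mul_zero]
          rw [Finset.sum_ite_eq' Finset.univ θ (fun θ' => SS θ' * ((N:ℕ):L)),
            if_pos (Finset.mem_univ _)]
          ring
  -- the shift property
  have hshift : ∀ (θ : ZMod N) (r : ℕ),
      SS (θ + ((r * M : ℕ) : ZMod N)) = ζ ^ (-(a0 * ((r:ℤ) * (M:ℕ)))) * SS θ := by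
    intro θ r
    apply mul_left_cancel₀ hNL
    have hres : ∀ θ'' : ZMod N, ((N:ℕ):L) * SS θ''
        = ∑ x ∈ (Finset.range N).filter (fun x : ℕ => (n0:ℤ) ∣ (x:ℤ) - a0),
            ζ ^ (-((x:ℤ) * ((θ''.val : ℕ) : ℤ))) * G x := by
      intro θ''
      rw [← hPhi θ'']
      symm
      apply Finset.sum_filter_of_ne
      intro x _ hne
      by_contra hd
      exact hne (by rw [hvanish _ hd, mul_zero])
    have hBv : (((θ + ((r * M : ℕ) : ZMod N)).val : ℕ) : ℤ)
        ≡ ((θ.val : ℕ):ℤ) + ((r:ℤ) * (M:ℕ)) [ZMOD (N:ℕ)] := by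
      rw [← ZMod.intCast_eq_intCast_iff]
      push_cast [ZMod.natCast_val, ZMod.cast_id]
      ring
    have hNcast : ((N:ℕ):ℤ) = (n0:ℤ) * (M:ℤ) := by exact_mod_cast hNM
    calc ((N:ℕ):L) * SS (θ + ((r * M : ℕ) : ZMod N))
        = ∑ x ∈ (Finset.range N).filter (fun x : ℕ => (n0:ℤ) ∣ (x:ℤ) - a0),
            ζ ^ (-((x:ℤ) * (((θ + ((r * M : ℕ) : ZMod N)).val : ℕ) : ℤ))) * G x := hres _
      _ = ∑ x ∈ (Finset.range N).filter (fun x : ℕ => (n0:ℤ) ∣ (x:ℤ) - a0),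
            ζ ^ (-(a0 * ((r:ℤ) * (M:ℕ)))) * (ζ ^ (-((x:ℤ) * ((θ.val : ℕ) : ℤ))) * G x) := by
          refine Finset.sum_congr rfl fun x hx => ?_
          rw [Finset.mem_filter] at hx
          obtain ⟨-, t, ht⟩ := hx
          have hxrm : (x:ℤ) * ((r:ℤ) * (M:ℕ)) ≡ a0 * ((r:ℤ) * (M:ℕ)) [ZMOD (N:ℕ)] := by
            rw [Int.modEq_iff_dvd]
            refine ⟨-(t*r), ?_⟩
            calc a0 * ((r:ℤ)*(M:ℕ)) - (x:ℤ)*((r:ℤ)*(M:ℕ))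
                = -(((x:ℤ) - a0) * ((r:ℤ)*(M:ℕ))) := by ring
              _ = ((N:ℕ):ℤ) * (-(t*r)) := by rw [ht, hNcast]; ring
          have h3 : -((x:ℤ) * (((θ + ((r * M : ℕ) : ZMod N)).val : ℕ) : ℤ))
              ≡ -(a0 * ((r:ℤ)*(M:ℕ))) + -((x:ℤ)*((θ.val:ℕ):ℤ)) [ZMOD (N:ℕ)] := by
            calc -((x:ℤ) * (((θ + ((r * M : ℕ) : ZMod N)).val : ℕ) : ℤ))
                ≡ -((x:ℤ) * (((θ.val:ℕ):ℤ) + ((r:ℤ)*(M:ℕ)))) [ZMOD (N:ℕ)] :=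
                  (hBv.mul_left x).neg
              _ = -((x:ℤ)*((r:ℤ)*(M:ℕ))) + -((x:ℤ)*((θ.val:ℕ):ℤ)) := by ring
              _ ≡ -(a0*((r:ℤ)*(M:ℕ))) + -((x:ℤ)*((θ.val:ℕ):ℤ)) [ZMOD (N:ℕ)] :=
                  (hxrm.neg).add_right _
          rw [hcong _ _ h3, zpow_add₀ hζ0, mul_assoc]
      _ = ζ ^ (-(a0 * ((r:ℤ) * (M:ℕ)))) * (((N:ℕ):L) * SS θ) := by
          rw [← Finset.mul_sum, ← hres θ]
      _ = ((N:ℕ):L) * (ζ ^ (-(a0 * ((r:ℤ) * (M:ℕ)))) * SS θ) := by ring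
  -- some θ0 with SS θ0 ≠ 0
  have hex : ∃ θ0 : ZMod N, SS θ0 ≠ 0 := by
    by_contra h
    push_neg at h
    apply hG0
    rw [hGS a0]
    simp [h]
  obtain ⟨θ0, hθ0⟩ := hex
  set ρ : ℕ := θ0.val % M with hρdef
  have hρM : ρ < M := Nat.mod_lt _ hMpos
  have hθs : SS ((ρ : ℕ) : ZMod N) ≠ 0 := by
    intro h
    apply hθ0
    have hval : θ0 = ((ρ:ℕ) : ZMod N) + ((θ0.val / M * M : ℕ) : ZMod N) := by
      conv_lhs => rw [← ZMod.natCast_rightInverse θ0]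
      rw [← Nat.cast_add]
      congr 1
      rw [hρdef]
      exact (Nat.mod_add_div' θ0.val M).symm
    rw [hval, hshift, h, mul_zero]
  refine ⟨(ρ:ℝ)/(M:ℝ), by positivity, ?_, ?_⟩
  · rw [div_lt_one (by exact_mod_cast hMpos)]
    exact_mod_cast hρM
  intro r hr
  have hSr : SS (((ρ:ℕ) : ZMod N) + ((r * M : ℕ) : ZMod N)) ≠ 0 := by
    rw [hshift]
    exact mul_ne_zero (zpow_ne_zero _ hζ0) hθs
  obtain ⟨I, hImem, hIne⟩ := Finset.exists_ne_zero_of_sum_ne_zero hSr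
  have hcond : vv I = ((ρ:ℕ) : ZMod N) + ((r * M : ℕ) : ZMod N) := by
    by_contra h
    rw [if_neg h] at hIne
    exact hIne rfl
  rw [if_pos hcond] at hIne
  have hPF0 : PF I ≠ 0 := by
    intro h
    apply hIne
    rw [h, map_zero, mul_zero]
  refine ⟨fun s => if s ∈ I then c s else b s,
    fun s => by by_cases h : s ∈ I <;> simp [h], ?_, ?_⟩
  · intro i heq
    apply hPF0
    rw [hPFdef]
    apply Finset.prod_eq_zero (Finset.mem_univ i)
    rw [heq, sub_self]
  · have hfilter : (Finset.univ.filter (fun s => (if s ∈ I then c s else b s) = c s)) = I := by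
      ext s
      simp only [Finset.mem_filter, Finset.mem_univ, true_and]
      by_cases h : s ∈ I
      · simp [h]
      · simp [h, hbc s]
    rw [hfilter]
    have hsum : ∑ s ∈ I, (mm s : ℝ)/(n s : ℝ) = ((W I : ℤ) : ℝ)/((N:ℕ) : ℝ) := by
      rw [show W I = ∑ s ∈ I, w s from rfl]
      push_cast
      rw [Finset.sum_div]
      refine Finset.sum_congr rfl fun s _ => ?_
      have hws : ((w s : ℤ) : ℝ) = (mm s : ℝ) * ((N / n s : ℕ) : ℝ) := by
        rw [show w s = mm s * ((N / n s : ℕ) : ℤ) from rfl, Int.cast_mul, Int.cast_natCast]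
      rw [hws]
      have hns : (n s : ℝ) ≠ 0 := Nat.cast_ne_zero.2 (hn s).ne'
      have hqs : ((N / n s : ℕ) : ℝ) ≠ 0 :=
        Nat.cast_ne_zero.2 (Nat.div_pos (Nat.le_of_dvd hNpos (hNdvd s)) (hn s)).ne'
      have hNr : ((N:ℕ) : ℝ) = (n s : ℝ) * ((N / n s : ℕ) : ℝ) := by
        exact_mod_cast congrArg (Nat.cast (R := ℝ)) (Nat.mul_div_cancel' (hNdvd s)).symm
      rw [hNr]
      field_simp
    rw [hsum]
    have hWc : (W I : ℤ) ≡ ((ρ + r*M : ℕ) : ℤ) [ZMOD (N:ℕ)] := by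
      rw [← ZMod.intCast_eq_intCast_iff]
      have h5 : ((W I : ℤ) : ZMod N) = (((ρ + r*M : ℕ) : ℤ) : ZMod N) := by
        rw [Int.cast_natCast, Nat.cast_add]
        exact hcond
      exact h5
    obtain ⟨t, ht⟩ := hWc.dvd
    have hρrM : ρ + r * M < N := by
      have h1 : (r+1) * M ≤ n0 * M := Nat.mul_le_mul_right M hr
      have h2 : (r+1) * M = r * M + M := by ring
      omega
    have hNrr : ((N:ℕ):ℝ) ≠ 0 := Nat.cast_ne_zero.2 hNpos.ne'
    have hWr : ((W I : ℤ) : ℝ) / ((N:ℕ):ℝ) = ((ρ + r*M : ℕ) : ℝ)/((N:ℕ):ℝ) + ((-t : ℤ) : ℝ) := by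
      have h5 : ((W I : ℤ) : ℝ) = ((ρ + r*M : ℕ) : ℝ) - ((N:ℕ):ℝ) * (t:ℝ) := by
        have h6 := congrArg (fun z : ℤ => (z : ℝ)) ht
        push_cast at h6 ⊢
        linarith
      rw [h5]
      push_cast
      field_simp
      ring
    rw [hWr, Int.fract_add_intCast]
    have hfr : Int.fract (((ρ + r*M : ℕ) : ℝ)/((N:ℕ):ℝ)) = ((ρ + r*M : ℕ) : ℝ)/((N:ℕ):ℝ) := by
      rw [Int.fract_eq_self]
      constructor
      · positivity
      · rw [div_lt_one (by exact_mod_cast hNpos)]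
        exact_mod_cast hρrM
    rw [hfr]
    have hMr : ((M:ℕ):ℝ) ≠ 0 := Nat.cast_ne_zero.2 hMpos.ne'
    have hn0r : ((n0:ℕ):ℝ) ≠ 0 := Nat.cast_ne_zero.2 hn0.ne'
    have hNr2 : ((N:ℕ):ℝ) = (n0:ℝ) * (M:ℝ) := by exact_mod_cast congrArg (Nat.cast (R := ℝ)) hNM
    rw [hNr2]
    push_cast
    rw [div_add' _ _ _ hMr, div_div, mul_comm (M:ℝ) ((n0:ℕ):ℝ)]
end

section
/- Let A = {a_s(n_s)}_{s=1}^k be an m-cover of ℤ with a_k(n_k) essential and n_k = N_A, where N_A = lcm(n_1,...,n_k). Let m_1,...,m_{k−1} be integers with gcd(m_s,n_s) = 1 for each s ∈ {1,...,k−1}, and set K = {1 ≤ s < k : a_k ≡ a_s (mod n_s)}. Then for every subset J ⊆ K and every r ∈ {0,1,...,N_A−1}, there exists I ⊆ {1,...,k−1} such that I ∩ K = J and the fractional part {∑_{s∈I} m_s/n_s} equals r/N_A. -/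
open Finset Complex

private lemma zpow_sum_aux {ι : Type*} {ζ : ℂ} (h : ζ ≠ 0) (s : Finset ι) (f : ι → ℤ) :
    ζ ^ (∑ i ∈ s, f i) = ∏ i ∈ s, ζ ^ f i := by
  classical
  induction s using Finset.induction_on with
  | empty => simp
  | @insert a s' hx ih => rw [Finset.sum_insert hx, Finset.prod_insert hx, zpow_add₀ h, ih]

private lemma zeta_sum_aux (N : ℕ) (hN : 0 < N) (j : ℤ) :
    ∑ x ∈ Finset.range N, Complex.exp (2 * Real.pi * Complex.I / N) ^ ((x : ℤ) * j)
      = if (N : ℤ) ∣ j then (N : ℂ) else 0 := by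
  have hprim := Complex.isPrimitiveRoot_exp N hN.ne'
  set ζ : ℂ := Complex.exp (2 * Real.pi * Complex.I / N) with hζdef
  have hpow : ∀ x : ℕ, ζ ^ ((x : ℤ) * j) = (ζ ^ j) ^ x := by
    intro x
    rw [mul_comm, zpow_mul, zpow_natCast]
  simp_rw [hpow]
  by_cases hdvd : (N : ℤ) ∣ j
  · rw [if_pos hdvd]
    have h1 : ζ ^ j = 1 := (hprim.zpow_eq_one_iff_dvd j).mpr hdvd
    simp [h1]
  · rw [if_neg hdvd]
    have h1 : ζ ^ j ≠ 1 := fun h => hdvd ((hprim.zpow_eq_one_iff_dvd j).mp h)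
    rw [geom_sum_eq h1]
    have hN1 : (ζ ^ j) ^ N = 1 := by
      rw [← zpow_natCast, ← zpow_mul, mul_comm, zpow_mul, hprim.zpow_eq_one, one_zpow]
    rw [hN1, sub_self, zero_div]

/-- **Corollary 2.5** (Sun): Let `A = {a_s(n_s)}_{s=1}^k` be an `m`-cover of `ℤ` with
`a_k(n_k)` essential and `n_k = N_A = lcm(n₁,…,n_k)`.  Let `m₁,…,m_{k-1}` be integers
coprime to `n₁,…,n_{k-1}` respectively, and let `K = {1 ≤ s < k : a_k ≡ a_s (mod n_s)}`.
Then for every `J ⊆ K` and every `0 ≤ r < N_A` there is `I ⊆ [1,k-1]` with `I ∩ K = J`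
and `{∑_{s∈I} m_s/n_s} = r/N_A`.
(Here the classes `a_1(n_1),…,a_{k-1}(n_{k-1})` are indexed by `Fin l` with `l = k - 1`,
and the last class is `ak(nk)`.) -/
theorem sun_corollary2_5 (l m : ℕ) (a : Fin l → ℤ) (n : Fin l → ℕ) (hn : ∀ s, 0 < n s)
    (ak : ℤ) (nk : ℕ) (hnk : 0 < nk)
    -- the whole system (the `l` classes together with `ak(nk)`) is an `m`-cover of `ℤ`:
    (hcover : ∀ x : ℤ, m ≤
      (Finset.univ.filter (fun s : Fin l => (n s : ℤ) ∣ x - a s)).card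
        + (if (nk : ℤ) ∣ x - ak then 1 else 0))
    -- with `ak(nk)` essential:
    (hess : ¬ ∀ x : ℤ, m ≤
      (Finset.univ.filter (fun s : Fin l => (n s : ℤ) ∣ x - a s)).card)
    -- and `nk = N_A`, the least common multiple of all the moduli:
    (hNA : nk = Nat.lcm (Finset.univ.lcm n) nk)
    (mm : Fin l → ℤ) (hmm : ∀ s, IsCoprime (mm s) (n s : ℤ)) :
    ∀ J ⊆ Finset.univ.filter (fun s : Fin l => (n s : ℤ) ∣ ak - a s),
      ∀ r : ℕ, r < nk → ∃ I : Finset (Fin l),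
        I ∩ Finset.univ.filter (fun s : Fin l => (n s : ℤ) ∣ ak - a s) = J ∧
        Int.fract (∑ s ∈ I, (mm s : ℝ) / (n s : ℝ)) = (r : ℝ) / (nk : ℝ) := by
  classical
  intro J hJ r hr
  set K : Finset (Fin l) := Finset.univ.filter (fun s : Fin l => (n s : ℤ) ∣ ak - a s) with hKdef
  -- every modulus divides nk
  have hdvdN : ∀ s, n s ∣ nk := by
    intro s
    have h1 : Finset.univ.lcm n ∣ nk := by
      conv_rhs => rw [hNA]
      exact Nat.dvd_lcm_left _ _
    exact (Finset.dvd_lcm (Finset.mem_univ s)).trans h1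
  -- the essential witness
  push_neg at hess
  obtain ⟨x0, hx0⟩ := hess
  have hx0k : (nk : ℤ) ∣ x0 - ak := by
    by_contra h
    have := hcover x0
    rw [if_neg h] at this
    omega
  -- K is exactly the set of classes covering x0
  have hKC : K = Finset.univ.filter (fun s : Fin l => (n s : ℤ) ∣ x0 - a s) := by
    ext s
    simp only [hKdef, Finset.mem_filter, Finset.mem_univ, true_and]
    have hs : (n s : ℤ) ∣ x0 - ak := dvd_trans (Int.natCast_dvd_natCast.mpr (hdvdN s)) hx0k
    constructor
    · intro h
      have h2 : x0 - a s = (x0 - ak) + (ak - a s) := by ring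
      rw [h2]; exact dvd_add hs h
    · intro h
      have h2 : ak - a s = (x0 - a s) - (x0 - ak) := by ring
      rw [h2]; exact dvd_sub h hs
  have hKcard : K.card < m := by rw [hKC]; exact hx0
  -- claim A: away from x0 mod nk, some class outside K covers x
  have claimA : ∀ x : ℤ, ¬ (nk : ℤ) ∣ x - x0 → ∃ s, s ∉ K ∧ (n s : ℤ) ∣ x - a s := by
    intro x hx
    have hxk : ¬ (nk : ℤ) ∣ x - ak := by
      intro h
      apply hx
      have h2 : x - x0 = (x - ak) - (x0 - ak) := by ring
      rw [h2]; exact dvd_sub h hx0k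
    have hc := hcover x
    rw [if_neg hxk] at hc
    by_contra hcon
    push_neg at hcon
    have hsub : (Finset.univ.filter (fun s : Fin l => (n s : ℤ) ∣ x - a s)) ⊆ K := by
      intro s hs
      simp only [Finset.mem_filter, Finset.mem_univ, true_and] at hs
      by_contra hsK
      exact (hcon s hsK) hs
    have := Finset.card_le_card hsub
    omega
  -- the integer coefficients
  set b : Fin l → ℤ := fun s => mm s * ((nk / n s : ℕ) : ℤ) with hbdef
  -- key divisibility equivalence
  have keyb : ∀ (s : Fin l) (y : ℤ), ((nk : ℤ) ∣ b s * y) ↔ ((n s : ℤ) ∣ mm s * y) := by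
    intro s y
    have hd : n s * (nk / n s) = nk := Nat.mul_div_cancel' (hdvdN s)
    have hd0 : ((nk / n s : ℕ) : ℤ) ≠ 0 := by
      have : 0 < nk / n s := Nat.div_pos (Nat.le_of_dvd hnk (hdvdN s)) (hn s)
      exact_mod_cast this.ne'
    have hcast : (nk : ℤ) = (n s : ℤ) * ((nk / n s : ℕ) : ℤ) := by exact_mod_cast hd.symm
    have hby : b s * y = (mm s * y) * ((nk / n s : ℕ) : ℤ) := by rw [hbdef]; ring
    constructor
    · intro h
      rw [hcast, hby] at h
      exact (mul_dvd_mul_iff_right hd0).mp h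
    · intro h
      rw [hcast, hby]
      exact mul_dvd_mul h dvd_rfl
  have keyb' : ∀ (s : Fin l) (x : ℤ), ((nk : ℤ) ∣ b s * (x - a s)) ↔ ((n s : ℤ) ∣ x - a s) := by
    intro s x
    rw [keyb s (x - a s)]
    constructor
    · exact fun h => (hmm s).symm.dvd_of_dvd_mul_left h
    · exact fun h => h.mul_left _
  -- main existence lemma: subsets of the complement of K realize every residue
  have main : ∀ r' : ℤ, ∃ t : Finset (Fin l), t ⊆ Finset.univ \ K ∧
      (nk : ℤ) ∣ (∑ s ∈ t, b s) - r' := by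
    intro r'
    by_contra hcon
    push_neg at hcon
    set ζ : ℂ := Complex.exp (2 * Real.pi * Complex.I / nk) with hζdef
    have hζ0 : ζ ≠ 0 := Complex.exp_ne_zero _
    have hprim := Complex.isPrimitiveRoot_exp nk hnk.ne'
    set S : Finset (Fin l) := Finset.univ \ K with hSdef
    set T : ℂ := ∑ x ∈ Finset.range nk,
        ζ ^ (-(x : ℤ) * r') * ∏ s ∈ S, (1 - ζ ^ (b s * ((x : ℤ) - a s))) with hTdef
    -- expansion computation: T = 0
    have hT0 : T = 0 := by
      have hexp : ∀ x : ℕ, ζ ^ (-(x : ℤ) * r') * ∏ s ∈ S, (1 - ζ ^ (b s * ((x : ℤ) - a s)))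
          = ∑ t ∈ S.powerset, (∏ s ∈ t, (-ζ ^ (-(b s * a s))))
              * ζ ^ ((x : ℤ) * ((∑ s ∈ t, b s) - r')) := by
        intro x
        have hfac : ∀ s : Fin l, (1 : ℂ) - ζ ^ (b s * ((x : ℤ) - a s))
            = (-(ζ ^ (b s * ((x : ℤ) - a s)))) + 1 := by intro s; ring
        rw [Finset.prod_congr rfl (fun s _ => hfac s), Finset.prod_add, Finset.mul_sum]
        apply Finset.sum_congr rfl
        intro t ht
        rw [Finset.prod_const_one, mul_one]
        have hterm : ∀ s : Fin l, -(ζ ^ (b s * ((x : ℤ) - a s)))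
            = (-ζ ^ (-(b s * a s))) * ζ ^ ((x : ℤ) * b s) := by
          intro s
          have he : b s * ((x : ℤ) - a s) = (-(b s * a s)) + (x : ℤ) * b s := by ring
          rw [he, zpow_add₀ hζ0]
          ring
        rw [Finset.prod_congr rfl (fun s _ => hterm s), Finset.prod_mul_distrib,
          ← zpow_sum_aux hζ0, ← Finset.mul_sum]
        rw [show ((x : ℤ)) * ((∑ s ∈ t, b s) - r')
            = (x : ℤ) * (∑ i ∈ t, b i) + (-(x : ℤ) * r') by ring, zpow_add₀ hζ0]
        ring
      rw [hTdef, Finset.sum_congr rfl (fun x _ => hexp x), Finset.sum_comm]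
      apply Finset.sum_eq_zero
      intro t ht
      rw [← Finset.mul_sum, hζdef, zeta_sum_aux nk hnk,
        if_neg (hcon t (Finset.mem_powerset.mp ht)), mul_zero]
    -- direct computation: T ≠ 0
    have hT1 : T ≠ 0 := by
      set x1 : ℕ := (x0 % nk).toNat with hx1def
      have hmod0 : (0 : ℤ) ≤ x0 % nk := Int.emod_nonneg x0 (by exact_mod_cast hnk.ne')
      have hmodlt : x0 % nk < nk := Int.emod_lt_of_pos x0 (by exact_mod_cast hnk)
      have hx1cast : (x1 : ℤ) = x0 % nk := by
        simp [hx1def, Int.toNat_of_nonneg hmod0]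
      have hx1lt : x1 < nk := by omega
      have hx1x0 : (nk : ℤ) ∣ (x1 : ℤ) - x0 := ⟨-(x0 / nk), by
        rw [hx1cast, Int.emod_def]; ring⟩
      have hQ : ∀ x ∈ Finset.range nk, x ≠ x1 →
          ζ ^ (-(x : ℤ) * r') * ∏ s ∈ S, (1 - ζ ^ (b s * ((x : ℤ) - a s))) = 0 := by
        intro x hx hne
        have hxlt : x < nk := Finset.mem_range.mp hx
        have hndvd : ¬ (nk : ℤ) ∣ (x : ℤ) - x0 := by
          intro h
          have h2 : (nk : ℤ) ∣ (x : ℤ) - (x1 : ℤ) := by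
            have h3 : (x : ℤ) - x1 = ((x : ℤ) - x0) - ((x1 : ℤ) - x0) := by ring
            rw [h3]; exact dvd_sub h hx1x0
        -- bound the difference
          have habs0 : (x : ℤ) - (x1 : ℤ) ≠ 0 := by
            intro h4
            exact hne (by exact_mod_cast sub_eq_zero.mp h4)
          have h5 := Int.le_of_dvd (abs_pos.mpr habs0) ((dvd_abs _ _).mpr h2)
          rcases abs_cases ((x : ℤ) - (x1 : ℤ)) with ⟨he, _⟩ | ⟨he, _⟩ <;> omega
        obtain ⟨s, hsK, hsdvd⟩ := claimA x hndvd
        have hone : ζ ^ (b s * ((x : ℤ) - a s)) = 1 :=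
          (hprim.zpow_eq_one_iff_dvd _).mpr ((keyb' s x).mpr hsdvd)
        have hs' : s ∈ S := by simp [hSdef, hsK]
        rw [Finset.prod_eq_zero hs' (by rw [hone]; ring), mul_zero]
      rw [hTdef, Finset.sum_eq_single_of_mem x1 (Finset.mem_range.mpr hx1lt) hQ]
      apply mul_ne_zero (zpow_ne_zero _ hζ0)
      rw [Finset.prod_ne_zero_iff]
      intro s hs
      have hsK : s ∉ K := by
        rw [hSdef, Finset.mem_sdiff] at hs
        exact hs.2
      have hnd : ¬ (n s : ℤ) ∣ (x1 : ℤ) - a s := by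
        intro h
        apply hsK
        rw [hKC]
        simp only [Finset.mem_filter, Finset.mem_univ, true_and]
        have hns : (n s : ℤ) ∣ (x1 : ℤ) - x0 :=
          dvd_trans (Int.natCast_dvd_natCast.mpr (hdvdN s)) hx1x0
        have h2 : x0 - a s = ((x1 : ℤ) - a s) - ((x1 : ℤ) - x0) := by ring
        rw [h2]; exact dvd_sub h hns
      intro hzero
      have hone : ζ ^ (b s * ((x1 : ℤ) - a s)) = 1 := (sub_eq_zero.mp hzero).symm
      exact hnd ((keyb' s x1).mp ((hprim.zpow_eq_one_iff_dvd _).mp hone))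
    exact hT1 hT0
  -- assemble the answer
  obtain ⟨t, htS, htdvd⟩ := main ((r : ℤ) - ∑ s ∈ J, b s)
  have hdisj : Disjoint t J := by
    rw [Finset.disjoint_left]
    intro s hst hsJ
    have h1 := htS hst
    rw [Finset.mem_sdiff] at h1
    exact h1.2 (hJ hsJ)
  refine ⟨t ∪ J, ?_, ?_⟩
  · rw [Finset.union_inter_distrib_right]
    have h1 : t ∩ K = ∅ := by
      rw [Finset.eq_empty_iff_forall_notMem]
      intro s hs
      rw [Finset.mem_inter] at hs
      have h2 := htS hs.1
      rw [Finset.mem_sdiff] at h2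
      exact h2.2 hs.2
    rw [h1, Finset.inter_eq_left.mpr hJ, Finset.empty_union]
  · obtain ⟨q, hq⟩ := htdvd
    have hsumZ : (∑ s ∈ t ∪ J, b s) = (r : ℤ) + q * nk := by
      rw [Finset.sum_union hdisj]
      linarith [hq]
    have hterm : ∀ s : Fin l, (mm s : ℝ) / (n s : ℝ) = (b s : ℝ) / (nk : ℝ) := by
      intro s
      have hd : n s * (nk / n s) = nk := Nat.mul_div_cancel' (hdvdN s)
      have hdR : (n s : ℝ) * ((nk / n s : ℕ) : ℝ) = (nk : ℝ) := by exact_mod_cast hd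
      have hn0 : (n s : ℝ) ≠ 0 := by exact_mod_cast (hn s).ne'
      have hnk0 : (nk : ℝ) ≠ 0 := by exact_mod_cast hnk.ne'
      have hb : (b s : ℝ) = (mm s : ℝ) * ((nk / n s : ℕ) : ℝ) := by
        rw [hbdef]
        simp only [Int.cast_mul, Int.cast_natCast]
      rw [hb, div_eq_div_iff hn0 hnk0]
      linear_combination (-(mm s : ℝ)) * hdR
    have hsum : ∑ s ∈ t ∪ J, (mm s : ℝ) / (n s : ℝ) = (r : ℝ) / (nk : ℝ) + (q : ℤ) := by
      rw [Finset.sum_congr rfl (fun s _ => hterm s), ← Finset.sum_div]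
      have hcast : (∑ s ∈ t ∪ J, (b s : ℝ)) = ((∑ s ∈ t ∪ J, b s : ℤ) : ℝ) :=
        (Int.cast_sum _ _).symm
      rw [hcast, hsumZ]
      have hnk0 : (nk : ℝ) ≠ 0 := by exact_mod_cast hnk.ne'
      have hc2 : (((r : ℤ) + q * nk : ℤ) : ℝ) = (r : ℝ) + (q : ℝ) * (nk : ℝ) := by
        push_cast; ring
      rw [hc2, add_div, mul_div_cancel_right₀ _ hnk0]
    rw [hsum, Int.fract_add_intCast]
    refine Int.fract_eq_self.mpr ⟨by positivity, ?_⟩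
    rw [div_lt_one (by exact_mod_cast hnk)]
    exact_mod_cast hr
end

section
/- Let A_0 = {a_s(n_s)}_{s=0}^k be an m-cover of ℤ with a_0(n_0) essential, and let m_1,...,m_k be positive integers with gcd(m_s,n_s) = 1 for each s ∈ {1,...,k}. Then there exists α ∈ [0,1) such that for every r ∈ {0,1,...,n_0−1}, the set { ∑_{s∈I} m_s/n_s : I ⊆ {1,...,k} and {∑_{s∈I} m_s/n_s} = (α+r)/n_0 } has cardinality at least m. Consequently, the set { {∑_{s∈I} m_s/n_s} : I ⊆ {1,...,k} and ⌊∑_{s∈I} m_s/n_s⌋ ≥ m−1 } contains an arithmetic progression of length n_0 with common difference 1/n_0. -/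
open Polynomial Finset

-- ζ^A = ζ^B when A ≡ B mod N, given ζ^N = 1

-- Lemma A: a polynomial with ≤ t nonzero coefficients divisible by (X-1)^t is zero
lemma few_terms_zero : ∀ (t : ℕ) (p : ℂ[X]), ((X : ℂ[X]) - 1) ^ t ∣ p → p.support.card ≤ t → p = 0 := by
  intro t
  induction t with
  | zero =>
    intro p _ hc
    simpa [Finset.card_eq_zero, Polynomial.support_eq_empty] using Nat.le_zero.mp hc
  | succ t ih =>
    intro p hdvd hc
    by_contra hp
    have hsupp : p.support.Nonempty := Polynomial.nonempty_support_iff.mpr hp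
    set dm : ℕ := p.support.min' hsupp with hdm
    have hdmem : dm ∈ p.support := p.support.min'_mem hsupp
    set q : ℂ[X] := X * derivative p - C (dm : ℂ) * p with hq
    have hqdvd : ((X : ℂ[X]) - 1) ^ t ∣ q := by
      apply dvd_sub
      · exact Dvd.dvd.mul_left (by simpa using Polynomial.pow_sub_one_dvd_derivative_of_pow_dvd hdvd) X
      · exact Dvd.dvd.mul_left (dvd_trans (pow_dvd_pow _ (Nat.le_succ t)) hdvd) _
    have hqcoeff : ∀ j : ℕ, q.coeff j = p.coeff j * ((j : ℂ) - dm) := by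
      intro j
      cases j with
      | zero => simp [hq, Polynomial.mul_coeff_zero, Polynomial.coeff_C_mul]; ring
      | succ j =>
        rw [hq, Polynomial.coeff_sub, Polynomial.coeff_X_mul, Polynomial.coeff_derivative,
          Polynomial.coeff_C_mul]
        push_cast; ring
    have hqsupp : q.support ⊆ p.support.erase dm := by
      intro j hj
      have hj' : q.coeff j ≠ 0 := Polynomial.mem_support_iff.mp hj
      rw [hqcoeff j] at hj'
      rcases mul_ne_zero_iff.mp hj' with ⟨h1, h2⟩
      refine Finset.mem_erase.mpr ⟨?_, Polynomial.mem_support_iff.mpr h1⟩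
      intro hjd; apply h2; rw [hjd]; ring
    have hq0 : q = 0 := by
      apply ih q hqdvd
      calc q.support.card ≤ (p.support.erase dm).card := Finset.card_le_card hqsupp
        _ ≤ p.support.card - 1 := by rw [Finset.card_erase_of_mem hdmem]
        _ ≤ t := by omega
    -- from q = 0, support p ⊆ {dm}
    have hsub : p.support ⊆ {dm} := by
      intro j hj
      by_contra hjd
      have : q.coeff j = 0 := by rw [hq0]; simp
      rw [hqcoeff j] at this
      rcases mul_eq_zero.mp this with h | h
      · exact Polynomial.mem_support_iff.mp hj h
      · apply hjd
        have : (j : ℂ) = (dm : ℂ) := by linear_combination h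
        simpa using Finset.mem_singleton.mpr (Nat.cast_injective this)
    have hpm : p = C (p.coeff dm) * X ^ dm := by
      ext j
      rcases eq_or_ne j dm with rfl | hjd
      · simp
      · rw [Polynomial.coeff_C_mul, Polynomial.coeff_X_pow, if_neg (fun h => hjd h)]
        rw [mul_zero]
        by_contra hc0
        exact hjd (Finset.mem_singleton.mp (hsub (Polynomial.mem_support_iff.mpr hc0)))
    -- (X-1)^(t+1) divides C c * X^dm, so eval at 1 gives c = 0
    obtain ⟨u, hu⟩ := hdvd
    have := congrArg (Polynomial.eval 1) hu
    rw [hpm] at this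
    simp [Polynomial.eval_mul, Polynomial.eval_pow] at this
    exact Polynomial.mem_support_iff.mp hdmem this

lemma pow_eq_pow_mod_eq {ζ : ℂ} {N : ℕ} (h : ζ ^ N = 1) {A B : ℕ} (hAB : A % N = B % N) :
    ζ ^ A = ζ ^ B := by
  conv_lhs => rw [← Nat.div_add_mod A N]
  conv_rhs => rw [← Nat.div_add_mod B N]
  rw [pow_add, pow_add, pow_mul, h, one_pow, pow_mul, h, one_pow, hAB]

noncomputable def ppoly {k : ℕ} (N : ℕ) (d : Fin k → ℕ) (c0 : Fin k → ℂ) (θ : ℕ) : ℂ[X] :=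
  ∑ I ∈ (Finset.univ : Finset (Finset (Fin k))).filter (fun I => (∑ s ∈ I, d s) % N = θ),
    C (∏ s ∈ I, (-c0 s)) * X ^ (∑ s ∈ I, d s)

lemma ppoly_expand {k N : ℕ} (hN : 0 < N) (d : Fin k → ℕ) (c0 : Fin k → ℂ) (z : ℂ)
    (hz : z ^ N = 1) :
    (∏ s, (1 - C (c0 s * z ^ (d s)) * X ^ (d s))) =
      ∑ θ ∈ range N, C (z ^ θ) * ppoly N d c0 θ := by
  have h1 : ∀ s : Fin k, (1 : ℂ[X]) - C (c0 s * z ^ (d s)) * X ^ (d s)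
      = (-(C (c0 s * z ^ (d s)) * X ^ (d s))) + 1 := by intro s; ring
  calc (∏ s, ((1 : ℂ[X]) - C (c0 s * z ^ (d s)) * X ^ (d s)))
      = ∑ I ∈ (Finset.univ : Finset (Fin k)).powerset,
          (∏ s ∈ I, (-(C (c0 s * z ^ (d s)) * X ^ (d s)))) * ∏ s ∈ Finset.univ \ I, (1:ℂ[X]) := by
        simp_rw [h1]; exact Finset.prod_add _ _ _
    _ = ∑ I ∈ (Finset.univ : Finset (Finset (Fin k))),
          C (z ^ ((∑ s ∈ I, d s) % N)) * (C (∏ s ∈ I, (-c0 s)) * X ^ (∑ s ∈ I, d s)) := by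
        rw [Finset.powerset_univ]
        refine Finset.sum_congr rfl fun I _ => ?_
        rw [Finset.prod_const_one, mul_one]
        have : ∀ s ∈ I, (-(C (c0 s * z ^ (d s)) * X ^ (d s)))
            = C (-c0 s) * C (z ^ (d s)) * X ^ (d s) := by
          intro s _
          rw [C_mul, C_neg]; ring
        rw [Finset.prod_congr rfl this]
        rw [Finset.prod_mul_distrib, Finset.prod_mul_distrib, ← map_prod C (fun x => -c0 x),
          ← map_prod C (fun x => z ^ d x), ← Finset.prod_pow_eq_pow_sum I d X]
        have hzz : (∏ s ∈ I, z ^ d s) = z ^ ((∑ s ∈ I, d s) % N) := by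
          rw [Finset.prod_pow_eq_pow_sum]
          exact pow_eq_pow_mod_eq hz (by simp [Nat.mod_mod_of_dvd])
        rw [hzz]
        ring
    _ = ∑ θ ∈ range N, ∑ I ∈ (Finset.univ : Finset (Finset (Fin k))).filter
          (fun I => (∑ s ∈ I, d s) % N = θ),
          C (z ^ ((∑ s ∈ I, d s) % N)) * (C (∏ s ∈ I, (-c0 s)) * X ^ (∑ s ∈ I, d s)) := by
        exact (Finset.sum_fiberwise_of_maps_to (fun I _ => Finset.mem_range.mpr (Nat.mod_lt _ hN)) _).symm
    _ = ∑ θ ∈ range N, C (z ^ θ) * ppoly N d c0 θ := by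
        refine Finset.sum_congr rfl fun θ _ => ?_
        rw [ppoly, Finset.mul_sum]
        refine Finset.sum_congr rfl fun I hI => ?_
        rw [(Finset.mem_filter.mp hI).2]

lemma orth_sum {N : ℕ} (hN : 0 < N) {ζ : ℂ} (hζ : IsPrimitiveRoot ζ N) (f : ℕ → ℂ[X])
    {u : ℕ} (hu : u < N) :
    ∑ x ∈ range N, C (ζ ^ (x * (N - u))) * (∑ θ ∈ range N, C (ζ ^ (x * θ)) * f θ)
      = C (N : ℂ) * f u := by
  have hζN : ζ ^ N = 1 := hζ.pow_eq_one
  have step1 : ∀ x, C (ζ ^ (x * (N - u))) * (∑ θ ∈ range N, C (ζ ^ (x * θ)) * f θ)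
      = ∑ θ ∈ range N, C ((ζ ^ (N - u + θ)) ^ x) * f θ := by
    intro x
    rw [Finset.mul_sum]
    refine Finset.sum_congr rfl fun θ _ => ?_
    rw [← mul_assoc, ← C_mul, ← pow_add, ← pow_mul]
    congr 2
    ring
  simp_rw [step1]
  rw [Finset.sum_comm]
  have step2 : ∀ θ ∈ range N, (∑ x ∈ range N, C ((ζ ^ (N - u + θ)) ^ x) * f θ)
      = (if θ = u then C (N : ℂ) * f u else 0) := by
    intro θ hθ
    have hθN := Finset.mem_range.mp hθ
    rw [← Finset.sum_mul, ← map_sum C]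
    rcases eq_or_ne θ u with heq | hne
    · subst heq
      rw [if_pos rfl]
      congr 1
      have h1 : N - θ + θ = N := by omega
      rw [h1, hζN]
      simp
    · rw [if_neg hne]
      have hw : ζ ^ (N - u + θ) ≠ 1 := by
        intro h1
        rw [hζ.pow_eq_one_iff_dvd] at h1
        rcases Nat.lt_or_ge (N - u + θ) N with h | h
        · have := Nat.eq_zero_of_dvd_of_lt h1 h
          omega
        · have h2 : N - u + θ < 2 * N := by omega
          have h3 : N - u + θ = N := by
            rcases h1 with ⟨c, hc⟩
            have hc1 : c = 1 := by nlinarith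
            rw [hc1, mul_one] at hc
            omega
          omega
      rw [geom_sum_eq hw, ← pow_mul, mul_comm (N - u + θ) N, pow_mul, hζN, one_pow]
      simp
  rw [Finset.sum_congr rfl step2, Finset.sum_ite_eq' (range N) u, if_pos (Finset.mem_range.mpr hu)]
open Complex in

lemma char_iff (nn N : ℕ) (hnn : 0 < nn) (hN : 0 < N) (hdvd : nn ∣ N)
    (mmm aa : ℤ) (hmpos : 0 < mmm) (hcop : IsCoprime mmm (nn : ℤ))
    (dd : ℕ) (hdd : dd = (N / nn) * mmm.toNat) (x : ℕ) :
    (Complex.exp (2 * Real.pi * (-((mmm : ℝ) * (aa : ℝ)) / (nn : ℝ)) * Complex.I) *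
        Complex.exp (2 * Real.pi * Complex.I / (N : ℂ)) ^ (x * dd) = 1)
      ↔ ((nn : ℤ) ∣ (x : ℤ) - aa) := by
  have hnnR : (nn : ℝ) ≠ 0 := Nat.cast_ne_zero.mpr hnn.ne'
  have hNR : (N : ℝ) ≠ 0 := Nat.cast_ne_zero.mpr hN.ne'
  have hddZ : (dd : ℤ) * nn = mmm * N := by
    have h1 : (dd : ℤ) = (N / nn : ℕ) * mmm := by
      rw [hdd]; push_cast [Int.toNat_of_nonneg hmpos.le]; ring
    rw [h1]
    have h2 : ((N / nn : ℕ) : ℤ) * nn = N := by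
      exact_mod_cast congrArg (Nat.cast : ℕ → ℤ) (Nat.div_mul_cancel hdvd)
    calc ((N / nn : ℕ) : ℤ) * mmm * nn = ((N / nn : ℕ) : ℤ) * nn * mmm := by ring
      _ = mmm * N := by rw [h2]; ring
  have hddR : (dd : ℝ) * nn = (mmm : ℝ) * N := by exact_mod_cast hddZ
  have hdR : (dd : ℝ) / N = (mmm : ℝ) / nn := by
    rw [div_eq_div_iff hNR hnnR]; linarith
  -- combine exponentials
  have hpow : Complex.exp (2 * Real.pi * Complex.I / (N : ℂ)) ^ (x * dd)
      = Complex.exp (((x * dd : ℕ) : ℂ) * (2 * Real.pi * Complex.I / (N : ℂ))) := by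
    rw [Complex.exp_nat_mul]
  have hcomb : Complex.exp (2 * Real.pi * (-((mmm : ℝ) * (aa : ℝ)) / (nn : ℝ)) * Complex.I) *
      Complex.exp (2 * Real.pi * Complex.I / (N : ℂ)) ^ (x * dd)
      = Complex.exp (2 * Real.pi * (((mmm : ℝ) * ((x : ℝ) - (aa : ℝ))) / (nn : ℝ)) * Complex.I) := by
    rw [hpow, ← Complex.exp_add]
    congr 1
    have hddC : (dd : ℂ) * nn = (mmm : ℂ) * N := by exact_mod_cast hddZ
    have hnnC : (nn : ℂ) ≠ 0 := Nat.cast_ne_zero.mpr hnn.ne'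
    have hNC : (N : ℂ) ≠ 0 := Nat.cast_ne_zero.mpr hN.ne'
    push_cast
    field_simp
    ring_nf
    linear_combination (x:ℂ) * hddC
  rw [hcomb, Complex.exp_eq_one_iff]
  have h2pI : (2 : ℂ) * Real.pi * Complex.I ≠ 0 := by
    simp [Real.pi_ne_zero, Complex.I_ne_zero]
  have hnnC : (nn : ℂ) ≠ 0 := Nat.cast_ne_zero.mpr hnn.ne'
  constructor
  · rintro ⟨j, hj⟩
    have hT : (mmm : ℂ) * ((x : ℂ) - (aa : ℂ)) / (nn : ℂ) = (j : ℂ) := by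
      apply mul_right_cancel₀ h2pI
      push_cast at hj ⊢
      linear_combination hj
    have hZ : mmm * ((x : ℤ) - aa) = j * nn := by
      field_simp at hT
      rw [mul_comm j]
      exact_mod_cast hT
    have hnn_dvd : (nn : ℤ) ∣ mmm * ((x : ℤ) - aa) := ⟨j, by linarith⟩
    exact hcop.symm.dvd_of_dvd_mul_left hnn_dvd
  · rintro ⟨c, hc⟩
    refine ⟨mmm * c, ?_⟩
    have hcC : (x : ℂ) - (aa : ℂ) = (nn : ℂ) * (c : ℂ) := by exact_mod_cast hc
    push_cast
    field_simp
    linear_combination (mmm : ℂ) * hcC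
/-- **Theorem of [S99]** (see Remark 2.1): Let `A₀ = {a_s(n_s)}_{s=0}^k` be an `m`-cover
of `ℤ` with `a₀(n₀)` essential, and let `m₁,…,m_k` be positive integers coprime to
`n₁,…,n_k` respectively.  Then for some `α ∈ [0,1)`, for every `0 ≤ r < n₀` the set
`{∑_{s∈I} m_s/n_s : I ⊆ [1,k], {∑_{s∈I} m_s/n_s} = (α+r)/n₀}` has at least `m` elements;
consequently `{{∑_{s∈I} m_s/n_s} : I ⊆ [1,k], ⌊∑_{s∈I} m_s/n_s⌋ ≥ m-1}` contains an
arithmetic progression of length `n₀` with common difference `1/n₀`. -/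
theorem sun_S99 (k m : ℕ) (a0 : ℤ) (n0 : ℕ) (hn0 : 0 < n0)
    (a : Fin k → ℤ) (n : Fin k → ℕ) (hn : ∀ s, 0 < n s)
    -- `{a_s(n_s)}_{s=0}^k` is an `m`-cover of `ℤ`:
    (hcover : ∀ x : ℤ, m ≤
      (Finset.univ.filter (fun s : Fin k => (n s : ℤ) ∣ x - a s)).card
        + (if (n0 : ℤ) ∣ x - a0 then 1 else 0))
    -- with `a₀(n₀)` essential:
    (hess : ¬ ∀ x : ℤ, m ≤
      (Finset.univ.filter (fun s : Fin k => (n s : ℤ) ∣ x - a s)).card)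
    (mm : Fin k → ℤ) (hpos : ∀ s, 0 < mm s) (hmm : ∀ s, IsCoprime (mm s) (n s : ℤ)) :
    ∃ α : ℝ, 0 ≤ α ∧ α < 1 ∧ ∀ r : ℕ, r < n0 →
      (m ≤ Set.ncard { t : ℝ | ∃ I : Finset (Fin k),
          t = ∑ s ∈ I, (mm s : ℝ) / (n s : ℝ) ∧
          Int.fract (∑ s ∈ I, (mm s : ℝ) / (n s : ℝ)) = (α + r) / (n0 : ℝ) }) ∧
      (∃ I : Finset (Fin k),
        (m : ℤ) - 1 ≤ ⌊∑ s ∈ I, (mm s : ℝ) / (n s : ℝ)⌋ ∧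
        Int.fract (∑ s ∈ I, (mm s : ℝ) / (n s : ℝ)) = (α + r) / (n0 : ℝ)) := by
  classical
  push_neg at hess
  obtain ⟨x₀, hx₀⟩ := hess
  have hm1 : 1 ≤ m := by omega
  -- the common modulus ------------------------------------------------------
  set N : ℕ := n0 * ∏ s, n s with hNdef
  have hNpos : 0 < N := Nat.mul_pos hn0 (Finset.prod_pos (fun s _ => hn s))
  have hn0N : n0 ∣ N := Dvd.intro _ rfl
  have hnsN : ∀ s, n s ∣ N := fun s =>
    Dvd.dvd.mul_left (Finset.dvd_prod_of_mem n (Finset.mem_univ s)) n0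
  set d : Fin k → ℕ := fun s => (N / n s) * (mm s).toNat with hddef
  set d0 : ℕ := N / n0 with hd0def
  have hNd0 : N = n0 * d0 := (Nat.mul_div_cancel' hn0N).symm
  have hd0pos : 0 < d0 := Nat.div_pos (Nat.le_of_dvd hNpos hn0N) hn0
  have hd0N : d0 ≤ N := Nat.div_le_self N n0
  have hdpos : ∀ s, 0 < d s := by
    intro s
    apply Nat.mul_pos (Nat.div_pos (Nat.le_of_dvd hNpos (hnsN s)) (hn s))
    simpa using hpos s
  -- ζ and the coefficients ---------------------------------------------------
  set ζ : ℂ := Complex.exp (2 * Real.pi * Complex.I / N) with hζdef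
  have hζ : IsPrimitiveRoot ζ N := Complex.isPrimitiveRoot_exp N hNpos.ne'
  have hζN : ζ ^ N = 1 := hζ.pow_eq_one
  set c0 : Fin k → ℂ :=
    fun s => Complex.exp (2 * Real.pi * (-((mm s : ℝ) * (a s : ℝ)) / (n s : ℝ)) * Complex.I)
    with hc0def
  set cg0 : ℂ := Complex.exp (2 * Real.pi * (-(((1 : ℤ) : ℝ) * (a0 : ℝ)) / (n0 : ℝ)) * Complex.I)
    with hcg0def
  have hchar : ∀ (x : ℕ) (s : Fin k),
      (c0 s * ζ ^ (x * d s) = 1) ↔ ((n s : ℤ) ∣ (x : ℤ) - a s) := by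
    intro x s
    exact char_iff (n s) N (hn s) hNpos (hnsN s) (mm s) (a s) (hpos s) (hmm s) (d s) rfl x
  have hchar0 : ∀ x : ℕ, (cg0 * ζ ^ (x * d0) = 1) ↔ ((n0 : ℤ) ∣ (x : ℤ) - a0) := by
    intro x
    rw [hcg0def]
    exact char_iff n0 N hn0 hNpos hn0N 1 a0 one_pos isCoprime_one_left d0 (by simp [hd0def]) x
  -- the product polynomials --------------------------------------------------
  set G : ℕ → Polynomial ℂ :=
    fun x => ∏ s, (1 - Polynomial.C (c0 s * ζ ^ (x * d s)) * Polynomial.X ^ (d s)) with hGdef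
  set P : ℕ → Polynomial ℂ := ppoly N d c0 with hPdef
  have hexp : ∀ x : ℕ, G x = ∑ θ ∈ Finset.range N, Polynomial.C (ζ ^ (x * θ)) * P θ := by
    intro x
    have hzN : (ζ ^ x) ^ N = 1 := by rw [← pow_mul, mul_comm, pow_mul, hζN, one_pow]
    have h := ppoly_expand hNpos d c0 (ζ ^ x) hzN
    simp only [← pow_mul] at h
    rw [hGdef, hPdef]
    exact h
  have F1' : ∀ x : ℕ,
      ((Polynomial.X : Polynomial ℂ) - 1) ^
        ((Finset.univ.filter (fun s : Fin k => (n s : ℤ) ∣ (x : ℤ) - a s)).card) ∣ G x := by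
    intro x
    set F := Finset.univ.filter (fun s : Fin k => (n s : ℤ) ∣ (x : ℤ) - a s) with hF
    have h1 : ((Polynomial.X : Polynomial ℂ) - 1) ^ F.card
        ∣ ∏ s ∈ F, (1 - Polynomial.C (c0 s * ζ ^ (x * d s)) * Polynomial.X ^ (d s)) := by
      rw [← Finset.prod_const]
      apply Finset.prod_dvd_prod_of_dvd
      intro s hs
      have hc1 : c0 s * ζ ^ (x * d s) = 1 :=
        (hchar x s).mpr (Finset.mem_filter.mp hs).2
      rw [hc1, map_one, one_mul]
      exact ⟨-(∑ i ∈ Finset.range (d s), Polynomial.X ^ i), by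
        have := geom_sum_mul (Polynomial.X : Polynomial ℂ) (d s)
        linear_combination this⟩
    refine h1.trans ?_
    calc ∏ s ∈ F, (1 - Polynomial.C (c0 s * ζ ^ (x * d s)) * Polynomial.X ^ (d s))
        ∣ (∏ s ∈ F, (1 - Polynomial.C (c0 s * ζ ^ (x * d s)) * Polynomial.X ^ (d s))) *
          ∏ s ∈ Finset.univ.filter (fun s : Fin k => ¬ ((n s : ℤ) ∣ (x : ℤ) - a s)),
            (1 - Polynomial.C (c0 s * ζ ^ (x * d s)) * Polynomial.X ^ (d s)) :=
          dvd_mul_right _ _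
      _ = G x := Finset.prod_filter_mul_prod_filter_not Finset.univ _ _
  have F1 : ∀ x : ℕ, ((Polynomial.X : Polynomial ℂ) - 1) ^ (m - 1) ∣ G x := by
    intro x
    refine dvd_trans (pow_dvd_pow _ ?_) (F1' x)
    have := hcover (x : ℤ)
    have hite : (if (n0 : ℤ) ∣ (x:ℤ) - a0 then 1 else 0) ≤ 1 := by split <;> omega
    omega
  have F2 : ∀ x : ℕ, ((Polynomial.X : Polynomial ℂ) - 1) ^ m ∣
      (1 - Polynomial.C (cg0 * ζ ^ (x * d0)) * Polynomial.X ^ d0) * G x := by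
    intro x
    by_cases h0 : (n0 : ℤ) ∣ (x : ℤ) - a0
    · have hc1 : cg0 * ζ ^ (x * d0) = 1 := (hchar0 x).mpr h0
      have hx1 : ((Polynomial.X : Polynomial ℂ) - 1)
          ∣ (1 - Polynomial.C (cg0 * ζ ^ (x * d0)) * Polynomial.X ^ d0) := by
        rw [hc1, map_one, one_mul]
        exact ⟨-(∑ i ∈ Finset.range d0, Polynomial.X ^ i), by
          have := geom_sum_mul (Polynomial.X : Polynomial ℂ) d0
          linear_combination this⟩
      have hm' : m = 1 + (m - 1) := by omega
      rw [hm', pow_add, pow_one]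
      exact mul_dvd_mul hx1 (F1 x)
    · have hcnt : m ≤ (Finset.univ.filter (fun s : Fin k => (n s : ℤ) ∣ (x : ℤ) - a s)).card := by
        have := hcover (x : ℤ)
        rw [if_neg h0] at this
        omega
      exact Dvd.dvd.mul_left (dvd_trans (pow_dvd_pow _ hcnt) (F1' x)) _
  have claimO : ∀ u : ℕ, u < N → ((Polynomial.X : Polynomial ℂ) - 1) ^ (m - 1) ∣ P u := by
    intro u hu
    have horth := orth_sum hNpos hζ P hu
    have hL : ∀ x ∈ Finset.range N,
        Polynomial.C (ζ ^ (x * (N - u))) * (∑ θ ∈ Finset.range N, Polynomial.C (ζ ^ (x * θ)) * P θ)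
          = Polynomial.C (ζ ^ (x * (N - u))) * G x := fun x _ => by rw [hexp x]
    rw [Finset.sum_congr rfl hL] at horth
    have hdvd : ((Polynomial.X : Polynomial ℂ) - 1) ^ (m - 1) ∣ Polynomial.C (N : ℂ) * P u := by
      rw [← horth]
      exact Finset.dvd_sum fun x _ => Dvd.dvd.mul_left (F1 x) _
    have hNne : (N : ℂ) ≠ 0 := Nat.cast_ne_zero.mpr hNpos.ne'
    have hPu : P u = Polynomial.C ((N : ℂ))⁻¹ * (Polynomial.C (N : ℂ) * P u) := by
      rw [← mul_assoc, ← map_mul, inv_mul_cancel₀ hNne, map_one, one_mul]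
    rw [hPu]
    exact Dvd.dvd.mul_left hdvd _
  have claimS : ∀ θ : ℕ, θ < N → ¬ ((Polynomial.X : Polynomial ℂ) - 1) ^ m ∣ P θ →
      ¬ ((Polynomial.X : Polynomial ℂ) - 1) ^ m ∣ P ((θ + d0) % N) := by
    intro θ hθ hnd hdvd'
    set θ' : ℕ := (θ + d0) % N with hθ'def
    have hθ'N : θ' < N := Nat.mod_lt _ hNpos
    have hmod : (N - θ' + d0) % N = (N - θ) % N := by
      have e1 : N - θ' + d0 + (θ + θ') = N + (d0 + θ) := by omega
      have e2 : N - θ + (θ + θ') = N + θ' := by omega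
      have e3 : (N + (d0 + θ)) % N = (N + θ') % N := by
        rw [Nat.add_mod_left, Nat.add_mod_left]
        calc (d0 + θ) % N = (θ + d0) % N := by rw [Nat.add_comm]
          _ = θ' := hθ'def.symm
          _ = θ' % N := (Nat.mod_eq_of_lt hθ'N).symm
      have e4 : (N - θ' + d0 + (θ + θ')) % N = (N - θ + (θ + θ')) % N := by
        rw [e1, e2]; exact e3
      exact Nat.ModEq.add_right_cancel' (θ + θ') e4
    have hzeta : ∀ x : ℕ, ζ ^ (x * (N - θ')) * ζ ^ (x * d0) = ζ ^ (x * (N - θ)) := by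
      intro x
      rw [← pow_add, ← Nat.mul_add]
      exact pow_eq_pow_mod_eq hζN (Nat.ModEq.mul_left x hmod)
    have hident : ∑ x ∈ Finset.range N, Polynomial.C (ζ ^ (x * (N - θ'))) *
        ((1 - Polynomial.C (cg0 * ζ ^ (x * d0)) * Polynomial.X ^ d0) * G x)
        = Polynomial.C (N : ℂ) * P θ' -
          Polynomial.C cg0 * Polynomial.X ^ d0 * (Polynomial.C (N : ℂ) * P θ) := by
      have hx : ∀ x ∈ Finset.range N,
          Polynomial.C (ζ ^ (x * (N - θ'))) *
            ((1 - Polynomial.C (cg0 * ζ ^ (x * d0)) * Polynomial.X ^ d0) * G x)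
          = Polynomial.C (ζ ^ (x * (N - θ'))) * G x -
              Polynomial.C cg0 * Polynomial.X ^ d0 * (Polynomial.C (ζ ^ (x * (N - θ))) * G x) := by
        intro x _
        rw [← hzeta x, Polynomial.C_mul, Polynomial.C_mul]
        ring
      rw [Finset.sum_congr rfl hx, Finset.sum_sub_distrib]
      have h1 : ∑ x ∈ Finset.range N, Polynomial.C (ζ ^ (x * (N - θ'))) * G x
          = Polynomial.C (N : ℂ) * P θ' := by
        have horth := orth_sum hNpos hζ P hθ'N
        have hL : ∀ x ∈ Finset.range N,
            Polynomial.C (ζ ^ (x * (N - θ'))) *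
              (∑ u ∈ Finset.range N, Polynomial.C (ζ ^ (x * u)) * P u)
            = Polynomial.C (ζ ^ (x * (N - θ'))) * G x := fun x _ => by rw [hexp x]
        rwa [Finset.sum_congr rfl hL] at horth
      have h2 : ∑ x ∈ Finset.range N,
          Polynomial.C cg0 * Polynomial.X ^ d0 * (Polynomial.C (ζ ^ (x * (N - θ))) * G x)
          = Polynomial.C cg0 * Polynomial.X ^ d0 * (Polynomial.C (N : ℂ) * P θ) := by
        rw [← Finset.mul_sum]
        congr 1
        have horth := orth_sum hNpos hζ P hθ
        have hL : ∀ x ∈ Finset.range N,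
            Polynomial.C (ζ ^ (x * (N - θ))) *
              (∑ u ∈ Finset.range N, Polynomial.C (ζ ^ (x * u)) * P u)
            = Polynomial.C (ζ ^ (x * (N - θ))) * G x := fun x _ => by rw [hexp x]
        rwa [Finset.sum_congr rfl hL] at horth
      rw [h1, h2]
    have hLdvd : ((Polynomial.X : Polynomial ℂ) - 1) ^ m ∣
        Polynomial.C (N : ℂ) * P θ' -
          Polynomial.C cg0 * Polynomial.X ^ d0 * (Polynomial.C (N : ℂ) * P θ) := by
      rw [← hident]
      exact Finset.dvd_sum fun x _ => Dvd.dvd.mul_left (F2 x) _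
    have hdvd2 : ((Polynomial.X : Polynomial ℂ) - 1) ^ m ∣
        Polynomial.C cg0 * Polynomial.X ^ d0 * (Polynomial.C (N : ℂ) * P θ) := by
      have hsub := dvd_sub (Dvd.dvd.mul_left hdvd' (Polynomial.C (N : ℂ))) hLdvd
      rwa [show Polynomial.C (N : ℂ) * P θ' - (Polynomial.C (N : ℂ) * P θ' -
        Polynomial.C cg0 * Polynomial.X ^ d0 * (Polynomial.C (N : ℂ) * P θ))
        = Polynomial.C cg0 * Polynomial.X ^ d0 * (Polynomial.C (N : ℂ) * P θ) by ring] at hsub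
    have hcg0ne : cg0 ≠ 0 := by rw [hcg0def]; exact Complex.exp_ne_zero _
    have hNne : (N : ℂ) ≠ 0 := Nat.cast_ne_zero.mpr hNpos.ne'
    have hcC : ∀ c : ℂ, c ≠ 0 → IsCoprime ((Polynomial.X : Polynomial ℂ) - 1) (Polynomial.C c) :=
      fun c hc => ⟨0, Polynomial.C c⁻¹, by
        rw [zero_mul, zero_add, ← Polynomial.C_mul, inv_mul_cancel₀ hc, Polynomial.C_1]⟩
    have hcX : IsCoprime ((Polynomial.X : Polynomial ℂ) - 1) (Polynomial.X : Polynomial ℂ) :=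
      ⟨-1, 1, by ring⟩
    have hcop : IsCoprime (((Polynomial.X : Polynomial ℂ) - 1) ^ m)
        (Polynomial.C cg0 * Polynomial.X ^ d0 * Polynomial.C (N : ℂ)) :=
      (((hcC cg0 hcg0ne).mul_right (hcX.pow_right (n := d0))).mul_right (hcC _ hNne)).pow_left
    have hPθ : ((Polynomial.X : Polynomial ℂ) - 1) ^ m ∣ P θ := by
      apply hcop.dvd_of_dvd_mul_left
      rwa [show Polynomial.C cg0 * Polynomial.X ^ d0 * Polynomial.C (N : ℂ) * P θ
        = Polynomial.C cg0 * Polynomial.X ^ d0 * (Polynomial.C (N : ℂ) * P θ) by ring]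
    exact hnd hPθ
  -- the essential point
  set x1 : ℕ := (x₀ % N).toNat with hx1def
  have hx1Z : ((x1 : ℕ) : ℤ) = x₀ % N :=
    Int.toNat_of_nonneg (Int.emod_nonneg x₀ (by exact_mod_cast hNpos.ne'))
  have hx1diff : ∀ nn : ℕ, nn ∣ N → (nn : ℤ) ∣ (x1 : ℤ) - x₀ := by
    intro nn hnn
    have h1 : (N : ℤ) ∣ (x1 : ℤ) - x₀ := by
      rw [hx1Z, Int.emod_def]
      exact ⟨-(x₀ / N), by ring⟩
    exact dvd_trans (Int.natCast_dvd_natCast.mpr hnn) h1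
  have hx1iff : ∀ (nn : ℕ) (aa : ℤ), nn ∣ N → ((nn : ℤ) ∣ (x1 : ℤ) - aa ↔ (nn : ℤ) ∣ x₀ - aa) := by
    intro nn aa hnn
    constructor
    · intro h
      have h2 := dvd_sub h (hx1diff nn hnn)
      rwa [show (x1 : ℤ) - aa - ((x1 : ℤ) - x₀) = x₀ - aa by ring] at h2
    · intro h
      have h2 := dvd_add h (hx1diff nn hnn)
      rwa [show x₀ - aa + ((x1 : ℤ) - x₀) = (x1 : ℤ) - aa by ring] at h2
  have hfiltereq : Finset.univ.filter (fun s : Fin k => (n s : ℤ) ∣ (x1 : ℤ) - a s)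
      = Finset.univ.filter (fun s : Fin k => (n s : ℤ) ∣ x₀ - a s) :=
    Finset.filter_congr (fun s _ => by rw [hx1iff (n s) (a s) (hnsN s)])
  have hcnt1 : (Finset.univ.filter (fun s : Fin k => (n s : ℤ) ∣ (x1 : ℤ) - a s)).card = m - 1 := by
    rw [hfiltereq]
    have h1 := hcover x₀
    have h2 : (if (n0 : ℤ) ∣ x₀ - a0 then 1 else 0) ≤ 1 := by split <;> omega
    omega
  have hx1A : ¬ ((Polynomial.X : Polynomial ℂ) - 1) ^ m ∣ G x1 := by
    intro hdvd
    set F : Finset (Fin k) := Finset.univ.filter (fun s : Fin k => (n s : ℤ) ∣ (x1 : ℤ) - a s)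
      with hFdef
    set R : Polynomial ℂ :=
      (∏ s ∈ F, (-(∑ i ∈ Finset.range (d s), Polynomial.X ^ i))) *
        ∏ s ∈ Finset.univ.filter (fun s : Fin k => ¬ ((n s : ℤ) ∣ (x1 : ℤ) - a s)),
          (1 - Polynomial.C (c0 s * ζ ^ (x1 * d s)) * Polynomial.X ^ (d s)) with hRdef
    have hper : ∀ s ∈ F, (1 - Polynomial.C (c0 s * ζ ^ (x1 * d s)) * Polynomial.X ^ (d s))
        = ((Polynomial.X : Polynomial ℂ) - 1) * (-(∑ i ∈ Finset.range (d s), Polynomial.X ^ i)) := by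
      intro s hs
      have hc1 : c0 s * ζ ^ (x1 * d s) = 1 := (hchar x1 s).mpr (Finset.mem_filter.mp hs).2
      rw [hc1, map_one, one_mul]
      have := geom_sum_mul (Polynomial.X : Polynomial ℂ) (d s)
      linear_combination this
    have hGR : G x1 = ((Polynomial.X : Polynomial ℂ) - 1) ^ (m - 1) * R := by
      have hsplit := Finset.prod_filter_mul_prod_filter_not Finset.univ
        (fun s : Fin k => (n s : ℤ) ∣ (x1 : ℤ) - a s)
        (fun s => 1 - Polynomial.C (c0 s * ζ ^ (x1 * d s)) * Polynomial.X ^ (d s))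
      rw [hGdef]
      simp only []
      rw [← hsplit, Finset.prod_congr rfl hper, Finset.prod_mul_distrib, Finset.prod_const, hcnt1,
        hRdef]
      ring
    have hX1R : (Polynomial.X : Polynomial ℂ) - 1 ∣ R := by
      have h0 : ((Polynomial.X : Polynomial ℂ) - 1) ^ (m - 1) ≠ 0 := by
        apply pow_ne_zero
        intro hc
        have := congrArg (Polynomial.eval 0) hc
        simp at this
      rw [hGR, show m = (m - 1) + 1 from by omega, pow_succ] at hdvd
      exact (mul_dvd_mul_iff_left h0).mp hdvd
    obtain ⟨u, hu⟩ := hX1R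
    have hev := congrArg (Polynomial.eval 1) hu
    have hevR : Polynomial.eval 1 R =
        (∏ s ∈ F, (-(d s : ℂ))) *
          ∏ s ∈ Finset.univ.filter (fun s : Fin k => ¬ ((n s : ℤ) ∣ (x1 : ℤ) - a s)),
            (1 - c0 s * ζ ^ (x1 * d s)) := by
      rw [hRdef]
      simp [Polynomial.eval_prod, Polynomial.eval_finset_sum]
    have hevne : Polynomial.eval 1 R ≠ 0 := by
      rw [hevR]
      apply mul_ne_zero
      · apply Finset.prod_ne_zero_iff.mpr
        intro s _
        simp only [neg_ne_zero, Nat.cast_ne_zero]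
        exact (hdpos s).ne'
      · apply Finset.prod_ne_zero_iff.mpr
        intro s hs
        have : c0 s * ζ ^ (x1 * d s) ≠ 1 := by
          intro hc
          exact (Finset.mem_filter.mp hs).2 ((hchar x1 s).mp hc)
        exact sub_ne_zero.mpr (Ne.symm this)
    apply hevne
    rw [hev]
    simp
  have claimE : ∃ θ : ℕ, θ < N ∧ ¬ ((Polynomial.X : Polynomial ℂ) - 1) ^ m ∣ P θ := by
    by_contra hno
    push_neg at hno
    apply hx1A
    rw [hexp x1]
    exact Finset.dvd_sum fun θ hθ => Dvd.dvd.mul_left (hno θ (Finset.mem_range.mp hθ)) _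
  -- the chain ----------------------------------------------------------------
  obtain ⟨θs, hθsN, hθs⟩ := claimE
  have chain : ∀ j : ℕ, ¬ ((Polynomial.X : Polynomial ℂ) - 1) ^ m ∣ P ((θs + j * d0) % N) := by
    intro j
    induction j with
    | zero => simpa [Nat.mod_eq_of_lt hθsN] using hθs
    | succ j ih =>
      have hv : (θs + j * d0) % N < N := Nat.mod_lt _ hNpos
      have := claimS _ hv ih
      have heq : ((θs + j * d0) % N + d0) % N = (θs + (j + 1) * d0) % N := by
        rw [Nat.mod_add_mod]
        congr 1
        ring
      rwa [heq] at this
  set ρ : ℕ := θs % d0 with hρdef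
  set q : ℕ := θs / d0 with hqdef
  have hρd0 : ρ < d0 := Nat.mod_lt _ hd0pos
  have hq : q < n0 := by
    rw [hqdef]
    rw [Nat.div_lt_iff_lt_mul hd0pos]
    calc θs < N := hθsN
      _ = n0 * d0 := hNd0
  have hθr : ∀ r : ℕ, r < n0 → ¬ ((Polynomial.X : Polynomial ℂ) - 1) ^ m ∣ P (ρ + r * d0) := by
    intro r hr
    have hθrN : ρ + r * d0 < N := by
      calc ρ + r * d0 < d0 + r * d0 := by omega
        _ = (r + 1) * d0 := by ring
        _ ≤ n0 * d0 := mul_le_mul_left (by omega) d0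
        _ = N := hNd0.symm
    have hj : q + (n0 + r - q) = n0 + r := by omega
    have key : (θs + (n0 + r - q) * d0) % N = ρ + r * d0 := by
      have h1 : d0 * q + ρ = θs := Nat.div_add_mod θs d0
      have h2 : θs + (n0 + r - q) * d0 = N + (ρ + r * d0) := by
        calc θs + (n0 + r - q) * d0 = d0 * q + ρ + (n0 + r - q) * d0 := by rw [h1]
          _ = d0 * (q + (n0 + r - q)) + ρ := by ring
          _ = d0 * (n0 + r) + ρ := by rw [hj]
          _ = n0 * d0 + (ρ + r * d0) := by ring
          _ = N + (ρ + r * d0) := by rw [hNd0]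
      rw [h2, Nat.add_mod_left, Nat.mod_eq_of_lt hθrN]
    have := chain (n0 + r - q)
    rwa [key] at this
  -- the final conclusion -----------------------------------------------------
  refine ⟨(ρ : ℝ) / (d0 : ℝ), by positivity, ?_, ?_⟩
  · rw [div_lt_one (by exact_mod_cast hd0pos)]
    exact_mod_cast hρd0
  intro r hr
  -- auxiliary numeric facts
  have hNR : (N : ℝ) ≠ 0 := Nat.cast_ne_zero.mpr hNpos.ne'
  have hdsN : ∀ s : Fin k, (mm s : ℝ) / (n s : ℝ) = (d s : ℝ) / (N : ℝ) := by
    intro s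
    have h1 : (d s : ℤ) = ((N / n s : ℕ) : ℤ) * mm s := by
      rw [hddef]; push_cast [Int.toNat_of_nonneg (hpos s).le]; ring
    have h2 : ((N / n s : ℕ) : ℤ) * (n s) = N := by
      exact_mod_cast congrArg (Nat.cast : ℕ → ℤ) (Nat.div_mul_cancel (hnsN s))
    have h3 : (d s : ℤ) * (n s) = mm s * N := by
      rw [h1]
      calc ((N / n s : ℕ) : ℤ) * mm s * n s = ((N / n s : ℕ) : ℤ) * n s * mm s := by ring
        _ = mm s * N := by rw [h2]; ring
    have h4 : (d s : ℝ) * (n s : ℝ) = (mm s : ℝ) * (N : ℝ) := by exact_mod_cast h3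
    have hnsR : (n s : ℝ) ≠ 0 := Nat.cast_ne_zero.mpr (hn s).ne'
    rw [div_eq_div_iff hnsR hNR]
    linarith
  have hsumI : ∀ I : Finset (Fin k),
      ∑ s ∈ I, (mm s : ℝ) / (n s : ℝ) = ((∑ s ∈ I, d s : ℕ) : ℝ) / (N : ℝ) := by
    intro I
    rw [Finset.sum_congr rfl (fun s _ => hdsN s)]
    push_cast
    rw [Finset.sum_div]
  have hsplitE : ∀ E : ℕ, (E : ℝ) / N = ((E / N : ℕ) : ℝ) + ((E % N : ℕ) : ℝ) / N := by
    intro E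
    have hqr : E = N * (E / N) + E % N := (Nat.div_add_mod E N).symm
    have h2 : (E : ℝ) = (N : ℝ) * ((E / N : ℕ) : ℝ) + ((E % N : ℕ) : ℝ) := by exact_mod_cast hqr
    field_simp [h2]
    linear_combination h2
  have hmodfr : ∀ E : ℕ, 0 ≤ ((E % N : ℕ) : ℝ) / N ∧ ((E % N : ℕ) : ℝ) / N < 1 := by
    intro E
    constructor
    · positivity
    · rw [div_lt_one (by positivity)]
      exact_mod_cast Nat.mod_lt E hNpos
  have hfract : ∀ E : ℕ, Int.fract ((E : ℝ) / N) = ((E % N : ℕ) : ℝ) / N := by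
    intro E
    rw [hsplitE E, add_comm, Int.fract_add_natCast, Int.fract_eq_self.mpr (hmodfr E)]
  have hfloor : ∀ E : ℕ, ⌊(E : ℝ) / N⌋ = ((E / N : ℕ) : ℤ) := by
    intro E
    rw [hsplitE E, add_comm, Int.floor_add_natCast, Int.floor_eq_zero_iff.mpr
      (Set.mem_Ico.mpr (hmodfr E)), zero_add]
  have hθrN : ρ + r * d0 < N := by
    calc ρ + r * d0 < d0 + r * d0 := by omega
      _ = (r + 1) * d0 := by ring
      _ ≤ n0 * d0 := mul_le_mul_left (by omega) d0
      _ = N := hNd0.symm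
  set θr : ℕ := ρ + r * d0 with hθrdef
  have hnd := hθr r hr
  have hαr : (((ρ : ℝ) / (d0 : ℝ)) + (r : ℝ)) / (n0 : ℝ) = ((θr : ℕ) : ℝ) / (N : ℝ) := by
    have hd0R : (d0 : ℝ) ≠ 0 := Nat.cast_ne_zero.mpr hd0pos.ne'
    have hn0R : (n0 : ℝ) ≠ 0 := Nat.cast_ne_zero.mpr hn0.ne'
    have hNR' : (N : ℝ) = (n0 : ℝ) * (d0 : ℝ) := by exact_mod_cast congrArg (Nat.cast : ℕ → ℝ) hNd0
    rw [hθrdef, hNR']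
    push_cast
    rw [div_add' _ _ _ hd0R, div_div, mul_comm (d0 : ℝ) (n0 : ℝ)]
  set Sfin : Finset ℕ := Finset.image (fun I : Finset (Fin k) => ∑ s ∈ I, d s)
    (Finset.univ.filter (fun I : Finset (Fin k) => (∑ s ∈ I, d s) % N = θr)) with hSdef
  have hmemS : ∀ E ∈ Sfin, E % N = θr := by
    intro E hE
    obtain ⟨I, hIf, hIE⟩ := Finset.mem_image.mp hE
    rw [← hIE]
    exact (Finset.mem_filter.mp hIf).2
  have hdiv_iff : ∀ E E' : ℕ, ((E : ℝ) / N = (E' : ℝ) / N) ↔ E = E' := by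
    intro E E'
    rw [div_eq_div_iff hNR hNR]
    constructor
    · intro h
      have h2 : (E : ℝ) = E' := mul_right_cancel₀ hNR h
      exact_mod_cast h2
    · intro h; rw [h]
  -- identify the set with a finite image
  have hTeq : { t : ℝ | ∃ I : Finset (Fin k),
      t = ∑ s ∈ I, (mm s : ℝ) / (n s : ℝ) ∧
      Int.fract (∑ s ∈ I, (mm s : ℝ) / (n s : ℝ)) = ((ρ : ℝ) / (d0 : ℝ) + (r : ℝ)) / (n0 : ℝ) }
      = ↑(Sfin.image (fun E : ℕ => (E : ℝ) / (N : ℝ))) := by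
    ext t
    simp only [Set.mem_setOf_eq, Finset.coe_image, Set.mem_image, Finset.mem_coe]
    constructor
    · rintro ⟨I, ht, hf⟩
      refine ⟨∑ s ∈ I, d s, ?_, ?_⟩
      · apply Finset.mem_image.mpr
        refine ⟨I, Finset.mem_filter.mpr ⟨Finset.mem_univ I, ?_⟩, rfl⟩
        rw [hsumI I, hfract, hαr] at hf
        exact_mod_cast (hdiv_iff _ _).mp hf
      · rw [ht, hsumI I]
    · rintro ⟨E, hE, rfl⟩
      obtain ⟨I, hIf, hIE⟩ := Finset.mem_image.mp hE
      refine ⟨I, by rw [hsumI I, hIE], ?_⟩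
      rw [hsumI I, hIE, hfract, hαr]
      congr 1
      have hmodE := (Finset.mem_filter.mp hIf).2
      rw [hIE] at hmodE
      exact_mod_cast hmodE
  have hinjdiv : Function.Injective (fun E : ℕ => (E : ℝ) / (N : ℝ)) := by
    intro E E' h
    exact (hdiv_iff E E').mp h
  -- the crucial cardinality bound
  have hcard : m ≤ Sfin.card := by
    by_contra hlt
    push_neg at hlt
    have hsupp : (P θr).support ⊆ Sfin := by
      intro j hj
      have hj' : (P θr).coeff j ≠ 0 := Polynomial.mem_support_iff.mp hj
      by_contra hjS
      apply hj'
      rw [hPdef, ppoly, Polynomial.finset_sum_coeff]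
      apply Finset.sum_eq_zero
      intro I hIf
      rw [Polynomial.coeff_C_mul, Polynomial.coeff_X_pow, if_neg, mul_zero]
      intro hIj
      apply hjS
      rw [hSdef]
      apply Finset.mem_image.mpr
      exact ⟨I, hIf, hIj.symm⟩
    have hzero : P θr = 0 := by
      apply few_terms_zero (m - 1) _ (claimO θr hθrN)
      calc (P θr).support.card ≤ Sfin.card := Finset.card_le_card hsupp
        _ ≤ m - 1 := by omega
    exact hnd (by rw [hzero]; exact dvd_zero _)
  constructor
  · rw [hTeq, Set.ncard_coe_finset, Finset.card_image_of_injective _ hinjdiv]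
    exact hcard
  · -- the floor part
    have hex : ∃ E ∈ Sfin, m - 1 ≤ E / N := by
      by_contra hno
      push_neg at hno
      have himsub : Sfin.image (fun E => E / N) ⊆ Finset.range (m - 1) := by
        intro v hv
        obtain ⟨E, hE, hEv⟩ := Finset.mem_image.mp hv
        exact Finset.mem_range.mpr (by rw [← hEv]; exact hno E hE)
      have hinj2 : Set.InjOn (fun E => E / N) Sfin := by
        intro E hE E' hE' h
        have h1 : E = N * (E / N) + θr := by rw [← hmemS E hE]; exact (Nat.div_add_mod E N).symm
        have h2 : E' = N * (E' / N) + θr := by rw [← hmemS E' hE']; exact (Nat.div_add_mod E' N).symm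
        have h' : E / N = E' / N := h
        rw [h'] at h1
        exact h1.trans h2.symm
      have := Finset.card_image_of_injOn hinj2
      have hle := Finset.card_le_card himsub
      rw [this] at hle
      rw [Finset.card_range] at hle
      omega
    obtain ⟨E, hES, hEdiv⟩ := hex
    obtain ⟨I, hIf, hIE⟩ := Finset.mem_image.mp hES
    refine ⟨I, ?_, ?_⟩
    · rw [hsumI I, hIE, hfloor E]
      omega
    · rw [hsumI I, hIE, hfract, hαr]
      congr 1
      have hmodE := (Finset.mem_filter.mp hIf).2
      rw [hIE] at hmodE
      exact_mod_cast hmodE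
end

section
/- Let n > 1 be an integer, and let m_1,...,m_{n−1} be integers each relatively prime to n. Then the set { ∑_{s∈I} m_s : I ⊆ {1,...,n−1} } contains a complete system of residues modulo n; that is, for every c ∈ ℤ/nℤ there exists I ⊆ {1,...,n−1} with ∑_{s∈I} m_s ≡ c (mod n). In particular, for any prime p and any c_1,...,c_{p−1} ∈ ℤ/pℤ \ {0}, there exists I ⊆ {1,...,p−1} with ∑_{s∈I} c_s = 1. -/
lemma stable_univ {n : ℕ} [NeZero n] (S : Finset (ZMod n)) (hS : S.Nonempty)
    (v : ZMod n) (hv : IsUnit v) (h : ∀ a ∈ S, a + v ∈ S) : S = Finset.univ := by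
  obtain ⟨a, ha⟩ := hS
  have hk : ∀ k : ℕ, a + k • v ∈ S := by
    intro k; induction k with
    | zero => simpa using ha
    | succ k ih =>
      have := h _ ih
      rwa [succ_nsmul, ← add_assoc]
  apply Finset.eq_univ_of_forall
  intro c
  have key : c = a + (((c - a) * v⁻¹).val) • v := by
    rw [nsmul_eq_mul, ZMod.natCast_val, ZMod.cast_id, mul_assoc,
      ZMod.inv_mul_of_unit v hv, mul_one]
    ring
  rw [key]; exact hk _

lemma key_cover (n : ℕ) (hn : 1 < n) (u : Fin (n - 1) → ZMod n) (hu : ∀ s, IsUnit (u s)) :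
    ∀ c : ZMod n, ∃ I : Finset (Fin (n - 1)), ∑ s ∈ I, u s = c := by
  haveI : NeZero n := ⟨by omega⟩
  set T : ℕ → Finset (ZMod n) := fun j =>
    ((Finset.univ.filter (fun i : Fin (n - 1) => (i : ℕ) < j)).powerset).image
      (fun I => ∑ s ∈ I, u s) with hT
  have hmem : ∀ j x, x ∈ T j ↔ ∃ I : Finset (Fin (n - 1)),
      (∀ i ∈ I, (i : ℕ) < j) ∧ ∑ s ∈ I, u s = x := by
    intro j x
    simp only [hT, Finset.mem_image, Finset.mem_powerset, Finset.subset_iff,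
      Finset.mem_filter, Finset.mem_univ, true_and]
  have h0 : ∀ j, (0 : ZMod n) ∈ T j := by
    intro j
    rw [hmem]
    exact ⟨∅, by simp, by simp⟩
  have hcard : ∀ j, j ≤ n - 1 → j + 1 ≤ (T j).card := by
    intro j
    induction j with
    | zero =>
      intro _
      exact Finset.card_pos.mpr ⟨0, h0 0⟩
    | succ j ih =>
      intro hj
      have hjn : j ≤ n - 1 := by omega
      have hTjcard := ih hjn
      set i₀ : Fin (n - 1) := ⟨j, by omega⟩ with hi₀
      by_cases hstab : ∀ a ∈ T j, a + u i₀ ∈ T j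
      · have huniv : T j = Finset.univ :=
          stable_univ (T j) ⟨0, h0 j⟩ (u i₀) (hu i₀) hstab
        have : T j ⊆ T (j+1) := by
          intro x hx
          rw [hmem] at hx ⊢
          obtain ⟨I, hI, hs⟩ := hx
          exact ⟨I, fun i hi => by have := hI i hi; omega, hs⟩
        have : T (j+1) = Finset.univ := Finset.eq_univ_of_forall
          (fun x => this (huniv ▸ Finset.mem_univ x))
        rw [this, Finset.card_univ, ZMod.card]
        omega
      · push_neg at hstab
        obtain ⟨a, haT, hnot⟩ := hstab
        have hsub : insert (a + u i₀) (T j) ⊆ T (j+1) := by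
          intro x hx
          rcases Finset.mem_insert.mp hx with h | h
          · rw [hmem] at haT ⊢
            obtain ⟨I, hI, hs⟩ := haT
            refine ⟨insert i₀ I, ?_, ?_⟩
            · intro i hi
              rcases Finset.mem_insert.mp hi with h' | h'
              · simp [h', hi₀]
              · have := hI i h'; omega
            · rw [Finset.sum_insert (fun hmm => by have := hI i₀ hmm; simp [hi₀] at this)]
              rw [hs, h]; ring
          · rw [hmem] at h ⊢
            obtain ⟨I, hI, hs⟩ := h
            exact ⟨I, fun i hi => by have := hI i hi; omega, hs⟩
        calc j + 1 + 1 ≤ (T j).card + 1 := by omega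
          _ = (insert (a + u i₀) (T j)).card := (Finset.card_insert_of_notMem hnot).symm
          _ ≤ (T (j+1)).card := Finset.card_le_card hsub
  intro c
  have := hcard (n - 1) le_rfl
  have huniv : T (n - 1) = Finset.univ := by
    apply Finset.eq_univ_of_card
    have h1 : (T (n-1)).card ≤ Fintype.card (ZMod n) := Finset.card_le_univ _
    rw [ZMod.card] at h1 ⊢
    omega
  have : c ∈ T (n - 1) := huniv ▸ Finset.mem_univ c
  rw [hmem] at this
  obtain ⟨I, _, hs⟩ := this
  exact ⟨I, hs⟩

/-- Let `n > 1` and let `m₁,…,m_{n-1}` be integers coprime to `n`.  Then the subset sums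
`∑_{s∈I} m_s` (`I ⊆ {1,…,n-1}`) contain a complete system of residues modulo `n`.
In particular, for any prime `p` and any nonzero `c₁,…,c_{p-1} ∈ ℤ/pℤ`, some subset sum
of the `c_s` equals `1`. -/
theorem subsetSums_complete_residues (n : ℕ) (hn : 1 < n)
    (m : Fin (n - 1) → ℤ) (hm : ∀ s, IsCoprime (m s) (n : ℤ)) :
    (∀ c : ZMod n, ∃ I : Finset (Fin (n - 1)), ∑ s ∈ I, (m s : ZMod n) = c) ∧
    (∀ p : ℕ, p.Prime → ∀ c : Fin (p - 1) → ZMod p, (∀ s, c s ≠ 0) →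
      ∃ I : Finset (Fin (p - 1)), ∑ s ∈ I, c s = 1) := by
  constructor
  · apply key_cover n hn
    intro s
    obtain ⟨a, b, hab⟩ := hm s
    have : (a : ZMod n) * (m s : ZMod n) = 1 := by
      have := congrArg (fun z : ℤ => (z : ZMod n)) hab
      push_cast at this
      simpa [ZMod.natCast_self] using this
    exact IsUnit.of_mul_eq_one _ (mul_comm (a : ZMod n) _ ▸ this)
  · intro p hp c hc
    haveI : Fact p.Prime := ⟨hp⟩
    exact key_cover p hp.one_lt c (fun s => isUnit_iff_ne_zero.mpr (hc s)) 1
end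

section
/- Let R be a ring with identity (one may take R commutative), and let f(x_1,...,x_k) be a polynomial over R. If J ⊆ {1,...,k} and |J| ≥ deg f, then ∑_{I ⊆ J} (−1)^{|J|−|I|} f([[1∈I]],...,[[k∈I]]) = c_J, where c_J is the coefficient of the monomial ∏_{j∈J} x_j in f(x_1,...,x_k). -/
open Finset

lemma pow_card_sum {α : Type*} [DecidableEq α] (R : Type*) [CommRing R]
    (A : Finset α) :
    (∑ T ∈ A.powerset, (-1 : R) ^ T.card) = if A = ∅ then 1 else 0 := by
  have h := Finset.sum_powerset_neg_one_pow_card (x := A)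
  have : ((∑ T ∈ A.powerset, (-1 : ℤ) ^ T.card : ℤ) : R)
      = ∑ T ∈ A.powerset, (-1 : R) ^ T.card := by push_cast; rfl
  rw [← this, h]
  split <;> simp

lemma neg_one_pow_sub {R : Type*} [CommRing R] {a b : ℕ} (h : b ≤ a) :
    (-1 : R) ^ (a - b) = (-1) ^ a * (-1) ^ b := by
  have : (-1 : R) ^ (a - b) * ((-1) ^ b * (-1) ^ b) = (-1) ^ a * (-1) ^ b := by
    rw [← mul_assoc, ← pow_add, Nat.sub_add_cancel h]
  simpa [← pow_add, ← two_mul, pow_mul] using this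

lemma sun_inner_sum {α : Type*} [DecidableEq α] (R : Type*) [CommRing R]
    (S J : Finset α) :
    ∑ I ∈ J.powerset, (-1 : R) ^ (J.card - I.card) * (if S ⊆ I then 1 else 0)
      = if S = J then 1 else 0 := by
  classical
  by_cases hSJ : S ⊆ J
  · -- reindex over subsets of J \ S
    simp_rw [mul_ite, mul_one, mul_zero]
    rw [← Finset.sum_filter]
    have hfilt : (J.powerset.filter (fun I => S ⊆ I))
        = (J \ S).powerset.image (fun T => S ∪ T) := by
      ext I
      simp only [mem_filter, mem_powerset, mem_image]
      constructor
      · rintro ⟨hIJ, hSI⟩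
        exact ⟨I \ S, by simp [Finset.sdiff_subset_sdiff hIJ (le_refl S)],
          by rw [Finset.union_sdiff_of_subset hSI]⟩
      · rintro ⟨T, hT, rfl⟩
        exact ⟨Finset.union_subset hSJ (hT.trans (Finset.sdiff_subset)),
          Finset.subset_union_left⟩
    rw [hfilt, Finset.sum_image (by
      intro a ha b hb hab
      rw [Finset.mem_coe, mem_powerset] at ha hb
      have ha' : Disjoint S a := Finset.disjoint_of_subset_right ha Finset.disjoint_sdiff
      have hb' : Disjoint S b := Finset.disjoint_of_subset_right hb Finset.disjoint_sdiff
      have : (S ∪ a) \ S = (S ∪ b) \ S := by rw [show S ∪ a = S ∪ b from hab]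
      simpa [Finset.union_sdiff_cancel_left ha', Finset.union_sdiff_cancel_left hb'] using this)]
    have key : ∀ T ∈ (J \ S).powerset,
        (-1 : R) ^ (J.card - (S ∪ T).card) = (-1) ^ ((J \ S).card - T.card) := by
      intro T hT
      rw [mem_powerset] at hT
      have hd : Disjoint S T :=
        Finset.disjoint_of_subset_right hT Finset.disjoint_sdiff
      have hcard : (S ∪ T).card = S.card + T.card := Finset.card_union_of_disjoint hd
      have hJcard : J.card = S.card + (J \ S).card := by
        rw [Finset.card_sdiff_of_subset hSJ]
        have := Finset.card_le_card hSJ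
        omega
      have hTle : T.card ≤ (J \ S).card := Finset.card_le_card hT
      have hSle : S.card ≤ J.card := Finset.card_le_card hSJ
      congr 1
      omega
    rw [Finset.sum_congr rfl key]
    have hsplit : ∑ T ∈ (J \ S).powerset, (-1 : R) ^ ((J \ S).card - T.card)
        = (-1 : R) ^ (J \ S).card * ∑ T ∈ (J \ S).powerset, (-1 : R) ^ T.card := by
      rw [Finset.mul_sum]
      exact Finset.sum_congr rfl fun T hT =>
        neg_one_pow_sub (Finset.card_le_card (Finset.mem_powerset.mp hT))
    rw [hsplit, pow_card_sum]
    by_cases he : J \ S = ∅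
    · have h2 : S = J := Finset.Subset.antisymm hSJ (Finset.sdiff_eq_empty_iff_subset.mp he)
      simp [he, h2]
    · have h2 : S ≠ J := fun h => he (by simp [h])
      simp [he, h2]
  · have h1 : ∀ I ∈ J.powerset,
        (-1 : R) ^ (J.card - I.card) * (if S ⊆ I then 1 else 0) = 0 := by
      intro I hI
      rw [mem_powerset] at hI
      have : ¬ S ⊆ I := fun h => hSJ (h.trans hI)
      simp [this]
    rw [Finset.sum_congr rfl h1, Finset.sum_const_zero]
    have : S ≠ J := fun h => hSJ (h ▸ le_refl _)
    simp [this]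

/-- **Theorem 3.1** (Sun): Let `R` be a (commutative) ring with identity and let
`f(x₁,…,x_k)` be a polynomial over `R`.  If `J ⊆ {1,…,k}` and `|J| ≥ deg f`, then
`∑_{I ⊆ J} (-1)^{|J|-|I|} f([[1∈I]],…,[[k∈I]])` equals the coefficient of the monomial
`∏_{j∈J} x_j` in `f`. -/
theorem sun_theorem3_1 (R : Type*) [CommRing R] (k : ℕ)
    (f : MvPolynomial (Fin k) R) (J : Finset (Fin k)) (hJ : f.totalDegree ≤ J.card) :
    ∑ I ∈ J.powerset, (-1 : R) ^ (J.card - I.card) *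
        MvPolynomial.eval (fun s => if s ∈ I then (1 : R) else 0) f
      = MvPolynomial.coeff (∑ j ∈ J, Finsupp.single j 1) f := by
  classical
  set m0 : Fin k →₀ ℕ := ∑ j ∈ J, Finsupp.single j 1 with hm0
  -- evaluate on indicators
  have heval : ∀ I : Finset (Fin k),
      MvPolynomial.eval (fun s => if s ∈ I then (1 : R) else 0) f
        = ∑ d ∈ f.support, f.coeff d * (if d.support ⊆ I then 1 else 0) := by
    intro I
    rw [MvPolynomial.eval_eq]
    refine Finset.sum_congr rfl fun d _ => ?_
    congr 1
    by_cases h : d.support ⊆ I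
    · rw [if_pos h]
      exact Finset.prod_eq_one fun i hi => by rw [if_pos (h hi), one_pow]
    · rw [if_neg h]
      obtain ⟨i, hi, hiI⟩ := Finset.not_subset.mp h
      refine Finset.prod_eq_zero hi ?_
      rw [if_neg hiI, zero_pow (Finsupp.mem_support_iff.mp hi)]
  calc ∑ I ∈ J.powerset, (-1 : R) ^ (J.card - I.card) *
        MvPolynomial.eval (fun s => if s ∈ I then (1 : R) else 0) f
      = ∑ d ∈ f.support, f.coeff d *
          ∑ I ∈ J.powerset, (-1 : R) ^ (J.card - I.card) *
            (if d.support ⊆ I then 1 else 0) := by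
        simp_rw [heval, Finset.mul_sum]
        rw [Finset.sum_comm]
        refine Finset.sum_congr rfl fun d _ => Finset.sum_congr rfl fun I _ => by ring
    _ = ∑ d ∈ f.support, f.coeff d * (if d.support = J then 1 else 0) := by
        refine Finset.sum_congr rfl fun d _ => by rw [sun_inner_sum]
    _ = MvPolynomial.coeff m0 f := by
        -- every d in support with d.support = J equals m0
        have hm0supp : ∀ j, m0 j = if j ∈ J then 1 else 0 := by
          intro j
          rw [hm0, Finsupp.finset_sum_apply]
          simp [Finsupp.single_apply, Finset.sum_ite_eq']
        have hkey : ∀ d ∈ f.support, d.support = J → d = m0 := by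
          intro d hd hdJ
          have hdeg : (∑ i ∈ d.support, d i) ≤ J.card := by
            exact le_trans (MvPolynomial.le_totalDegree hd) hJ
          rw [hdJ] at hdeg
          have hone : ∀ i ∈ J, d i = 1 := by
            by_contra hc
            push_neg at hc
            obtain ⟨i, hi, hne⟩ := hc
            have h1 : 1 ≤ d i := by
              have : i ∈ d.support := hdJ ▸ hi
              exact Nat.one_le_iff_ne_zero.mpr (Finsupp.mem_support_iff.mp this)
            have h2 : 2 ≤ d i := by omega
            have : J.card = ∑ _i ∈ J, 1 := by simp
            have hlt : ∑ i ∈ J, 1 < ∑ i ∈ J, d i := by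
              refine Finset.sum_lt_sum (fun j hj => ?_) ⟨i, hi, by omega⟩
              have : j ∈ d.support := hdJ ▸ hj
              exact Nat.one_le_iff_ne_zero.mpr (Finsupp.mem_support_iff.mp this)
            omega
          ext j
          rw [hm0supp j]
          by_cases hj : j ∈ J
          · rw [if_pos hj]; exact hone j hj
          · rw [if_neg hj]
            by_contra h
            exact hj (hdJ ▸ Finsupp.mem_support_iff.mpr h)
        by_cases hm : m0 ∈ f.support
        · rw [Finset.sum_eq_single m0]
          · have : m0.support = J := by
              ext j; rw [Finsupp.mem_support_iff, hm0supp j]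
              by_cases hj : j ∈ J <;> simp [hj]
            simp [this]
          · intro d hd hne
            by_cases h : d.support = J
            · exact absurd (hkey d hd h) hne
            · simp [h]
          · intro h; exact absurd hm h
        · rw [Finset.sum_eq_zero, ← MvPolynomial.notMem_support_iff.mp hm]
          intro d hd
          by_cases h : d.support = J
          · exact absurd (hkey d hd h ▸ hd) hm
          · simp [h]
end

section
/- (Escott's identity) Let R be a ring with identity. For any c_1,...,c_k ∈ R and every integer n with 0 ≤ n ≤ k−1, one has ∑_{I ⊆ {1,...,k}} (−1)^{|I|} (∑_{s∈I} c_s)^n = 0, where the empty sum is 0 and 0^0 = 1. -/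
open Finset

/-- The `n`-th power of a sum over `I` expands as a sum over words with letters in `I`. -/
private lemma pow_sum_eq_sum_words {R : Type*} [Ring R] {k : ℕ} (c : Fin k → R)
    (I : Finset (Fin k)) :
    ∀ n : ℕ, (∑ s ∈ I, c s) ^ n =
      ∑ f ∈ Fintype.piFinset (fun _ : Fin n => I), ((List.ofFn f).map c).prod := by
  intro n
  induction n with
  | zero =>
    simp [Finset.sum_const, Fintype.card_piFinset]
  | succ n ih =>
    rw [pow_succ, ih]
    have key : ∀ f : Fin n → Fin k, ∀ s : Fin k,
        ((List.ofFn (Fin.snoc f s : Fin (n+1) → Fin k)).map c).prod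
          = ((List.ofFn f).map c).prod * c s := by
      intro f s
      have h1 : List.ofFn (Fin.snoc f s : Fin (n+1) → Fin k)
          = (List.ofFn f).concat s := by
        rw [List.ofFn_succ']
        simp [Fin.snoc_castSucc, Fin.snoc_last]
      rw [h1, List.concat_eq_append, List.map_append, List.prod_append]
      simp
    calc (∑ f ∈ Fintype.piFinset (fun _ : Fin n => I), ((List.ofFn f).map c).prod)
            * (∑ s ∈ I, c s)
        = ∑ f ∈ Fintype.piFinset (fun _ : Fin n => I), ∑ s ∈ I,
            ((List.ofFn (Fin.snoc f s : Fin (n+1) → Fin k)).map c).prod := by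
          rw [Finset.sum_mul]
          refine Finset.sum_congr rfl fun f _ => ?_
          rw [Finset.mul_sum]
          exact Finset.sum_congr rfl fun s _ => (key f s).symm
      _ = ∑ p ∈ (Fintype.piFinset (fun _ : Fin n => I)) ×ˢ I,
            ((List.ofFn (Fin.snoc p.1 p.2 : Fin (n+1) → Fin k)).map c).prod := by
          rw [Finset.sum_product]
      _ = ∑ f ∈ Fintype.piFinset (fun _ : Fin (n+1) => I), ((List.ofFn f).map c).prod := by
          refine Finset.sum_nbij' (fun p => Fin.snoc p.1 p.2) (fun f => (Fin.init f, f (Fin.last n)))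
            ?_ ?_ ?_ ?_ ?_
          · rintro ⟨f, s⟩ hp
            simp only [Finset.mem_product, Fintype.mem_piFinset] at hp ⊢
            intro a
            refine Fin.lastCases ?_ ?_ a
            · simpa using hp.2
            · intro i; simpa [Fin.snoc_castSucc] using hp.1 i
          · intro f hf
            simp only [Fintype.mem_piFinset] at hf
            simp only [Finset.mem_product, Fintype.mem_piFinset]
            exact ⟨fun i => hf _, hf _⟩
          · rintro ⟨f, s⟩ _
            simp [Fin.init_snoc, Fin.snoc_last]
          · intro f _
            simp [Fin.snoc_init_self]
          · intros; rfl

private lemma alt_sum_supersets {R : Type*} [Ring R] {α : Type*} [Fintype α] [DecidableEq α]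
    (S : Finset α) (hS : S ≠ Finset.univ) :
    ∑ I ∈ (Finset.univ : Finset α).powerset.filter (fun I => S ⊆ I), (-1 : R) ^ I.card = 0 := by
  have hne : (Finset.univ \ S).Nonempty := by
    rw [Finset.sdiff_nonempty]
    intro h
    exact hS (Finset.eq_univ_iff_forall.2 fun a => h (Finset.mem_univ a))
  have hcast : ∑ J ∈ (Finset.univ \ S).powerset, (-1 : R) ^ J.card = 0 := by
    have h := Finset.sum_powerset_neg_one_pow_card_of_nonempty (x := Finset.univ \ S) hne
    calc ∑ J ∈ (Finset.univ \ S).powerset, (-1 : R) ^ J.card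
        = ((∑ J ∈ (Finset.univ \ S).powerset, (-1 : ℤ) ^ J.card : ℤ) : R) := by push_cast; rfl
      _ = 0 := by rw [h]; simp
  calc ∑ I ∈ (Finset.univ : Finset α).powerset.filter (fun I => S ⊆ I), (-1 : R) ^ I.card
      = ∑ J ∈ (Finset.univ \ S).powerset, (-1 : R) ^ (J ∪ S).card := by
        refine Finset.sum_nbij' (fun I => I \ S) (fun J => J ∪ S) ?_ ?_ ?_ ?_ ?_
        · intro I hI
          simp only [Finset.mem_filter, Finset.mem_powerset] at hI
          rw [Finset.mem_powerset]
          exact Finset.sdiff_subset_sdiff hI.1 le_rfl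
        · intro J hJ
          rw [Finset.mem_powerset] at hJ
          simp only [Finset.mem_filter, Finset.mem_powerset]
          exact ⟨Finset.subset_univ _, Finset.subset_union_right⟩
        · intro I hI
          simp only [Finset.mem_filter, Finset.mem_powerset] at hI
          exact Finset.sdiff_union_of_subset hI.2
        · intro J hJ
          rw [Finset.mem_powerset] at hJ
          have : Disjoint J S := Finset.disjoint_of_subset_left hJ Finset.sdiff_disjoint
          exact Finset.union_sdiff_cancel_right this
        · intro I hI
          simp only [Finset.mem_filter, Finset.mem_powerset] at hI
          rw [Finset.sdiff_union_of_subset hI.2]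
    _ = 0 := by
        have : ∀ J ∈ (Finset.univ \ S).powerset, (-1 : R) ^ (J ∪ S).card
            = (-1 : R) ^ S.card * (-1 : R) ^ J.card := by
          intro J hJ
          rw [Finset.mem_powerset] at hJ
          have hd : Disjoint J S := Finset.disjoint_of_subset_left hJ Finset.sdiff_disjoint
          rw [Finset.card_union_of_disjoint hd, add_comm, pow_add]
        rw [Finset.sum_congr rfl this, ← Finset.mul_sum, hcast, mul_zero]

/-- **Escott's identity** (Corollary 3.1): Let `R` be a ring with identity.  For any
`c₁,…,c_k ∈ R` and every `n ∈ {0,…,k-1}`,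
`∑_{I ⊆ {1,…,k}} (-1)^{|I|} (∑_{s∈I} c_s)^n = 0`. -/
theorem escott_identity (R : Type*) [Ring R] (k : ℕ) (c : Fin k → R)
    (n : ℕ) (hn : n < k) :
    ∑ I ∈ (Finset.univ : Finset (Fin k)).powerset,
      (-1 : R) ^ I.card * (∑ s ∈ I, c s) ^ n = 0 := by
  classical
  have step1 : ∑ I ∈ (Finset.univ : Finset (Fin k)).powerset,
      (-1 : R) ^ I.card * (∑ s ∈ I, c s) ^ n
      = ∑ I ∈ (Finset.univ : Finset (Fin k)).powerset,
        ∑ f ∈ Fintype.piFinset (fun _ : Fin n => I),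
          (-1 : R) ^ I.card * ((List.ofFn f).map c).prod := by
    refine Finset.sum_congr rfl fun I _ => ?_
    rw [pow_sum_eq_sum_words, Finset.mul_sum]
  rw [step1]
  rw [Finset.sum_comm' (t' := Fintype.piFinset (fun _ : Fin n => (Finset.univ : Finset (Fin k))))
    (s' := fun f => (Finset.univ : Finset (Fin k)).powerset.filter
      (fun I => Finset.image f Finset.univ ⊆ I))
    (by
      intro I f
      simp only [Finset.mem_powerset, Fintype.mem_piFinset, Finset.mem_filter,
        Finset.mem_univ, Finset.image_subset_iff, Finset.subset_univ, true_and,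
        forall_true_left]
      tauto)]
  refine Finset.sum_eq_zero fun f _ => ?_
  have him : Finset.image f Finset.univ ≠ (Finset.univ : Finset (Fin k)) := by
    intro h
    have h1 : (Finset.image f Finset.univ).card ≤ n := by
      calc (Finset.image f Finset.univ).card ≤ (Finset.univ : Finset (Fin n)).card :=
        Finset.card_image_le
      _ = n := by simp
    rw [h] at h1
    simp only [Finset.card_univ, Fintype.card_fin] at h1
    omega
  calc ∑ I ∈ (Finset.univ : Finset (Fin k)).powerset.filter
          (fun I => Finset.image f Finset.univ ⊆ I),
        (-1 : R) ^ I.card * ((List.ofFn f).map c).prod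
      = (∑ I ∈ (Finset.univ : Finset (Fin k)).powerset.filter
          (fun I => Finset.image f Finset.univ ⊆ I), (-1 : R) ^ I.card)
          * ((List.ofFn f).map c).prod := by rw [Finset.sum_mul]
    _ = 0 := by rw [alt_sum_supersets _ him, zero_mul]
end

section
/- Let p be a prime, h a nonnegative integer, and a an integer. Then the generalized binomial coefficient C(a−1, p^h−1) = (a−1)(a−2)⋯(a−p^h+1)/(p^h−1)! satisfies C(a−1, p^h−1) ≡ [[p^h ∣ a]] (mod p), i.e. it is congruent to 1 modulo p if p^h divides a, and congruent to 0 modulo p otherwise. -/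
open Finset

private lemma choose_shift_step (p : ℕ) (hp : p.Prime) (h : ℕ) (n : ℕ) (hn : n < p ^ h)
    (x : ℤ) :
    ((Ring.choose (x + (p ^ h : ℕ)) n : ℤ) : ZMod p) = ((Ring.choose x n : ℤ) : ZMod p) := by
  have hcomm : Commute x ((p ^ h : ℕ) : ℤ) := Commute.all _ _
  rw [Ring.add_choose_eq n hcomm, Int.cast_sum]
  rw [Finset.sum_eq_single (n, 0)]
  · simp [Ring.choose_natCast]
  · intro ij hij hne
    have hij' : ij.1 + ij.2 = n := Finset.HasAntidiagonal.mem_antidiagonal.mp hij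
    have h2 : ij.2 ≠ 0 := by
      intro h0
      apply hne
      have : ij.1 = n := by omega
      exact Prod.ext this h0
    have h2' : ij.2 ≠ p ^ h := by omega
    have hdvd : p ∣ (p ^ h).choose ij.2 := Nat.Prime.dvd_choose_pow hp h2 h2'
    rw [Ring.choose_natCast]
    push_cast
    rw [(ZMod.natCast_eq_zero_iff _ p).mpr hdvd]
    ring
  · intro hnot
    exact absurd (Finset.HasAntidiagonal.mem_antidiagonal.mpr (by omega)) hnot

private lemma choose_shift (p : ℕ) (hp : p.Prime) (h : ℕ) (n : ℕ) (hn : n < p ^ h)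
    (x : ℤ) (m : ℤ) :
    ((Ring.choose (x + m * (p ^ h : ℕ)) n : ℤ) : ZMod p) = ((Ring.choose x n : ℤ) : ZMod p) := by
  induction m using Int.induction_on with
  | zero => simp
  | succ k ih =>
      have heq : x + ((k : ℤ) + 1) * (p ^ h : ℕ) = (x + k * (p ^ h : ℕ)) + (p ^ h : ℕ) := by ring
      rw [heq, choose_shift_step p hp h n hn, ih]
  | pred k ih =>
      have e := choose_shift_step p hp h n hn (x + (-(k : ℤ) - 1) * (p ^ h : ℕ))
      have heq : x + (-(k : ℤ) - 1) * (p ^ h : ℕ) + (p ^ h : ℕ) = x + (-(k : ℤ)) * (p ^ h : ℕ) := by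
        ring
      rw [heq] at e
      exact e.symm.trans ih

private lemma choose_neg_one (n : ℕ) : Ring.choose (-1 : ℤ) n = (-1) ^ n := by
  have : Ring.choose (-1 : ℤ) n = Ring.multichoose ((-1 : ℤ) - n + 1) n := rfl
  rw [this, show (-1 : ℤ) - n + 1 = -(n : ℤ) by ring, Ring.multichoose_neg_self]

/-- **Lemma 3.1** (Sun [S09]): Let `p` be a prime, `h ∈ ℕ` and `a ∈ ℤ`.  Then the
generalized binomial coefficient `C(a-1, p^h-1)` is congruent to `1` modulo `p` if
`p^h ∣ a`, and to `0` modulo `p` otherwise. -/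
theorem sun_lemma3_1 (p : ℕ) (hp : p.Prime) (h : ℕ) (a : ℤ) :
    Ring.choose (a - 1) (p ^ h - 1) ≡ (if (p ^ h : ℤ) ∣ a then 1 else 0) [ZMOD (p : ℤ)] := by
  rw [show ((p : ℤ)) = ((p : ℕ) : ℤ) from rfl, ← ZMod.intCast_eq_intCast_iff]
  have hp2 : 2 ≤ p := hp.two_le
  rcases Nat.eq_zero_or_pos h with hh | hh
  · subst hh
    simp [Ring.choose_zero_right]
  -- now h ≥ 1, so p ^ h ≥ 2
  have hph : 2 ≤ p ^ h := by
    calc 2 = 2 ^ 1 := rfl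
    _ ≤ p ^ 1 := Nat.pow_le_pow_left hp2 1
    _ ≤ p ^ h := Nat.pow_le_pow_right (by omega) hh
  set n : ℕ := p ^ h - 1 with hn
  have hnlt : n < p ^ h := by omega
  set q : ℤ := ((p ^ h : ℕ) : ℤ) with hq
  have hqcast : (p : ℤ) ^ h = q := by rw [hq]; push_cast; ring
  have hq0 : 0 < q := by rw [hq]; positivity
  set r : ℤ := a % q with hr
  have hr0 : 0 ≤ r := Int.emod_nonneg a (by omega)
  have hrlt : r < q := Int.emod_lt_of_pos a hq0
  have hshift : ((Ring.choose (a - 1) n : ℤ) : ZMod p) = ((Ring.choose (r - 1) n : ℤ) : ZMod p) := by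
    have heq : a - 1 = (r - 1) + (a / q) * ((p ^ h : ℕ) : ℤ) := by
      rw [← hq, hr, Int.emod_def]; ring
    rw [heq, choose_shift p hp h n hnlt]
  have hdvd_iff : (p : ℤ) ^ h ∣ a ↔ r = 0 := by
    rw [hqcast, hr, Int.dvd_iff_emod_eq_zero]
  rw [hshift]
  by_cases hcase : r = 0
  · rw [if_pos (hdvd_iff.mpr hcase), hcase]
    rw [show (0 : ℤ) - 1 = -1 by ring, choose_neg_one]
    rcases hp.eq_two_or_odd' with hp2' | hpodd
    · subst hp2'
      push_cast
      rcases Nat.even_or_odd n with he | ho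
      · rw [he.neg_one_pow]
      · rw [ho.neg_one_pow]
        decide
    · have hodd : Odd (p ^ h) := hpodd.pow
      have heven : Even n := by
        rcases hodd with ⟨k, hk⟩
        exact ⟨k, by omega⟩
      rw [heven.neg_one_pow]
  · rw [if_neg (fun hd => hcase (hdvd_iff.mp hd))]
    have h1 : 1 ≤ r := by omega
    have heq : r - 1 = ((r - 1).toNat : ℤ) := by omega
    rw [heq, Ring.choose_natCast]
    have hlt : (r - 1).toNat < n := by omega
    rw [Nat.choose_eq_zero_of_lt hlt]
    norm_num
end
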